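/- arXiv:1402.5305 — 9 statements merged into one kernel-verified Lean document; each statement's English description precedes it below -/
import Mathlib

section
/- Suppose that |supp(ρᵢ(t))| = |supp(ρⱼ(t))| for all t ∈ T and all 1 ≤ i, j ≤ r. Then for every natural number k, the number of ordered pairs (s,t) ∈ T × T with d(α(s,I), α(t,I)) = k equals the number of ordered pairs (s,t) ∈ T × T with d(β(s), β(t)) = k, where β(t) : {1,…,r} × Q → Q is the repetition codeword (i,x) ↦ ρ₁(t)(x). Consequently, the twisted permutation code C(T,I) has the same inner distance distribution, and in particular the same minimum distance, as the repetition code Rep_r(C(T,ρ₁)). -/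
lemma dist_aux {T Q : Type*} [Group T] [Fintype Q] [DecidableEq Q]
    {r : ℕ} (ρ : Fin r → (T →* Equiv.Perm Q)) (s t : T) :
    hammingDist (fun q : Fin r × Q => ρ q.1 s q.2) (fun q : Fin r × Q => ρ q.1 t q.2)
      = ∑ i : Fin r, ((ρ i) (s⁻¹ * t)).support.card := by
  classical
  rw [hammingDist]
  rw [show (Finset.univ.filter fun q : Fin r × Q => ρ q.1 s q.2 ≠ ρ q.1 t q.2).card
      = Fintype.card {q : Fin r × Q // ρ q.1 s q.2 ≠ ρ q.1 t q.2} from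
    (Fintype.card_subtype _).symm]
  have e : {q : Fin r × Q // ρ q.1 s q.2 ≠ ρ q.1 t q.2} ≃
      Σ i : Fin r, {x : Q // ρ i s x ≠ ρ i t x} :=
    Equiv.subtypeProdEquivSigmaSubtype (fun (i : Fin r) (x : Q) => ρ i s x ≠ ρ i t x)
  rw [Fintype.card_congr e, Fintype.card_sigma]
  refine Finset.sum_congr rfl fun i _ => ?_
  rw [Fintype.card_subtype]
  congr 1
  ext x
  simp only [Finset.mem_filter, Finset.mem_univ, true_and, Equiv.Perm.mem_support,
    map_mul, map_inv]
  constructor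
  · intro h hx
    exact h (by have := congrArg (ρ i s) hx; simpa using this.symm)
  · intro h hx
    exact h (by simp [← hx])


/-- If `|supp(ρᵢ t)| = |supp(ρⱼ t)|` for all `t ∈ T` and all `i, j`, then for
every `k` the number of ordered pairs of group elements whose twisted codewords are at
Hamming distance `k` equals the number of ordered pairs whose `r`-fold repetition codewords
(using `ρ₁`) are at Hamming distance `k`; so `C(T,I)` has the same inner distance
distribution (hence the same minimum distance) as `Rep_r(C(T,ρ₁))`. -/
theorem twisted_stmt4 {T Q : Type*} [Group T] [Fintype T] [Fintype Q] [DecidableEq Q]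
    {r : ℕ} (hr : 0 < r) (I : Fin r → (T →* Equiv.Perm Q))
    (hsupp : ∀ t : T, ∀ i j : Fin r, ((I i) t).support.card = ((I j) t).support.card) :
    ∀ k : ℕ,
      Nat.card {p : T × T |
          hammingDist (fun q : Fin r × Q => I q.1 p.1 q.2)
            (fun q : Fin r × Q => I q.1 p.2 q.2) = k}
        = Nat.card {p : T × T |
            hammingDist (fun q : Fin r × Q => I ⟨0, hr⟩ p.1 q.2)
              (fun q : Fin r × Q => I ⟨0, hr⟩ p.2 q.2) = k} := by
  intro k
  have key : ∀ p : T × T,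
      hammingDist (fun q : Fin r × Q => I q.1 p.1 q.2) (fun q : Fin r × Q => I q.1 p.2 q.2)
        = hammingDist (fun q : Fin r × Q => I ⟨0, hr⟩ p.1 q.2)
            (fun q : Fin r × Q => I ⟨0, hr⟩ p.2 q.2) := by
    intro p
    rw [dist_aux I p.1 p.2, dist_aux (fun _ : Fin r => I ⟨0, hr⟩) p.1 p.2]
    exact Finset.sum_congr rfl fun i _ => hsupp _ i ⟨0, hr⟩
  have hset : {p : T × T |
      hammingDist (fun q : Fin r × Q => I q.1 p.1 q.2)
        (fun q : Fin r × Q => I q.1 p.2 q.2) = k}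
      = {p : T × T |
          hammingDist (fun q : Fin r × Q => I ⟨0, hr⟩ p.1 q.2)
            (fun q : Fin r × Q => I ⟨0, hr⟩ p.2 q.2) = k} :=
    Set.ext fun p => by rw [Set.mem_setOf_eq, Set.mem_setOf_eq, key p]
  rw [hset]
end

section
/- Let φ be an automorphism of the symmetric group S₆ on six points that is not inner, i.e. there is no g ∈ S₆ with φ(t) = g⁻¹ t g for all t. Then min over all t ∈ S₆ with t ≠ 1 of ( |supp(t)| + |supp(φ(t))| ) equals 8, whereas min over all t ≠ 1 of 2·|supp(t)| equals 4. Hence the twisted permutation code C(S₆,(id,φ)) has minimum distance 8, strictly greater than the minimum distance 4 of the 2-fold repetition permutation code of S₆. -/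
open Equiv Equiv.Perm

set_option maxRecDepth 100000
set_option maxHeartbeats 4000000

private lemma decD : ∀ y : Equiv.Perm (Fin 6), (y^2).support.card ≠ 2 := by decide
private lemma support_card_of_pow_prime (p : ℕ) (hp : p.Prime) (y : Equiv.Perm (Fin 6))
    (hy : y^p = 1) : y.support.card = p * Multiset.card y.cycleType := by
  have hord : orderOf y ∣ p := orderOf_dvd_of_pow_eq_one hy
  have hall : ∀ c ∈ y.cycleType, c = p := by
    intro c hc
    have hdvd : c ∣ orderOf y := by
      rw [← Equiv.Perm.lcm_cycleType]
      exact Multiset.dvd_lcm hc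
    have h2 := Equiv.Perm.two_le_of_mem_cycleType hc
    rcases hp.eq_one_or_self_of_dvd c (hdvd.trans hord) with h | h
    · omega
    · exact h
  have hrep : y.cycleType = Multiset.replicate (Multiset.card y.cycleType) p :=
    Multiset.eq_replicate.mpr ⟨rfl, hall⟩
  calc y.support.card = y.cycleType.sum := (Equiv.Perm.sum_cycleType y).symm
  _ = p * Multiset.card y.cycleType := by
      rw [hrep, Multiset.sum_replicate, Multiset.card_replicate, smul_eq_mul, mul_comm]

private lemma card_le_six (y : Equiv.Perm (Fin 6)) : y.support.card ≤ 6 := by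
  have := Finset.card_le_univ y.support
  simpa using this

private lemma decE2 : ∀ y : Equiv.Perm (Fin 6), y^2 = 1 →
    y = 1 ∨ y.support.card = 2 ∨ y.support.card = 4 ∨ y.support.card = 6 := by
  intro y hy
  by_cases h1 : y = 1
  · exact Or.inl h1
  right
  have hc := support_card_of_pow_prime 2 Nat.prime_two y hy
  have h2 := Equiv.Perm.one_lt_card_support_of_ne_one h1
  have h6 := card_le_six y
  omega

private lemma decE3 : ∀ y : Equiv.Perm (Fin 6), y^3 = 1 →
    y = 1 ∨ y.support.card = 3 ∨ y.support.card = 6 := by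
  intro y hy
  by_cases h1 : y = 1
  · exact Or.inl h1
  right
  have hc := support_card_of_pow_prime 3 Nat.prime_three y hy
  have h2 := Equiv.Perm.one_lt_card_support_of_ne_one h1
  have h6 := card_le_six y
  omega

private lemma decC3 : ∀ y : Equiv.Perm (Fin 6), y.support.card = 3 → y^3 = 1 := by
  intro y h3
  have hsum : y.cycleType.sum = 3 := by rw [Equiv.Perm.sum_cycleType, h3]
  have h2le : ∀ c ∈ y.cycleType, 2 ≤ c := fun c hc =>
    Equiv.Perm.two_le_of_mem_cycleType hc
  have hcard : Multiset.card y.cycleType • 2 ≤ 3 := by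
    rw [← hsum]
    exact Multiset.card_nsmul_le_sum h2le
  rw [smul_eq_mul] at hcard
  have hne : y ≠ 1 := by
    intro h
    rw [h] at h3
    simp at h3
  have hpos : y.cycleType ≠ 0 := fun h => hne (Equiv.Perm.cycleType_eq_zero.mp h)
  have hc1 : Multiset.card y.cycleType = 1 := by
    have := Multiset.card_pos.mpr hpos
    omega
  obtain ⟨cc, hcc⟩ := Multiset.card_eq_one.mp hc1
  have hc3 : cc = 3 := by
    have h' := hsum
    rw [hcc] at h'
    simpa using h'
  have hdvd : orderOf y ∣ 3 := by
    rw [← Equiv.Perm.lcm_cycleType]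
    apply Multiset.lcm_dvd.mpr
    intro b hb
    rw [hcc, Multiset.mem_singleton] at hb
    rw [hb, hc3]
  exact orderOf_dvd_iff_pow_eq_one.mp hdvd

private lemma decR : ∀ p x y : Fin 6, (swap p x * swap p y * swap x y)^2 = 1 := by decide

private lemma ncomm_of_ne {x y : Equiv.Perm (Fin 6)} (h : x * y ≠ y * x) : ¬ Commute x y := h

private lemma swap_disjoint_commute {a b c d : Fin 6} (hac : a ≠ c) (had : a ≠ d)
    (hbc : b ≠ c) (hbd : b ≠ d) : Commute (swap a b) (swap c d) := by
  apply Equiv.Perm.Disjoint.commute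
  intro z
  by_cases hzc : z = c
  · left; subst hzc; exact swap_apply_of_ne_of_ne (Ne.symm hac) (Ne.symm hbc)
  by_cases hzd : z = d
  · left; subst hzd; exact swap_apply_of_ne_of_ne (Ne.symm had) (Ne.symm hbd)
  · right; exact swap_apply_of_ne_of_ne hzc hzd

private lemma pair_swaps {s1 s2 : Equiv.Perm (Fin 6)} (h1 : s1.IsSwap) (h2 : s2.IsSwap)
    (hnc : ¬ Commute s1 s2) :
    ∃ p x y : Fin 6, p ≠ x ∧ p ≠ y ∧ x ≠ y ∧ s1 = swap p x ∧ s2 = swap p y := by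
  obtain ⟨a, b, hab, rfl⟩ := h1
  obtain ⟨c, d, hcd, rfl⟩ := h2
  by_cases hac : a = c
  · refine ⟨a, b, d, hab, ?_, ?_, rfl, ?_⟩
    · rw [hac]; exact hcd
    · intro h; exact hnc (by rw [hac, h])
    · rw [hac]
  by_cases had : a = d
  · refine ⟨a, b, c, hab, hac, ?_, rfl, ?_⟩
    · intro h; exact hnc (by rw [h, had, swap_comm c d])
    · rw [had, swap_comm c d]
  by_cases hbc : b = c
  · refine ⟨b, a, d, Ne.symm hab, ?_, had, swap_comm a b, ?_⟩
    · rw [hbc]; exact hcd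
    · rw [hbc]
  by_cases hbd : b = d
  · refine ⟨b, a, c, Ne.symm hab, fun h => hbc (h.symm ▸ rfl) , hac, swap_comm a b, ?_⟩
    · rw [hbd, swap_comm c d]
  · exact absurd (swap_disjoint_commute hac had hbc hbd) hnc

private lemma trio_swaps {p x y : Fin 6} {s3 : Equiv.Perm (Fin 6)} (hxy : x ≠ y)
    (h3 : s3.IsSwap) (hnc1 : ¬ Commute (swap p x) s3) (hnc2 : ¬ Commute (swap p y) s3)
    (hsq : (swap p x * swap p y * s3)^2 ≠ 1) :
    ∃ z : Fin 6, p ≠ z ∧ s3 = swap p z := by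
  obtain ⟨c, d, hcd, rfl⟩ := h3
  by_cases hpc : p = c
  · refine ⟨d, ?_, ?_⟩
    · rw [hpc]; exact hcd
    · rw [hpc]
  by_cases hpd : p = d
  · refine ⟨c, ?_, ?_⟩
    · intro h; exact hcd (h.symm.trans hpd)
    · rw [hpd, swap_comm c d]
  have hx_mem : x = c ∨ x = d := by
    by_contra h
    push_neg at h
    exact hnc1 (swap_disjoint_commute hpc hpd h.1 h.2)
  have hy_mem : y = c ∨ y = d := by
    by_contra h
    push_neg at h
    exact hnc2 (swap_disjoint_commute hpc hpd h.1 h.2)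
  exfalso
  rcases hx_mem with h1 | h1 <;> rcases hy_mem with h2 | h2
  · exact hxy (h1.trans h2.symm)
  · have hcd' : swap c d = swap x y := by rw [← h1, ← h2]
    rw [hcd'] at hsq
    exact hsq (decR p x y)
  · have hcd' : swap c d = swap x y := by rw [← h1, ← h2]; exact swap_comm y x
    rw [hcd'] at hsq
    exact hsq (decR p x y)
  · exact hxy (h1.trans h2.symm)

private lemma swap_left_inj {p a b : Fin 6} (h : swap p a = swap p b) : a = b := by
  have h1 := Equiv.ext_iff.mp h p
  simpa using h1

private lemma sq_of_card4 (v : Equiv.Perm (Fin 6)) (hv2 : v^2 = 1) (hv4 : v.support.card = 4) :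
    ∃ ρ : Equiv.Perm (Fin 6), ρ^2 = v := by
  have hvv : ∀ z, v (v z) = z := by
    intro z
    have h := Equiv.ext_iff.mp hv2 z
    simpa [pow_succ, Equiv.Perm.mul_apply] using h
  obtain ⟨p, hp⟩ : v.support.Nonempty := Finset.card_pos.mp (by omega)
  have hq' : (v.support \ {p, v p}).Nonempty := by
    rw [Finset.sdiff_nonempty]
    intro hsub
    have h1 := Finset.card_le_card hsub
    have h2 : ({p, v p} : Finset (Fin 6)).card ≤ 2 :=
      (Finset.card_insert_le _ _).trans (by simp)
    omega
  obtain ⟨q, hq⟩ := hq'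
  rw [Finset.mem_sdiff, Finset.mem_insert, Finset.mem_singleton] at hq
  obtain ⟨hqs, hqne⟩ := hq
  push_neg at hqne
  obtain ⟨hqp, hqvp⟩ := hqne
  have hvp : v p ≠ p := mem_support.mp hp
  have hvq : v q ≠ q := mem_support.mp hqs
  have hpvq : p ≠ v q := by
    intro h
    apply hqvp
    rw [h] at hvp ⊢
    rw [hvv q]
  have hvpvq : v p ≠ v q := fun h => hqp (v.injective h).symm
  refine ⟨swap p (v q) * swap p (v p) * swap p q, ?_⟩
  have hsupp : ({p, q, v p, v q} : Finset (Fin 6)) = v.support := by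
    apply Finset.eq_of_subset_of_card_le
    · intro z hz
      simp only [Finset.mem_insert, Finset.mem_singleton] at hz
      rcases hz with rfl | rfl | rfl | rfl
      · exact hp
      · exact hqs
      · exact mem_support.mpr (by rw [hvv p]; exact Ne.symm hvp)
      · exact mem_support.mpr (by rw [hvv q]; exact Ne.symm hvq)
    · rw [hv4]
      rw [Finset.card_insert_of_notMem (by
            simp only [Finset.mem_insert, Finset.mem_singleton]
            push_neg
            exact ⟨hqp.symm, Ne.symm hvp, hpvq⟩),
          Finset.card_insert_of_notMem (by
            simp only [Finset.mem_insert, Finset.mem_singleton]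
            push_neg
            exact ⟨hqvp, Ne.symm hvq⟩),
          Finset.card_insert_of_notMem (by simpa using hvpvq),
          Finset.card_singleton]
  set ρ := swap p (v q) * swap p (v p) * swap p q with hρ
  have hρ_app : ∀ z, ρ z = swap p (v q) (swap p (v p) (swap p q z)) := by
    intro z
    rw [hρ, Equiv.Perm.mul_apply, Equiv.Perm.mul_apply]
  have e1 : ρ p = q := by
    rw [hρ_app, swap_apply_left, swap_apply_of_ne_of_ne hqp hqvp,
        swap_apply_of_ne_of_ne hqp (Ne.symm hvq)]
  have e2 : ρ q = v p := by
    rw [hρ_app, swap_apply_right, swap_apply_left,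
        swap_apply_of_ne_of_ne hvp hvpvq]
  have e3 : ρ (v p) = v q := by
    rw [hρ_app, swap_apply_of_ne_of_ne hvp (Ne.symm hqvp), swap_apply_right,
        swap_apply_left]
  have e4 : ρ (v q) = p := by
    rw [hρ_app, swap_apply_of_ne_of_ne (Ne.symm hpvq) hvq,
        swap_apply_of_ne_of_ne (Ne.symm hpvq) (Ne.symm hvpvq), swap_apply_right]
  ext z
  rw [pow_two, Equiv.Perm.mul_apply]
  by_cases hz1 : z = p
  · rw [hz1, e1, e2]
  by_cases hz2 : z = q
  · rw [hz2, e2, e3]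
  by_cases hz3 : z = v p
  · rw [hz3, e3, e4, hvv p]
  by_cases hz4 : z = v q
  · rw [hz4, e4, e1, hvv q]
  · have hzs : z ∉ v.support := by
      rw [← hsupp]
      simp only [Finset.mem_insert, Finset.mem_singleton]
      push_neg
      exact ⟨hz1, hz2, hz3, hz4⟩
    have hvz : v z = z := notMem_support.mp hzs
    have hρz : ρ z = z := by
      rw [hρ_app, swap_apply_of_ne_of_ne hz1 hz2, swap_apply_of_ne_of_ne hz1 hz3,
          swap_apply_of_ne_of_ne hz1 hz4]
    rw [hρz, hρz, hvz]

private lemma supp3_facts (t : Equiv.Perm (Fin 6)) (h3 : t.support.card = 3) :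
    ∃ x, t x ≠ x ∧ t (t x) ≠ x ∧ t x ≠ t (t x) ∧
      ({x, t x, t (t x)} : Finset (Fin 6)) = t.support := by
  have hc : t^3 = 1 := decC3 t h3
  have h3' : ∀ z, t (t (t z)) = z := by
    intro z
    have h := Equiv.ext_iff.mp hc z
    simpa [pow_succ, Equiv.Perm.mul_apply] using h
  obtain ⟨x, hx⟩ := Finset.card_pos.mp (show 0 < t.support.card by omega)
  have h1 : t x ≠ x := mem_support.mp hx
  have h2 : t (t x) ≠ x := by
    intro h
    apply h1
    have h' := congrArg t h
    rw [h3' x] at h'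
    exact h'.symm
  have h12 : t x ≠ t (t x) := fun h => h1 (t.injective h).symm
  refine ⟨x, h1, h2, h12, ?_⟩
  apply Finset.eq_of_subset_of_card_le
  · intro z hz
    simp only [Finset.mem_insert, Finset.mem_singleton] at hz
    rcases hz with rfl | rfl | rfl
    · exact hx
    · exact mem_support.mpr (fun h => h1 (t.injective h))
    · exact mem_support.mpr (by rw [h3' x]; exact fun h => h2 h.symm)
  · rw [h3]
    rw [Finset.card_insert_of_notMem (by
          simp only [Finset.mem_insert, Finset.mem_singleton]
          push_neg
          exact ⟨Ne.symm h1, Ne.symm h2⟩),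
        Finset.card_insert_of_notMem (by simpa using h12),
        Finset.card_singleton]

private lemma three_three (φ : Equiv.Perm (Fin 6) ≃* Equiv.Perm (Fin 6))
    (h6 : ∀ a b : Fin 6, a ≠ b → (φ (swap a b)).support.card = 6)
    (t : Equiv.Perm (Fin 6)) (ht3 : t.support.card = 3) (hu3 : (φ t).support.card = 3) :
    False := by
  obtain ⟨x, hx1, hx2, hx12, hsupp⟩ := supp3_facts t ht3
  set σ := swap x (t x) with hσdef
  set b := σ * t with hbdef
  have hb : b = swap (t x) (t (t x)) := by
    have hc : t^3 = 1 := decC3 t ht3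
    have h3' : ∀ z, t (t (t z)) = z := by
      intro z
      have h := Equiv.ext_iff.mp hc z
      simpa [pow_succ, Equiv.Perm.mul_apply] using h
    ext z
    rw [hbdef, Equiv.Perm.mul_apply, hσdef]
    by_cases hz1 : z = x
    · subst hz1
      rw [swap_apply_right, swap_apply_of_ne_of_ne (Ne.symm hx1) (Ne.symm hx2)]
    by_cases hz2 : z = t x
    · subst hz2
      rw [swap_apply_of_ne_of_ne hx2 (Ne.symm hx12), swap_apply_left]
    by_cases hz3 : z = t (t x)
    · subst hz3
      rw [h3' x, swap_apply_left, swap_apply_right]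
    · have hzs : z ∉ t.support := by
        rw [← hsupp]
        simp only [Finset.mem_insert, Finset.mem_singleton]
        push_neg
        exact ⟨hz1, hz2, hz3⟩
      have htz : t z = z := notMem_support.mp hzs
      rw [htz, swap_apply_of_ne_of_ne hz1 hz2, swap_apply_of_ne_of_ne hz2 hz3]
  have hts : σ * b = t := by
    rw [hbdef, ← mul_assoc, hσdef, swap_mul_self, one_mul]
  set A := φ σ with hAdef
  set u := φ t with hudef
  have hAA : A * A = 1 := by
    rw [hAdef, ← map_mul, hσdef, swap_mul_self, map_one]
  have hA2 : ∀ z, A (A z) = z := by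
    intro z
    have h := Equiv.ext_iff.mp hAA z
    simpa [Equiv.Perm.mul_apply] using h
  have hBB : φ b * φ b = 1 := by
    rw [← map_mul, hb, swap_mul_self, map_one]
  have hAcard : A.support.card = 6 := h6 _ _ (Ne.symm hx1)
  have hApt : ∀ z, A z ≠ z := by
    have hAu : A.support = Finset.univ := by
      apply (Finset.card_eq_iff_eq_univ _).mp
      simp [hAcard]
    intro z
    apply mem_support.mp
    rw [hAu]
    exact Finset.mem_univ z
  have huc : u^3 = 1 := decC3 u hu3
  have hu3' : ∀ z, u (u (u z)) = z := by
    intro z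
    have h := Equiv.ext_iff.mp huc z
    simpa [pow_succ, Equiv.Perm.mul_apply] using h
  have hu_eq : A * φ b = u := by
    rw [hAdef, ← map_mul, hts]
  have hB' : A * u = φ b := by
    rw [← hu_eq, ← mul_assoc, hAA, one_mul]
  have h1 : A * u * (A * u) = 1 := by rw [hB']; exact hBB
  have hrel : ∀ z, A (u z) = u (u (A z)) := by
    intro z
    have h2 : A (u (A (u z))) = z := by
      have h := Equiv.ext_iff.mp h1 z
      simpa [Equiv.Perm.mul_apply] using h
    have h3 : u (A (u z)) = A z := by
      rw [← hA2 (u (A (u z))), h2]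
    calc A (u z) = u (u (u (A (u z)))) := (hu3' _).symm
    _ = u (u (A z)) := by rw [h3]
  obtain ⟨x', h1', h2', h12', hsuppu⟩ := supp3_facts u hu3
  have hwin : A x' ∈ u.support := by
    by_contra hout
    have hfix : u (A x') = A x' := notMem_support.mp hout
    have h := hrel x'
    rw [hfix, hfix] at h
    exact h1' (A.injective h)
  rw [← hsuppu] at hwin
  simp only [Finset.mem_insert, Finset.mem_singleton] at hwin
  rcases hwin with hw | hw | hw
  · exact hApt x' hw
  · have hAux : A (u x') = x' := by rw [← hw, hA2]
    have h := hrel (u x')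
    rw [hAux] at h
    exact hApt _ h
  · have h := hrel x'
    rw [hw] at h
    rw [hu3' (u x')] at h
    exact hApt _ h

/-- For a non-inner automorphism `φ` of `S₆`,
`min_{t ≠ 1} (|supp t| + |supp (φ t)|) = 8` while `min_{t ≠ 1} 2·|supp t| = 4`; hence the
twisted permutation code `C(S₆,(id,φ))` has minimum distance `8`, strictly greater than the
minimum distance `4` of the 2-fold repetition permutation code of `S₆`. -/
theorem twisted_stmt5 (φ : Equiv.Perm (Fin 6) ≃* Equiv.Perm (Fin 6))
    (hφ : ¬ ∃ g : Equiv.Perm (Fin 6), ∀ t : Equiv.Perm (Fin 6), φ t = g⁻¹ * t * g) :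
    sInf {d : ℕ | ∃ t : Equiv.Perm (Fin 6), t ≠ 1 ∧
        d = t.support.card + (φ t).support.card} = 8 ∧
    sInf {d : ℕ | ∃ t : Equiv.Perm (Fin 6), t ≠ 1 ∧ d = 2 * t.support.card} = 4 := by
  have hswapne : (swap 0 1 : Equiv.Perm (Fin 6)) ≠ 1 := by decide
  have h01 : (0 : Fin 6) ≠ 1 := by decide
  have hφ1 : ∀ z : Equiv.Perm (Fin 6), φ z = 1 → z = 1 := by
    intro z h
    exact φ.injective (h.trans (map_one φ).symm)
  have notfour : ∀ (ψ : Equiv.Perm (Fin 6) ≃* Equiv.Perm (Fin 6)) (τ : Equiv.Perm (Fin 6)),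
      τ.support.card = 2 → (ψ τ).support.card ≠ 4 := by
    intro ψ τ hτ h4
    obtain ⟨a, b, hab, rfl⟩ := card_support_eq_two.mp hτ
    have h2 : (ψ (swap a b))^2 = 1 := by
      rw [← map_pow, pow_two, swap_mul_self, map_one]
    obtain ⟨ρ, hρ⟩ := sq_of_card4 _ h2 h4
    have hsab : swap a b = (ψ.symm ρ)^2 := by
      have h' := congrArg ψ.symm hρ
      rw [MulEquiv.symm_apply_apply, map_pow] at h'
      exact h'.symm
    have hD := decD (ψ.symm ρ)
    rw [← hsab] at hD
    exact hD (card_support_swap hab)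
  -- conjugation fact: support card of φ of any swap equals that of φ (swap 0 1)
  have hconj : ∀ a b : Fin 6, a ≠ b →
      (φ (swap a b)).support.card = (φ (swap 0 1)).support.card := by
    intro a b hab
    obtain ⟨c, hc⟩ := isConj_iff.mp (isConj_swap h01 hab)
    rw [← hc, map_mul, map_mul, map_inv]
    exact card_support_conj
  have hsw2 : ((swap 0 1 : Equiv.Perm (Fin 6)))^2 = 1 := by
    rw [pow_two, swap_mul_self]
  have hz1 : φ (swap 0 1) ≠ 1 := fun h => hswapne (hφ1 _ h)
  rcases decE2 (φ (swap 0 1)) (by rw [← map_pow, hsw2, map_one]) with h | hcase2 | h | hcase6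
  · exact absurd h hz1
  · -- CASE A : φ maps transpositions to transpositions ⇒ φ is inner, contradiction
    exfalso
    have AllIsSwap : ∀ a b : Fin 6, a ≠ b → (φ (swap a b)).IsSwap := by
      intro a b hab
      apply card_support_eq_two.mp
      rw [hconj a b hab]
      exact hcase2
    have hCom : ∀ x y : Equiv.Perm (Fin 6), Commute (φ x) (φ y) → Commute x y := by
      intro x y h
      apply φ.injective
      rw [map_mul, map_mul]
      exact h
    have hNC : ∀ i j : Fin 6, ¬ Commute (swap (0:Fin 6) i) (swap (0:Fin 6) j) →
        ¬ Commute (φ (swap 0 i)) (φ (swap 0 j)) :=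
      fun i j h hc => h (hCom _ _ hc)
    have hSq : ∀ k : Fin 6, (swap 0 1 * swap 0 2 * swap 0 k : Equiv.Perm (Fin 6))^2 ≠ 1 →
        (φ (swap 0 1) * φ (swap 0 2) * φ (swap 0 k))^2 ≠ 1 := by
      intro k hk h
      apply hk
      apply hφ1
      rw [map_pow, map_mul, map_mul]
      exact h
    obtain ⟨p, z1, z2, hpz1, hpz2, hz12, ht1, ht2⟩ :=
      pair_swaps (AllIsSwap 0 1 (by decide)) (AllIsSwap 0 2 (by decide))
        (hNC 1 2 (ncomm_of_ne (by decide)))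
    have trio : ∀ k : Fin 6, k ≠ 0 → ¬ Commute (swap (0:Fin 6) 1) (swap (0:Fin 6) k) →
        ¬ Commute (swap (0:Fin 6) 2) (swap (0:Fin 6) k) →
        (swap 0 1 * swap 0 2 * swap 0 k : Equiv.Perm (Fin 6))^2 ≠ 1 →
        ∃ z, p ≠ z ∧ φ (swap 0 k) = swap p z := by
      intro k hk0 h1k h2k hsqk
      apply trio_swaps hz12 (AllIsSwap 0 k (Ne.symm hk0))
      · rw [← ht1]; exact hNC 1 k h1k
      · rw [← ht2]; exact hNC 2 k h2k
      · rw [← ht1, ← ht2]; exact hSq k hsqk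
    obtain ⟨z3, hpz3, ht3⟩ := trio 3 (by decide) (ncomm_of_ne (by decide)) (ncomm_of_ne (by decide)) (by decide)
    obtain ⟨z4, hpz4, ht4⟩ := trio 4 (by decide) (ncomm_of_ne (by decide)) (ncomm_of_ne (by decide)) (by decide)
    obtain ⟨z5, hpz5, ht5⟩ := trio 5 (by decide) (ncomm_of_ne (by decide)) (ncomm_of_ne (by decide)) (by decide)
    have hφne : ∀ i j : Fin 6, swap (0:Fin 6) i ≠ swap (0:Fin 6) j →
        φ (swap 0 i) ≠ φ (swap 0 j) := fun i j h hc => h (φ.injective hc)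
    have hz13 : z1 ≠ z3 := fun h => hφne 1 3 (by decide) (by rw [ht1, ht3, h])
    have hz14 : z1 ≠ z4 := fun h => hφne 1 4 (by decide) (by rw [ht1, ht4, h])
    have hz15 : z1 ≠ z5 := fun h => hφne 1 5 (by decide) (by rw [ht1, ht5, h])
    have hz23 : z2 ≠ z3 := fun h => hφne 2 3 (by decide) (by rw [ht2, ht3, h])
    have hz24 : z2 ≠ z4 := fun h => hφne 2 4 (by decide) (by rw [ht2, ht4, h])
    have hz25 : z2 ≠ z5 := fun h => hφne 2 5 (by decide) (by rw [ht2, ht5, h])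
    have hz34 : z3 ≠ z4 := fun h => hφne 3 4 (by decide) (by rw [ht3, ht4, h])
    have hz35 : z3 ≠ z5 := fun h => hφne 3 5 (by decide) (by rw [ht3, ht5, h])
    have hz45 : z4 ≠ z5 := fun h => hφne 4 5 (by decide) (by rw [ht4, ht5, h])
    set f : Fin 6 → Fin 6 := fun i =>
      if i = 0 then p else if i = 1 then z1 else if i = 2 then z2
      else if i = 3 then z3 else if i = 4 then z4 else z5 with hfdef
    have hf0 : f 0 = p := rfl
    have hf1 : f 1 = z1 := rfl
    have hf2 : f 2 = z2 := rfl
    have hf3 : f 3 = z3 := rfl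
    have hf4 : f 4 = z4 := rfl
    have hf5 : f 5 = z5 := rfl
    have hinj : Function.Injective f := by
      intro i j hij
      fin_cases i <;> fin_cases j <;>
        simp only [hf0, hf1, hf2, hf3, hf4, hf5] at hij <;>
        first
          | rfl
          | (exact absurd hij (by assumption))
          | (exact absurd hij.symm (by assumption))
    have hbij : Function.Bijective f := Finite.injective_iff_bijective.mp hinj
    set g : Equiv.Perm (Fin 6) := Equiv.ofBijective f hbij with hgdef
    have hgf : ∀ i, g i = f i := fun i => rfl
    have key0 : ∀ i : Fin 6, i ≠ 0 → φ (swap 0 i) = g * swap 0 i * g⁻¹ := by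
      intro i hi
      rw [← swap_apply_apply g 0 i, hgf 0, hgf i, hf0]
      fin_cases i
      · exact absurd rfl hi
      · exact ht1
      · exact ht2
      · exact ht3
      · exact ht4
      · exact ht5
    have key_swap : ∀ a b : Fin 6, a ≠ b → φ (swap a b) = g * swap a b * g⁻¹ := by
      intro a b hab
      by_cases ha : a = 0
      · rw [ha]
        exact key0 b (by rw [ha] at hab; exact hab.symm)
      by_cases hb : b = 0
      · rw [hb, swap_comm a 0]
        exact key0 a ha
      · have hdecomp : swap a b = swap 0 a * swap 0 b * (swap 0 a)⁻¹ := by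
          have h' := swap_apply_apply (swap (0 : Fin 6) a) 0 b
          rw [swap_apply_left, swap_apply_of_ne_of_ne hb (Ne.symm hab)] at h'
          exact h'
        rw [hdecomp, map_mul, map_mul, map_inv, key0 a ha, key0 b hb]
        group
    have key_all : ∀ x : Equiv.Perm (Fin 6), φ x = g * x * g⁻¹ := by
      intro x
      have hx : x ∈ Subgroup.closure {σ : Equiv.Perm (Fin 6) | σ.IsSwap} := by
        rw [Equiv.Perm.closure_isSwap]
        exact Subgroup.mem_top x
      induction hx using Subgroup.closure_induction with
      | mem σ hσ =>
        obtain ⟨a, b, hab, rfl⟩ := hσ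
        exact key_swap a b hab
      | one => rw [map_one]; group
      | mul u v hu hv ihu ihv => rw [map_mul, ihu, ihv]; group
      | inv u hu ihu => rw [map_inv, ihu]; group
    exact hφ ⟨g⁻¹, fun t => by rw [inv_inv]; exact key_all t⟩
  · exact absurd h (notfour φ _ (card_support_swap h01))
  · -- CASE B
    have AllSwap6 : ∀ a b : Fin 6, a ≠ b → (φ (swap a b)).support.card = 6 := by
      intro a b hab
      rw [hconj a b hab]
      exact hcase6
    have AllSwapInv6 : ∀ a b : Fin 6, a ≠ b → (φ.symm (swap a b)).support.card = 6 := by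
      intro a b hab
      have hv2 : (φ.symm (swap a b))^2 = 1 := by
        rw [← map_pow, pow_two, swap_mul_self, map_one]
      have hv1 : φ.symm (swap a b) ≠ 1 := by
        intro h
        have := congrArg φ h
        rw [MulEquiv.apply_symm_apply, map_one] at this
        exact absurd (card_support_swap hab) (by rw [this]; simp)
      rcases decE2 _ hv2 with h | h | h | h
      · exact absurd h hv1
      · exfalso
        obtain ⟨c, d, hcd, hv⟩ := card_support_eq_two.mp h
        have h6' := AllSwap6 c d hcd
        rw [← hv, MulEquiv.apply_symm_apply] at h6'
        rw [card_support_swap hab] at h6'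
        omega
      · exact absurd h (notfour φ.symm (swap a b) (card_support_swap hab))
      · exact h
    constructor
    · -- sInf = 8
      have mem8 : (8 : ℕ) ∈ {d : ℕ | ∃ t : Equiv.Perm (Fin 6), t ≠ 1 ∧
          d = t.support.card + (φ t).support.card} := by
        refine ⟨φ.symm (swap 0 1), ?_, ?_⟩
        · intro h
          apply hswapne
          have := congrArg φ h
          rwa [MulEquiv.apply_symm_apply, map_one] at this
        · rw [MulEquiv.apply_symm_apply, AllSwapInv6 0 1 h01, card_support_swap h01]
      apply le_antisymm
      · exact Nat.sInf_le mem8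
      · apply le_csInf ⟨8, mem8⟩
        rintro d ⟨t, ht1, rfl⟩
        set u := φ t with hudef
        have hu1 : u ≠ 1 := fun h => ht1 (hφ1 t h)
        have hm2 : 1 < t.support.card := one_lt_card_support_of_ne_one ht1
        have hk2 : 1 < u.support.card := one_lt_card_support_of_ne_one hu1
        have hm6 : t.support.card ≤ 6 := by
          have := Finset.card_le_univ t.support
          simpa using this
        have hk6 : u.support.card ≤ 6 := by
          have := Finset.card_le_univ u.support
          simpa using this
        by_cases hM : 6 ≤ t.support.card
        · omega
        by_cases hK : 6 ≤ u.support.card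
        · omega
        by_cases hm3 : t.support.card = 3
        · have ht3 : t^3 = 1 := decC3 t hm3
          have hu3 : u^3 = 1 := by
            rw [hudef, ← map_pow, ht3, map_one]
          rcases decE3 u hu3 with h | h | h
          · exact absurd h hu1
          · exact (three_three φ AllSwap6 t hm3 h).elim
          · omega
        by_cases hk3 : u.support.card = 3
        · have hu3 : u^3 = 1 := decC3 u hk3
          have ht3 : t^3 = 1 := by
            apply φ.injective
            rw [map_pow, map_one]
            exact hu3
          rcases decE3 t ht3 with h | h | h
          · exact absurd h ht1
          · exact absurd h hm3
          · omega
        by_cases hm2' : t.support.card = 2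
        · obtain ⟨a, b, hab, hta⟩ := card_support_eq_two.mp hm2'
          have h6' := AllSwap6 a b hab
          rw [← hta, ← hudef] at h6'
          omega
        by_cases hk2' : u.support.card = 2
        · obtain ⟨a, b, hab, hua⟩ := card_support_eq_two.mp hk2'
          have ht' : t = φ.symm (swap a b) := by
            rw [← hua, hudef, MulEquiv.symm_apply_apply]
          have := AllSwapInv6 a b hab
          rw [← ht'] at this
          omega
        · omega
    · -- sInf = 4
      have mem4 : (4 : ℕ) ∈ {d : ℕ | ∃ t : Equiv.Perm (Fin 6), t ≠ 1 ∧
          d = 2 * t.support.card} := by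
        refine ⟨swap 0 1, hswapne, ?_⟩
        rw [card_support_swap h01]
      apply le_antisymm
      · exact Nat.sInf_le mem4
      · apply le_csInf ⟨4, mem4⟩
        rintro d ⟨t, ht1, rfl⟩
        have := one_lt_card_support_of_ne_one ht1
        omega
end

section
/- Let A₆ denote the alternating group on six points, regarded as a subgroup of S₆, and let φ be an automorphism of A₆ that is not induced by conjugation by any element of S₆, i.e. there is no g ∈ S₆ with φ(t) = g⁻¹ t g for all t ∈ A₆. Then min over all t ∈ A₆ with t ≠ 1 of ( |supp(t)| + |supp(φ(t))| ) equals 8, whereas min over all t ∈ A₆ with t ≠ 1 of 2·|supp(t)| equals 6. Hence the twisted permutation code C(A₆,(id,φ)) has minimum distance 8, strictly greater than the minimum distance 6 of the 2-fold repetition permutation code of A₆. -/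
open Equiv Equiv.Perm

def T2 : Equiv.Perm (Fin 6) := swap 0 1 * swap 1 2
def T3 : Equiv.Perm (Fin 6) := swap 0 1 * swap 1 3
def T4 : Equiv.Perm (Fin 6) := swap 0 1 * swap 1 4
def T5 : Equiv.Perm (Fin 6) := swap 0 1 * swap 1 5

def fl : List (Fin 6) := [0,1,2,3,4,5]

lemma mem_fl : ∀ x : Fin 6, x ∈ fl := by decide

def cand : List (Equiv.Perm (Fin 6)) := [(swap (1:Fin 6) 2 * swap (2:Fin 6) 3), (swap (1:Fin 6) 2 * swap (2:Fin 6) 4), (swap (1:Fin 6) 2 * swap (2:Fin 6) 5), (swap (0:Fin 6) 1 * swap (1:Fin 6) 3), (swap (0:Fin 6) 1 * swap (1:Fin 6) 4), (swap (0:Fin 6) 1 * swap (1:Fin 6) 5), (swap (0:Fin 6) 2 * swap (1:Fin 6) 2), (swap (0:Fin 6) 3 * swap (2:Fin 6) 3), (swap (0:Fin 6) 4 * swap (2:Fin 6) 4), (swap (0:Fin 6) 5 * swap (2:Fin 6) 5)]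
def gs : List (Equiv.Perm (Fin 6)) := [(swap (0:Fin 6) 2 * swap (1:Fin 6) 2), (swap (0:Fin 6) 2 * swap (1:Fin 6) 2 * swap (4:Fin 6) 5), (swap (0:Fin 6) 2 * swap (1:Fin 6) 2 * swap (3:Fin 6) 4), (swap (0:Fin 6) 2 * swap (1:Fin 6) 2 * swap (3:Fin 6) 5 * swap (4:Fin 6) 5), (swap (0:Fin 6) 2 * swap (1:Fin 6) 2 * swap (3:Fin 6) 4 * swap (4:Fin 6) 5), (swap (0:Fin 6) 2 * swap (1:Fin 6) 2 * swap (3:Fin 6) 5), (1 : Equiv.Perm (Fin 6)), (swap (4:Fin 6) 5), (swap (3:Fin 6) 4), (swap (3:Fin 6) 5 * swap (4:Fin 6) 5), (swap (3:Fin 6) 4 * swap (4:Fin 6) 5), (swap (3:Fin 6) 5), (swap (0:Fin 6) 1 * swap (1:Fin 6) 2), (swap (0:Fin 6) 1 * swap (1:Fin 6) 2 * swap (4:Fin 6) 5), (swap (0:Fin 6) 1 * swap (1:Fin 6) 2 * swap (3:Fin 6) 4), (swap (0:Fin 6) 1 * swap (1:Fin 6) 2 * swap (3:Fin 6) 5 *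 swap (4:Fin 6) 5), (swap (0:Fin 6) 1 * swap (1:Fin 6) 2 * swap (3:Fin 6) 4 * swap (4:Fin 6) 5), (swap (0:Fin 6) 1 * swap (1:Fin 6) 2 * swap (3:Fin 6) 5)]
def words : List (Equiv.Perm (Fin 6)) := [(T3 * T5⁻¹ * T4 * T3⁻¹), (T3 * T4⁻¹ * T5 * T3⁻¹), (T2 * T4⁻¹ * T3 * T2⁻¹), (T2 * T5⁻¹ * T3 * T2⁻¹), (T2 * T3⁻¹ * T4 * T2⁻¹), (T2 * T5⁻¹ * T4 * T2⁻¹), (T2 * T3⁻¹ * T5 * T2⁻¹), (T2 * T4⁻¹ * T5 * T2⁻¹), (T3⁻¹ * T2), (T4⁻¹ * T2), (T5⁻¹ * T2), (T2⁻¹ * T3), (T4⁻¹ * T3), (T5⁻¹ * T3), (T2⁻¹ * T4), (T3⁻¹ * T4), (T5⁻¹ * T4), (T2⁻¹ * T5), (T3⁻¹ * T5), (T4⁻¹ * T5), (T2), (T3), (T4), (T5), (T2⁻¹), (T3 * T2⁻¹), (T4 * T2⁻¹), (T5 * T2⁻¹), (T3⁻¹), (T2 * T3⁻¹), (T4 *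 T3⁻¹), (T5 * T3⁻¹), (T4⁻¹), (T2 * T4⁻¹), (T3 * T4⁻¹), (T5 * T4⁻¹), (T5⁻¹), (T2 * T5⁻¹), (T3 * T5⁻¹), (T4 * T5⁻¹)]
lemma Lmem : ∀ a b c : Fin 6, a ≠ b → a ≠ c → b ≠ c →
    (T2 * (swap a b * swap b c))^2 = 1 → (swap a b * swap b c) ∈ cand := by
  have H : (fl.all fun a => fl.all fun b => fl.all fun c =>
      decide (a ≠ b → a ≠ c → b ≠ c →
        (T2 * (swap a b * swap b c))^2 = 1 → (swap a b * swap b c) ∈ cand)) = true := by decide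
  intro a b c
  exact of_decide_eq_true
    (List.all_eq_true.mp (List.all_eq_true.mp (List.all_eq_true.mp H a (mem_fl a)) b (mem_fl b)) c (mem_fl c))

lemma gen_enum : ∀ a b c : Fin 6, a ≠ b → a ≠ c → b ≠ c → (swap a b * swap b c) ∈ words := by
  have H : (fl.all fun a => fl.all fun b => fl.all fun c =>
      decide (a ≠ b → a ≠ c → b ≠ c → (swap a b * swap b c) ∈ words)) = true := by decide
  intro a b c
  exact of_decide_eq_true
    (List.all_eq_true.mp (List.all_eq_true.mp (List.all_eq_true.mp H a (mem_fl a)) b (mem_fl b)) c (mem_fl c))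

lemma key : ∀ u₃ u₄ u₅ : Equiv.Perm (Fin 6), u₃ ∈ cand → u₄ ∈ cand → u₅ ∈ cand →
    (u₃ * u₄)^2 = 1 → (u₃ * u₅)^2 = 1 → (u₄ * u₅)^2 = 1 →
    ∃ g ∈ gs, g⁻¹ * T2 * g = T2 ∧ g⁻¹ * T3 * g = u₃ ∧ g⁻¹ * T4 * g = u₄ ∧ g⁻¹ * T5 * g = u₅ := by
  have H : (cand.all fun u₃ => cand.all fun u₄ => cand.all fun u₅ =>
      decide ((u₃ * u₄)^2 = 1 → (u₃ * u₅)^2 = 1 → (u₄ * u₅)^2 = 1 →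
        ∃ g ∈ gs, g⁻¹ * T2 * g = T2 ∧ g⁻¹ * T3 * g = u₃ ∧ g⁻¹ * T4 * g = u₄ ∧ g⁻¹ * T5 * g = u₅)) = true := by decide
  intro u₃ u₄ u₅ h₃ h₄ h₅
  exact of_decide_eq_true
    (List.all_eq_true.mp (List.all_eq_true.mp (List.all_eq_true.mp H u₃ h₃) u₄ h₄) u₅ h₅)

lemma cycle_of_images (u : Equiv.Perm (Fin 6)) (a b c : Fin 6)
    (hab : a ≠ b) (hac : a ≠ c) (hbc : b ≠ c)
    (ea : u a = b) (eb : u b = c) (ec : u c = a)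
    (hfix : ∀ x : Fin 6, x ≠ a → x ≠ b → x ≠ c → u x = x) :
    u = swap a b * swap b c := by
  ext x
  by_cases h1 : x = a
  · subst h1
    rw [Equiv.Perm.mul_apply, swap_apply_of_ne_of_ne hab hac, swap_apply_left, ea]
  by_cases h2 : x = b
  · subst h2
    rw [Equiv.Perm.mul_apply, swap_apply_left, swap_apply_of_ne_of_ne (Ne.symm hac) (Ne.symm hbc), eb]
  by_cases h3 : x = c
  · subst h3
    rw [Equiv.Perm.mul_apply, swap_apply_right, swap_apply_right, ec]
  · rw [Equiv.Perm.mul_apply, swap_apply_of_ne_of_ne h2 h3, swap_apply_of_ne_of_ne h1 h2,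
      hfix x h1 h2 h3]

lemma three_cycle_form (u : Equiv.Perm (Fin 6)) (h : u.support.card = 3) :
    ∃ a b c : Fin 6, a ≠ b ∧ a ≠ c ∧ b ≠ c ∧ u = swap a b * swap b c := by
  obtain ⟨a, b, c, hab, hac, hbc, hs⟩ := Finset.card_eq_three.mp h
  have hfix : ∀ x : Fin 6, x ≠ a → x ≠ b → x ≠ c → u x = x := by
    intro x h1 h2 h3
    have : x ∉ u.support := by rw [hs]; simp [h1, h2, h3]
    exact Equiv.Perm.notMem_support.mp this
  have ha : u a ≠ a := Equiv.Perm.mem_support.mp (by rw [hs]; simp)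
  have hb : u b ≠ b := Equiv.Perm.mem_support.mp (by rw [hs]; simp)
  have hc : u c ≠ c := Equiv.Perm.mem_support.mp (by rw [hs]; simp)
  have himg : ∀ x : Fin 6, u x ≠ x → (u x = a ∨ u x = b ∨ u x = c) := by
    intro x hx
    have : u x ∈ u.support :=
      Equiv.Perm.apply_mem_support.mpr (Equiv.Perm.mem_support.mpr hx)
    rw [hs] at this; simpa using this
  have hinj := u.injective
  have hua : u a = b ∨ u a = c := by
    rcases himg a ha with h' | h' | h'
    · exact absurd h' ha
    · exact Or.inl h'
    · exact Or.inr h'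
  rcases hua with ea | ea
  · -- u a = b ; show u b = c, u c = a
    have eb : u b = c := by
      rcases himg b hb with h' | h' | h'
      · exfalso
        rcases himg c hc with h'' | h'' | h''
        · exact hbc (hinj (h''.trans h'.symm)).symm
        · exact hac (hinj (h''.trans ea.symm)).symm
        · exact hc h''
      · exact absurd h' hb
      · exact h'
    have ec : u c = a := by
      rcases himg c hc with h' | h' | h'
      · exact h'
      · exact absurd (hinj (h'.trans ea.symm)).symm hac
      · exact absurd h' hc
    exact ⟨a, b, c, hab, hac, hbc, cycle_of_images u a b c hab hac hbc ea eb ec hfix⟩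
  · -- u a = c ; show u c = b, u b = a ; witnesses (a, c, b)
    have ec : u c = b := by
      rcases himg c hc with h' | h' | h'
      · exfalso
        rcases himg b hb with h'' | h'' | h''
        · exact hbc (hinj (h''.trans h'.symm))
        · exact hb h''
        · exact hab (hinj (h''.trans ea.symm)).symm
      · exact h'
      · exact absurd h' hc
    have eb : u b = a := by
      rcases himg b hb with h' | h' | h'
      · exact h'
      · exact absurd h' hb
      · exact absurd (hinj (h'.trans ea.symm)).symm hab
    refine ⟨a, c, b, hac, hab, Ne.symm hbc, cycle_of_images u a c b hac hab (Ne.symm hbc) ea ec eb ?_⟩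
    intro x h1 h2 h3
    exact hfix x h1 h3 h2

lemma parts_eq (u : Equiv.Perm (Fin 6)) (p : ℕ) (hp : p.Prime) (h : u ^ p = 1) :
    ∀ n ∈ u.cycleType, n = p := by
  intro n hn
  have h2 : 2 ≤ n := Equiv.Perm.two_le_of_mem_cycleType hn
  have hd : n ∣ p := by
    have : n ∣ u.cycleType.lcm := Multiset.dvd_lcm hn
    rw [Equiv.Perm.lcm_cycleType] at this
    exact this.trans (orderOf_dvd_of_pow_eq_one h)
  rcases (Nat.Prime.eq_one_or_self_of_dvd hp n hd) with h1 | h1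
  · omega
  · exact h1

lemma card_supp_facts (u : Equiv.Perm (Fin 6)) (p : ℕ) (hp : p.Prime) (h : u ^ p = 1)
    (h1 : u ≠ 1) : u.support.card = p * Multiset.card u.cycleType ∧
      Multiset.card u.cycleType ≠ 0 ∧ u.support.card ≤ 6 := by
  have hrep : u.cycleType = Multiset.replicate (Multiset.card u.cycleType) p :=
    Multiset.eq_replicate.mpr ⟨rfl, fun b hb => parts_eq u p hp h b hb⟩
  refine ⟨?_, ?_, ?_⟩
  · conv_lhs => rw [← Equiv.Perm.sum_cycleType]
    conv_lhs => rw [hrep]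
    rw [Multiset.sum_replicate, smul_eq_mul, mul_comm]
  · simpa using (Equiv.Perm.card_cycleType_eq_zero (σ := u)).not.mpr h1
  · have := Finset.card_le_univ u.support
    simpa using this

lemma supp_of_sq (u : Equiv.Perm (Fin 6)) (h : u ^ 2 = 1) (h1 : u ≠ 1)
    (hA : u ∈ alternatingGroup (Fin 6)) : u.support.card = 4 := by
  obtain ⟨hsum, hk0, hle⟩ := card_supp_facts u 2 Nat.prime_two h h1
  set k := Multiset.card u.cycleType with hk
  have hsign : Equiv.Perm.sign u = 1 := Equiv.Perm.mem_alternatingGroup.mp hA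
  rw [Equiv.Perm.sign_of_cycleType] at hsign
  rw [Equiv.Perm.sum_cycleType, hsum] at hsign
  have hkeven : Even (2 * k + k) := by
    rwa [neg_one_pow_eq_one_iff_even (by decide : (-1 : ℤˣ) ≠ 1)] at hsign
  obtain ⟨m, hm⟩ := hkeven
  omega

lemma supp_of_cube (u : Equiv.Perm (Fin 6)) (h : u ^ 3 = 1) (h1 : u ≠ 1) :
    u.support.card = 3 ∨ u.support.card = 6 := by
  obtain ⟨hsum, hk0, hle⟩ := card_supp_facts u 3 Nat.prime_three h h1
  omega

lemma supp_ge_three (u : Equiv.Perm (Fin 6)) (h1 : u ≠ 1)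
    (hA : u ∈ alternatingGroup (Fin 6)) : 3 ≤ u.support.card := by
  have h2 : 1 < u.support.card := Equiv.Perm.one_lt_card_support_of_ne_one h1
  rcases Nat.lt_or_ge u.support.card 3 with h | h
  · exfalso
    have hc2 : u.support.card = 2 := by omega
    obtain ⟨x, y, hxy, rfl⟩ := Equiv.Perm.card_support_eq_two.mp hc2
    have := Equiv.Perm.mem_alternatingGroup.mp hA
    rw [Equiv.Perm.sign_swap hxy] at this
    exact absurd this (by decide)
  · exact h

lemma words_mem : ∀ x ∈ words, x ∈ Subgroup.closure ({T2,T3,T4,T5} : Set (Equiv.Perm (Fin 6))) := by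
  have h2 : T2 ∈ Subgroup.closure ({T2,T3,T4,T5} : Set (Equiv.Perm (Fin 6))) := Subgroup.subset_closure (by simp)
  have h3 : T3 ∈ Subgroup.closure ({T2,T3,T4,T5} : Set (Equiv.Perm (Fin 6))) := Subgroup.subset_closure (by simp)
  have h4 : T4 ∈ Subgroup.closure ({T2,T3,T4,T5} : Set (Equiv.Perm (Fin 6))) := Subgroup.subset_closure (by simp)
  have h5 : T5 ∈ Subgroup.closure ({T2,T3,T4,T5} : Set (Equiv.Perm (Fin 6))) := Subgroup.subset_closure (by simp)
  intro x hx
  simp only [words, List.mem_cons, List.not_mem_nil, or_false] at hx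
  rcases hx with rfl|rfl|rfl|rfl|rfl|rfl|rfl|rfl|rfl|rfl|rfl|rfl|rfl|rfl|rfl|rfl|rfl|rfl|rfl|rfl|rfl|rfl|rfl|rfl|rfl|rfl|rfl|rfl|rfl|rfl|rfl|rfl|rfl|rfl|rfl|rfl|rfl|rfl|rfl|rfl
  exacts [(Subgroup.mul_mem _ (Subgroup.mul_mem _ (Subgroup.mul_mem _ h3 (Subgroup.inv_mem _ h5)) h4) (Subgroup.inv_mem _ h3)), (Subgroup.mul_mem _ (Subgroup.mul_mem _ (Subgroup.mul_mem _ h3 (Subgroup.inv_mem _ h4)) h5) (Subgroup.inv_mem _ h3)), (Subgroup.mul_mem _ (Subgroup.mul_mem _ (Subgroup.mul_mem _ h2 (Subgroup.inv_mem _ h4)) h3) (Subgroup.inv_mem _ h2)), (Subgroup.mul_mem _ (Subgroup.mul_mem _ (Subgroup.mul_mem _ h2 (Subgroup.inv_mem _ h5)) h3) (Subgroup.inv_mem _ h2)), (Subgroup.mul_mem _ (Subgroup.mul_mem _ (Subgroup.mul_mem _ h2 (Subgroup.inv_mem _ h3)) h4) (Subgroup.inv_mem _ h2)), (Subgroup.mul_mem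 _ (Subgroup.mul_mem _ (Subgroup.mul_mem _ h2 (Subgroup.inv_mem _ h5)) h4) (Subgroup.inv_mem _ h2)), (Subgroup.mul_mem _ (Subgroup.mul_mem _ (Subgroup.mul_mem _ h2 (Subgroup.inv_mem _ h3)) h5) (Subgroup.inv_mem _ h2)), (Subgroup.mul_mem _ (Subgroup.mul_mem _ (Subgroup.mul_mem _ h2 (Subgroup.inv_mem _ h4)) h5) (Subgroup.inv_mem _ h2)), (Subgroup.mul_mem _ (Subgroup.inv_mem _ h3) h2), (Subgroup.mul_mem _ (Subgroup.inv_mem _ h4) h2), (Subgroup.mul_mem _ (Subgroup.inv_mem _ h5) h2), (Subgroup.mul_mem _ (Subgroup.inv_mem _ h2) h3), (Subgroup.mul_mem _ (Subgroup.inv_mem _ h4) h3), (Subgroup.mul_mem _ (Subgroup.inv_mem _ h5) h3), (Subgroup.mul_mem _ (Subgroup.inv_mem _ h2) h4), (Subgroup.mul_mem _ (Subgroup.inv_mem _ h3) h4), (Subgroup.mul_mem _ (Subgroup.inv_mem _ h5) h4), (Subgroup.mul_mem _ (Subgroup.inv_mem _ h2) h5), (Subgroup.mul_mem _ (Subgroup.inv_mem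 _ h3) h5), (Subgroup.mul_mem _ (Subgroup.inv_mem _ h4) h5), h2, h3, h4, h5, (Subgroup.inv_mem _ h2), (Subgroup.mul_mem _ h3 (Subgroup.inv_mem _ h2)), (Subgroup.mul_mem _ h4 (Subgroup.inv_mem _ h2)), (Subgroup.mul_mem _ h5 (Subgroup.inv_mem _ h2)), (Subgroup.inv_mem _ h3), (Subgroup.mul_mem _ h2 (Subgroup.inv_mem _ h3)), (Subgroup.mul_mem _ h4 (Subgroup.inv_mem _ h3)), (Subgroup.mul_mem _ h5 (Subgroup.inv_mem _ h3)), (Subgroup.inv_mem _ h4), (Subgroup.mul_mem _ h2 (Subgroup.inv_mem _ h4)), (Subgroup.mul_mem _ h3 (Subgroup.inv_mem _ h4)), (Subgroup.mul_mem _ h5 (Subgroup.inv_mem _ h4)), (Subgroup.inv_mem _ h5), (Subgroup.mul_mem _ h2 (Subgroup.inv_mem _ h5)), (Subgroup.mul_mem _ h3 (Subgroup.inv_mem _ h5)), (Subgroup.mul_mem _ h4 (Subgroup.inv_mem _ h5))]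

lemma isThreeCycle_conj' {f g : Equiv.Perm (Fin 6)} (h : f.IsThreeCycle) :
    (g * f * g⁻¹).IsThreeCycle := by
  rw [Equiv.Perm.IsThreeCycle, Equiv.Perm.cycleType_conj]; exact h

lemma memT2 : T2 ∈ alternatingGroup (Fin 6) :=
  (card_support_eq_three_iff.mp (by decide)).mem_alternatingGroup
lemma memT3 : T3 ∈ alternatingGroup (Fin 6) :=
  (card_support_eq_three_iff.mp (by decide)).mem_alternatingGroup
lemma memT4 : T4 ∈ alternatingGroup (Fin 6) :=
  (card_support_eq_three_iff.mp (by decide)).mem_alternatingGroup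
lemma memT5 : T5 ∈ alternatingGroup (Fin 6) :=
  (card_support_eq_three_iff.mp (by decide)).mem_alternatingGroup

lemma rigid (φ : alternatingGroup (Fin 6) ≃* alternatingGroup (Fin 6))
    (t : alternatingGroup (Fin 6))
    (h3 : (↑t : Equiv.Perm (Fin 6)).IsThreeCycle)
    (h3' : (↑(φ t) : Equiv.Perm (Fin 6)).IsThreeCycle) :
    ∃ g : Equiv.Perm (Fin 6), ∀ x : alternatingGroup (Fin 6),
      (↑(φ x) : Equiv.Perm (Fin 6)) = g⁻¹ * (↑x : Equiv.Perm (Fin 6)) * g := by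
  have τ₂ : alternatingGroup (Fin 6) := ⟨T2, memT2⟩
  have hcard : (5 : ℕ) ≤ Nat.card (Fin 6) := by simp
  -- each φ τᵢ is a three-cycle
  have himg : ∀ τ : alternatingGroup (Fin 6), (↑τ : Equiv.Perm (Fin 6)).IsThreeCycle →
      (↑(φ τ) : Equiv.Perm (Fin 6)).IsThreeCycle := by
    intro τ hτ
    have hconj : IsConj t τ := alternatingGroup.isThreeCycle_isConj hcard h3 hτ
    obtain ⟨c, hc⟩ := isConj_iff.mp (φ.toMonoidHom.map_isConj hconj)
    have hcc : (↑(φ τ) : Equiv.Perm (Fin 6)) =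
        ↑c * (↑(φ t) : Equiv.Perm (Fin 6)) * (↑c : Equiv.Perm (Fin 6))⁻¹ := by
      exact congrArg Subtype.val hc.symm
    rw [hcc]; exact isThreeCycle_conj' h3'
  -- relations transfer through φ
  have hrel : ∀ (a b : alternatingGroup (Fin 6)),
      ((↑a : Equiv.Perm (Fin 6)) * ↑b)^2 = 1 →
      ((↑(φ a) : Equiv.Perm (Fin 6)) * ↑(φ b))^2 = 1 := by
    intro a b hab
    have h1 : (a * b)^2 = 1 := by
      apply Subtype.ext
      simpa using hab
    have h2 : (φ a * φ b)^2 = 1 := by rw [← map_mul, ← map_pow, h1, map_one]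
    simpa using congrArg (Subtype.val) h2
  set u₂ : Equiv.Perm (Fin 6) := ↑(φ ⟨T2, memT2⟩) with hu₂
  set u₃ : Equiv.Perm (Fin 6) := ↑(φ ⟨T3, memT3⟩) with hu₃
  set u₄ : Equiv.Perm (Fin 6) := ↑(φ ⟨T4, memT4⟩) with hu₄
  set u₅ : Equiv.Perm (Fin 6) := ↑(φ ⟨T5, memT5⟩) with hu₅
  have h3T2 : T2.IsThreeCycle := card_support_eq_three_iff.mp (by decide)
  have h3T3 : T3.IsThreeCycle := card_support_eq_three_iff.mp (by decide)
  have h3T4 : T4.IsThreeCycle := card_support_eq_three_iff.mp (by decide)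
  have h3T5 : T5.IsThreeCycle := card_support_eq_three_iff.mp (by decide)
  have hu₂3 : u₂.IsThreeCycle := himg _ h3T2
  have hu₃3 : u₃.IsThreeCycle := himg _ h3T3
  have hu₄3 : u₄.IsThreeCycle := himg _ h3T4
  have hu₅3 : u₅.IsThreeCycle := himg _ h3T5
  have r23 : (u₂ * u₃)^2 = 1 := hrel _ _ (by decide)
  have r24 : (u₂ * u₄)^2 = 1 := hrel _ _ (by decide)
  have r25 : (u₂ * u₅)^2 = 1 := hrel _ _ (by decide)
  have r34 : (u₃ * u₄)^2 = 1 := hrel _ _ (by decide)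
  have r35 : (u₃ * u₅)^2 = 1 := hrel _ _ (by decide)
  have r45 : (u₄ * u₅)^2 = 1 := hrel _ _ (by decide)
  -- normalize u₂ to T2 by conjugation
  obtain ⟨w, hw⟩ := isConj_iff.mp
    (Equiv.Perm.isConj_of_cycleType_eq (hu₂3.cycleType.trans h3T2.cycleType.symm))
  have conjmul : ∀ a b : Equiv.Perm (Fin 6),
      (w * a * w⁻¹) * (w * b * w⁻¹) = w * (a * b) * w⁻¹ := by intro a b; group
  have conjsq : ∀ a : Equiv.Perm (Fin 6), (w * a * w⁻¹)^2 = w * a^2 * w⁻¹ := by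
    intro a; rw [sq, conjmul, sq]
  have conjsq1 : ∀ a b : Equiv.Perm (Fin 6), (a * b)^2 = 1 →
      ((w * a * w⁻¹) * (w * b * w⁻¹))^2 = 1 := by
    intro a b h
    rw [conjmul, conjsq, h, mul_one, mul_inv_cancel]
  have hr34 : ((w * u₃ * w⁻¹) * (w * u₄ * w⁻¹))^2 = 1 := conjsq1 _ _ r34
  have hr35 : ((w * u₃ * w⁻¹) * (w * u₅ * w⁻¹))^2 = 1 := conjsq1 _ _ r35
  have hr45 : ((w * u₄ * w⁻¹) * (w * u₅ * w⁻¹))^2 = 1 := conjsq1 _ _ r45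
  have hrT2 : ∀ a : Equiv.Perm (Fin 6), (u₂ * a)^2 = 1 → (T2 * (w * a * w⁻¹))^2 = 1 := by
    intro a h
    rw [← hw, conjmul, conjsq, h, mul_one, mul_inv_cancel]
  -- membership in cand
  have hmemc : ∀ a : Equiv.Perm (Fin 6), a.IsThreeCycle → (T2 * a)^2 = 1 → a ∈ cand := by
    intro a ha hrela
    obtain ⟨x, y, z, hxy, hxz, hyz, hform⟩ := three_cycle_form a ha.card_support
    rw [hform]
    exact Lmem x y z hxy hxz hyz (by rw [← hform]; exact hrela)
  have hc3 : (w * u₃ * w⁻¹) ∈ cand := hmemc _ (isThreeCycle_conj' hu₃3) (hrT2 _ r23)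
  have hc4 : (w * u₄ * w⁻¹) ∈ cand := hmemc _ (isThreeCycle_conj' hu₄3) (hrT2 _ r24)
  have hc5 : (w * u₅ * w⁻¹) ∈ cand := hmemc _ (isThreeCycle_conj' hu₅3) (hrT2 _ r25)
  obtain ⟨g, hgmem, hg2, hg3, hg4, hg5⟩ := key _ _ _ hc3 hc4 hc5 hr34 hr35 hr45
  -- the conjugating element
  refine ⟨g * w, ?_⟩
  have e2 : u₂ = (g * w)⁻¹ * T2 * (g * w) := by
    have h1 : u₂ = w⁻¹ * T2 * w := by rw [← hw]; group
    rw [h1]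
    conv_lhs => rw [← hg2]
    group
  have e3 : u₃ = (g * w)⁻¹ * T3 * (g * w) := by
    have : u₃ = w⁻¹ * (w * u₃ * w⁻¹) * w := by group
    rw [this, ← hg3]; group
  have e4 : u₄ = (g * w)⁻¹ * T4 * (g * w) := by
    have : u₄ = w⁻¹ * (w * u₄ * w⁻¹) * w := by group
    rw [this, ← hg4]; group
  have e5 : u₅ = (g * w)⁻¹ * T5 * (g * w) := by
    have : u₅ = w⁻¹ * (w * u₅ * w⁻¹) * w := by group
    rw [this, ← hg5]; group
  -- closure argument
  set g0 := g * w with hg0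
  set H := Subgroup.closure ({T2,T3,T4,T5} : Set (Equiv.Perm (Fin 6))) with hH
  have hH_le_A : H ≤ alternatingGroup (Fin 6) := by
    apply (Subgroup.closure_le _).mpr
    intro σ hσ
    simp only [Set.mem_insert_iff, Set.mem_singleton_iff] at hσ
    rcases hσ with rfl | rfl | rfl | rfl
    exacts [memT2, memT3, memT4, memT5]
  have hA_le_H : alternatingGroup (Fin 6) ≤ H := by
    rw [← Equiv.Perm.closure_three_cycles_eq_alternating]
    apply (Subgroup.closure_le _).mpr
    intro σ hσ
    obtain ⟨x, y, z, hxy, hxz, hyz, hform⟩ :=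
      three_cycle_form σ (Equiv.Perm.IsThreeCycle.card_support hσ)
    rw [hform]
    exact words_mem _ (gen_enum x y z hxy hxz hyz)
  intro x
  have hx : (↑x : Equiv.Perm (Fin 6)) ∈ H := hA_le_H x.2
  have main := Subgroup.closure_induction
    (p := fun σ _ => ∀ hA : σ ∈ alternatingGroup (Fin 6),
      (↑(φ ⟨σ, hA⟩) : Equiv.Perm (Fin 6)) = g0⁻¹ * σ * g0)
    (fun σ hσ => by
      simp only [Set.mem_insert_iff, Set.mem_singleton_iff] at hσ
      rcases hσ with rfl | rfl | rfl | rfl <;> intro hA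
      · exact e2
      · exact e3
      · exact e4
      · exact e5)
    (by
      intro hA
      have h1 : (⟨(1 : Equiv.Perm (Fin 6)), hA⟩ : alternatingGroup (Fin 6)) = 1 := rfl
      rw [h1, map_one]
      simp)
    (by
      intro σ τ hσH hτH pσ pτ hA
      have hσA : σ ∈ alternatingGroup (Fin 6) := hH_le_A hσH
      have hτA : τ ∈ alternatingGroup (Fin 6) := hH_le_A hτH
      have hmul : (⟨σ * τ, hA⟩ : alternatingGroup (Fin 6)) = ⟨σ, hσA⟩ * ⟨τ, hτA⟩ := rfl
      rw [hmul, map_mul]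
      have : (↑(φ ⟨σ, hσA⟩ * φ ⟨τ, hτA⟩) : Equiv.Perm (Fin 6)) =
          ↑(φ ⟨σ, hσA⟩) * (↑(φ ⟨τ, hτA⟩) : Equiv.Perm (Fin 6)) := rfl
      rw [this, pσ hσA, pτ hτA]; group)
    (by
      intro σ hσH pσ hA
      have hσA : σ ∈ alternatingGroup (Fin 6) := hH_le_A hσH
      have hinv : (⟨σ⁻¹, hA⟩ : alternatingGroup (Fin 6)) = (⟨σ, hσA⟩ : alternatingGroup (Fin 6))⁻¹ := rfl
      rw [hinv, map_inv]
      have : (↑((φ ⟨σ, hσA⟩)⁻¹) : Equiv.Perm (Fin 6)) =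
          (↑(φ ⟨σ, hσA⟩) : Equiv.Perm (Fin 6))⁻¹ := rfl
      rw [this, pσ hσA]; group)
    hx
  have := main x.2
  simpa using this

lemma coe_ne_one {t : alternatingGroup (Fin 6)} (h : t ≠ 1) :
    (↑t : Equiv.Perm (Fin 6)) ≠ 1 := fun hc => h (Subtype.ext hc)

lemma coe_pow' (t : alternatingGroup (Fin 6)) (n : ℕ) :
    (↑(t^n) : Equiv.Perm (Fin 6)) = (↑t : Equiv.Perm (Fin 6))^n := SubmonoidClass.coe_pow t n

/-- For an automorphism `φ` of `A₆` not induced by conjugation by any element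
of `S₆`, `min_{1 ≠ t ∈ A₆} (|supp t| + |supp (φ t)|) = 8` while
`min_{1 ≠ t ∈ A₆} 2·|supp t| = 6`; hence the twisted permutation code `C(A₆,(id,φ))` has
minimum distance `8 > 6`. -/
theorem twisted_stmt6 (φ : alternatingGroup (Fin 6) ≃* alternatingGroup (Fin 6))
    (hφ : ¬ ∃ g : Equiv.Perm (Fin 6), ∀ t : alternatingGroup (Fin 6),
        (↑(φ t) : Equiv.Perm (Fin 6)) = g⁻¹ * (↑t : Equiv.Perm (Fin 6)) * g) :
    sInf {d : ℕ | ∃ t : alternatingGroup (Fin 6), t ≠ 1 ∧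
        d = (↑t : Equiv.Perm (Fin 6)).support.card
            + (↑(φ t) : Equiv.Perm (Fin 6)).support.card} = 8 ∧
    sInf {d : ℕ | ∃ t : alternatingGroup (Fin 6), t ≠ 1 ∧
        d = 2 * (↑t : Equiv.Perm (Fin 6)).support.card} = 6 := by
  constructor
  · -- first infimum
    have memd : (Equiv.swap 0 1 * Equiv.swap 2 3 : Equiv.Perm (Fin 6)) ∈ alternatingGroup (Fin 6) := by
      rw [Equiv.Perm.mem_alternatingGroup]
      decide
    set d0 : alternatingGroup (Fin 6) := ⟨Equiv.swap 0 1 * Equiv.swap 2 3, memd⟩ with hd0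
    have hne1 : (Equiv.swap 0 1 * Equiv.swap 2 3 : Equiv.Perm (Fin 6)) ≠ 1 := by decide
    have hd0ne : d0 ≠ 1 := fun h => hne1 (congrArg Subtype.val h)
    have h2 : d0^2 = 1 := by
      apply Subtype.ext
      rw [coe_pow']
      show (Equiv.swap 0 1 * Equiv.swap 2 3 : Equiv.Perm (Fin 6))^2 = 1
      decide
    have hq2 : (φ d0)^2 = 1 := by rw [← map_pow, h2, map_one]
    have hφd0ne : φ d0 ≠ 1 := fun h => hd0ne (φ.injective (by rw [h, map_one]))
    have hcard1 : (↑d0 : Equiv.Perm (Fin 6)).support.card = 4 := by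
      show (Equiv.swap 0 1 * Equiv.swap 2 3 : Equiv.Perm (Fin 6)).support.card = 4
      decide
    have hcard2 : (↑(φ d0) : Equiv.Perm (Fin 6)).support.card = 4 := by
      apply supp_of_sq
      · rw [← coe_pow', hq2]; rfl
      · exact coe_ne_one hφd0ne
      · exact (φ d0).2
    have mem8 : 8 ∈ {d : ℕ | ∃ t : alternatingGroup (Fin 6), t ≠ 1 ∧
        d = (↑t : Equiv.Perm (Fin 6)).support.card
            + (↑(φ t) : Equiv.Perm (Fin 6)).support.card} :=
      ⟨d0, hd0ne, by rw [hcard1, hcard2]⟩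
    apply le_antisymm (Nat.sInf_le mem8)
    apply le_csInf ⟨8, mem8⟩
    rintro d ⟨t, ht1, rfl⟩
    have htne := coe_ne_one ht1
    have hφtne := coe_ne_one (fun (h : φ t = 1) => ht1 (φ.injective (by rw [h, map_one])))
    have hs := supp_ge_three _ htne t.2
    have hs' := supp_ge_three _ hφtne (φ t).2
    by_cases h3 : (↑t : Equiv.Perm (Fin 6)).support.card = 3
    · have ht3 : (↑t : Equiv.Perm (Fin 6)).IsThreeCycle := card_support_eq_three_iff.mp h3
      have hcube : (↑(φ t) : Equiv.Perm (Fin 6))^3 = 1 := by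
        have h1 : (↑t : Equiv.Perm (Fin 6))^3 = 1 := by
          have := pow_orderOf_eq_one (↑t : Equiv.Perm (Fin 6))
          rwa [ht3.orderOf] at this
        have h2' : t^3 = 1 := Subtype.ext (by rw [coe_pow']; exact h1)
        rw [← coe_pow', ← map_pow, h2', map_one]; rfl
      have hne3' : (↑(φ t) : Equiv.Perm (Fin 6)).support.card ≠ 3 := by
        intro h3'
        exact hφ (rigid φ t ht3 (card_support_eq_three_iff.mp h3'))
      rcases supp_of_cube _ hcube hφtne with h | h
      · exact absurd h hne3'
      · omega
    · by_cases h3' : (↑(φ t) : Equiv.Perm (Fin 6)).support.card = 3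
      · have hφt3 : (↑(φ t) : Equiv.Perm (Fin 6)).IsThreeCycle := card_support_eq_three_iff.mp h3'
        have hcube : (↑t : Equiv.Perm (Fin 6))^3 = 1 := by
          have h1 : (↑(φ t) : Equiv.Perm (Fin 6))^3 = 1 := by
            have := pow_orderOf_eq_one (↑(φ t) : Equiv.Perm (Fin 6))
            rwa [hφt3.orderOf] at this
          have h2' : (φ t)^3 = 1 := Subtype.ext (by rw [coe_pow']; exact h1)
          have h3'' : t^3 = 1 := φ.injective (by rw [map_pow, h2', map_one])
          rw [← coe_pow', h3'']; rfl
        rcases supp_of_cube _ hcube htne with h | h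
        · exact absurd h h3
        · omega
      · omega
  · -- second infimum
    have hT2ne' : T2 ≠ 1 := by decide
    have hT2ne : (⟨T2, memT2⟩ : alternatingGroup (Fin 6)) ≠ 1 :=
      fun h => hT2ne' (congrArg Subtype.val h)
    have mem6 : 6 ∈ {d : ℕ | ∃ t : alternatingGroup (Fin 6), t ≠ 1 ∧
        d = 2 * (↑t : Equiv.Perm (Fin 6)).support.card} := by
      refine ⟨⟨T2, memT2⟩, hT2ne, ?_⟩
      show 6 = 2 * T2.support.card
      decide
    apply le_antisymm (Nat.sInf_le mem6)
    apply le_csInf ⟨6, mem6⟩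
    rintro d ⟨t, ht1, rfl⟩
    have := supp_ge_three _ (coe_ne_one ht1) t.2
    omega
end

section
/- Let φ be an automorphism of the symmetric group S₆ on the set Q = {1,…,6} with φ∘φ = id and φ not inner. Let C be the twisted permutation code in the Hamming graph H(12,6), i.e. C = { f_t : t ∈ S₆ } where f_t : {1,2} × Q → Q is given by f_t(1,x) = t(x) and f_t(2,x) = φ(t)(x). Let C₁ = { ν : {1,2} × Q → Q | min_{c ∈ C} d(ν,c) = 1 } be the set of neighbours of C. Then C is neighbour transitive: there exists a group G of permutations of the set of functions {1,2} × Q → Q such that every element of G preserves the Hamming distance, C is a single orbit of G, and C₁ is a single orbit of G. -/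
/-- The twisted permutation code `C(S₆,(id,φ))` in the Hamming graph `H(12,6)`:
its codewords are the functions `f_t : {1,2} × Q → Q` with `f_t(1,x) = t(x)` and
`f_t(2,x) = φ(t)(x)`. -/
def twistedCodeS6 (φ : Equiv.Perm (Fin 6) ≃* Equiv.Perm (Fin 6)) :
    Set (Fin 2 × Fin 6 → Fin 6) :=
  {h | ∃ t : Equiv.Perm (Fin 6),
    h = fun p : Fin 2 × Fin 6 => if p.1 = 0 then t p.2 else (φ t) p.2}

/-- The set of neighbours of the code: vertices at minimum distance `1` from the code. -/
def twistedCodeS6Nbrs (φ : Equiv.Perm (Fin 6) ≃* Equiv.Perm (Fin 6)) :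
    Set (Fin 2 × Fin 6 → Fin 6) :=
  {ν | sInf {d : ℕ | ∃ c ∈ twistedCodeS6 φ, d = hammingDist ν c} = 1}

open Equiv Finset

theorem Equiv.Perm.apply_inv_self {α : Type*} (f : Equiv.Perm α) (x : α) : f (f⁻¹ x) = x :=
  f.apply_symm_apply x

abbrev V6 : Type := Fin 2 × Fin 6 → Fin 6

def wreath (π : Perm (Fin 2 × Fin 6)) (α : Fin 2 × Fin 6 → Perm (Fin 6)) : Perm V6 :=
  (Equiv.arrowCongr π (Equiv.refl (Fin 6))).trans (Equiv.piCongrRight α)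

lemma wreath_apply (π : Perm (Fin 2 × Fin 6)) (α : Fin 2 × Fin 6 → Perm (Fin 6))
    (ν : V6) (p : Fin 2 × Fin 6) : wreath π α ν p = α p (ν (π.symm p)) := rfl

lemma wreath_dist (π : Perm (Fin 2 × Fin 6)) (α : Fin 2 × Fin 6 → Perm (Fin 6))
    (u v : V6) : hammingDist (wreath π α u) (wreath π α v) = hammingDist u v := by
  have h1 : hammingDist (wreath π α u) (wreath π α v)
      = hammingDist (fun p => u (π.symm p)) (fun p => v (π.symm p)) :=
    hammingDist_comp (fun p => ⇑(α p)) fun p => (α p).injective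
  rw [h1]
  unfold hammingDist
  exact Finset.card_equiv π.symm (fun i => by simp)

variable (φ : Perm (Fin 6) ≃* Perm (Fin 6))

def fT (t : Perm (Fin 6)) : V6 := fun p => if p.1 = 0 then t p.2 else (φ t) p.2

lemma fT_one : fT φ 1 = fun p => p.2 := by
  funext p; simp [fT]

def Lg (t : Perm (Fin 6)) : Perm V6 := wreath 1 (fun p => if p.1 = 0 then t else φ t)

def rowShear (s : Perm (Fin 6)) : Perm (Fin 2 × Fin 6) :=
  Equiv.prodShear (Equiv.refl (Fin 2)) (fun i => if i = 0 then s else φ s)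

def Sg (s : Perm (Fin 6)) : Perm V6 :=
  wreath (rowShear φ s) (fun p => if p.1 = 0 then s else φ s)

def Tg : Perm V6 := wreath (Equiv.prodCongr (Equiv.swap (0:Fin 2) 1) (Equiv.refl (Fin 6))) 1

lemma Lg_apply (t : Perm (Fin 6)) (ν : V6) (p : Fin 2 × Fin 6) :
    Lg φ t ν p = if p.1 = 0 then t (ν p) else φ t (ν p) := by
  simp [Lg, wreath_apply]; split <;> rfl

lemma Sg_apply (s : Perm (Fin 6)) (ν : V6) (i : Fin 2) (x : Fin 6) :
    Sg φ s ν (i, x) = if i = 0 then s (ν (i, s.symm x)) else φ s (ν (i, (φ s).symm x)) := by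
  simp [Sg, wreath_apply, rowShear]; split <;> simp [*]

lemma Tg_apply (ν : V6) (i : Fin 2) (x : Fin 6) :
    Tg ν (i, x) = ν (Equiv.swap (0:Fin 2) 1 i, x) := by
  simp [Tg, wreath_apply]

lemma Lg_code (t t' : Perm (Fin 6)) : Lg φ t (fT φ t') = fT φ (t * t') := by
  funext p
  rcases p with ⟨i, x⟩
  rw [Lg_apply]
  by_cases hi : i = 0 <;> simp [hi, fT, map_mul]

lemma symm_map (s : Perm (Fin 6)) : Equiv.symm (φ s) = φ (Equiv.symm s) := by
  rw [show Equiv.symm (φ s) = (φ s)⁻¹ from rfl, show Equiv.symm s = s⁻¹ from rfl, map_inv]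

lemma Sg_code (s t : Perm (Fin 6)) : Sg φ s (fT φ t) = fT φ (s * t * s⁻¹) := by
  funext p
  rcases p with ⟨i, x⟩
  rw [Sg_apply]
  by_cases hi : i = 0 <;> simp [hi, fT, map_mul, map_inv, Equiv.Perm.inv_def, symm_map]

lemma Tg_code (hφ2 : ∀ t, φ (φ t) = t) (t : Perm (Fin 6)) : Tg (fT φ t) = fT φ (φ t) := by
  funext p
  rcases p with ⟨i, x⟩
  rw [Tg_apply]
  by_cases hi : i = 0 <;> simp [hi, fT, Equiv.swap_apply_of_ne_of_ne,
    Fin.eq_one_of_ne_zero i, hφ2]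

lemma Lg_inv (t : Perm (Fin 6)) : (Lg φ t)⁻¹ = Lg φ t⁻¹ := by
  apply inv_eq_of_mul_eq_one_right
  apply Equiv.ext
  intro ν
  funext p
  show Lg φ t (Lg φ t⁻¹ ν) p = ν p
  by_cases hi : p.1 = 0 <;> simp [Lg_apply, hi, map_inv]

lemma Sg_inv (s : Perm (Fin 6)) : (Sg φ s)⁻¹ = Sg φ s⁻¹ := by
  apply inv_eq_of_mul_eq_one_right
  apply Equiv.ext
  intro ν
  funext p
  rcases p with ⟨i, x⟩
  show Sg φ s (Sg φ s⁻¹ ν) (i, x) = ν (i, x)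
  by_cases hi : i = 0 <;>
    simp [Sg_apply, hi, Equiv.Perm.inv_def, ← symm_map]

lemma Tg_inv : (Tg)⁻¹ = Tg := by
  apply inv_eq_of_mul_eq_one_right
  apply Equiv.ext
  intro ν
  funext p
  rcases p with ⟨i, x⟩
  show Tg (Tg ν) (i, x) = ν (i, x)
  rw [Tg_apply, Tg_apply, Equiv.swap_apply_self]

def gens : Set (Perm V6) :=
  {g | (∃ t, g = Lg φ t) ∨ (∃ s, g = Sg φ s) ∨ g = Tg}

lemma closure_prop (hφ2 : ∀ t, φ (φ t) = t) :
    ∀ g ∈ Subgroup.closure (gens φ),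
      (∀ u v : V6, hammingDist (g u) (g v) = hammingDist u v) ∧
      (∀ c ∈ twistedCodeS6 φ, g c ∈ twistedCodeS6 φ) ∧
      (∀ c ∈ twistedCodeS6 φ, g⁻¹ c ∈ twistedCodeS6 φ) := by
  intro g hg
  induction hg using Subgroup.closure_induction with
  | mem x hx =>
    have hcode : ∀ y : Perm V6, y ∈ gens φ → ∀ c ∈ twistedCodeS6 φ, y c ∈ twistedCodeS6 φ := by
      rintro y (⟨t, rfl⟩ | ⟨s, rfl⟩ | rfl) c ⟨t', rfl⟩
      · exact ⟨t * t', Lg_code φ t t'⟩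
      · exact ⟨s * t' * s⁻¹, Sg_code φ s t'⟩
      · exact ⟨φ t', Tg_code φ hφ2 t'⟩
    have hinvmem : ∀ y : Perm V6, y ∈ gens φ → y⁻¹ ∈ gens φ := by
      rintro y (⟨t, rfl⟩ | ⟨s, rfl⟩ | rfl)
      · exact Or.inl ⟨t⁻¹, Lg_inv φ t⟩
      · exact Or.inr (Or.inl ⟨s⁻¹, Sg_inv φ s⟩)
      · exact Or.inr (Or.inr Tg_inv)
    refine ⟨?_, hcode x hx, hcode x⁻¹ (hinvmem x hx)⟩
    rcases hx with ⟨t, rfl⟩ | ⟨s, rfl⟩ | rfl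
    · exact wreath_dist _ _
    · exact wreath_dist _ _
    · exact wreath_dist _ _
  | one => exact ⟨fun u v => rfl, fun c hc => hc, fun c hc => by simpa using hc⟩
  | mul x y hx hy ihx ihy =>
    refine ⟨fun u v => ?_, fun c hc => ?_, fun c hc => ?_⟩
    · rw [Equiv.Perm.mul_apply, Equiv.Perm.mul_apply, ihx.1, ihy.1]
    · rw [Equiv.Perm.mul_apply]; exact ihx.2.1 _ (ihy.2.1 _ hc)
    · rw [mul_inv_rev, Equiv.Perm.mul_apply]; exact ihy.2.2 _ (ihx.2.2 _ hc)
  | inv x hx ihx =>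
    refine ⟨fun u v => ?_, ihx.2.2, by simpa using ihx.2.1⟩
    conv_rhs => rw [← Equiv.Perm.apply_inv_self x u, ← Equiv.Perm.apply_inv_self x v, ihx.1]

def nbr (i : Fin 2) (x a : Fin 6) : V6 := fun p => if p = (i, x) then a else p.2

lemma dist_nbr (i : Fin 2) (x a : Fin 6) (h : a ≠ x) :
    hammingDist (nbr i x a) (fT φ 1) = 1 := by
  rw [fT_one]
  show #{p : Fin 2 × Fin 6 | nbr i x a p ≠ p.2} = 1
  rw [Finset.card_eq_one]
  refine ⟨(i, x), ?_⟩
  ext p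
  by_cases hp : p = (i, x) <;> simp [nbr, hp, h]

lemma row_ne (x a : Fin 6) (u : Perm (Fin 6))
    (h : ∀ y : Fin 6, (if y = x then a else y) = u y) (hax : a ≠ x) : False := by
  have h1 := h (u.symm x)
  rw [u.apply_symm_apply] at h1
  by_cases hy : u.symm x = x
  · rw [if_pos hy] at h1; exact hax h1
  · rw [if_neg hy] at h1; exact hy h1

lemma nbr_not_code (i : Fin 2) (x a : Fin 6) (h : a ≠ x) :
    nbr i x a ∉ twistedCodeS6 φ := by
  rintro ⟨t, ht⟩
  by_cases hi : i = 0
  · subst hi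
    refine row_ne x a t (fun y => ?_) h
    have := congrFun ht (0, y)
    simpa [nbr, Prod.ext_iff] using this
  · have hi1 : i = 1 := Fin.eq_one_of_ne_zero i hi
    subst hi1
    refine row_ne x a (φ t) (fun y => ?_) h
    have := congrFun ht (1, y)
    simpa [nbr, Prod.ext_iff] using this

lemma nbr_mem_nbrs (i : Fin 2) (x a : Fin 6) (h : a ≠ x) :
    nbr i x a ∈ twistedCodeS6Nbrs φ := by
  show sInf {d : ℕ | ∃ c ∈ twistedCodeS6 φ, d = hammingDist (nbr i x a) c} = 1
  have h1 : (1 : ℕ) ∈ {d : ℕ | ∃ c ∈ twistedCodeS6 φ, d = hammingDist (nbr i x a) c} :=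
    ⟨fT φ 1, ⟨1, rfl⟩, (dist_nbr φ i x a h).symm⟩
  have h0 : (0 : ℕ) ∉ {d : ℕ | ∃ c ∈ twistedCodeS6 φ, d = hammingDist (nbr i x a) c} := by
    rintro ⟨c, hc, h0⟩
    exact nbr_not_code φ i x a h (hammingDist_eq_zero.mp h0.symm ▸ hc)
  have hle := Nat.sInf_le h1
  have hne : sInf {d : ℕ | ∃ c ∈ twistedCodeS6 φ, d = hammingDist (nbr i x a) c} ≠ 0 := by
    intro hz
    rcases Nat.sInf_eq_zero.mp hz with hz | hz
    · exact h0 hz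
    · rw [hz] at h1; exact h1
  omega

lemma nbrs_dist_one {ν : V6} (hν : ν ∈ twistedCodeS6Nbrs φ) :
    ∃ c ∈ twistedCodeS6 φ, hammingDist ν c = 1 := by
  have hν' : sInf {d : ℕ | ∃ c ∈ twistedCodeS6 φ, d = hammingDist ν c} = 1 := hν
  have hne : {d : ℕ | ∃ c ∈ twistedCodeS6 φ, d = hammingDist ν c}.Nonempty := by
    by_contra hemp
    rw [Set.not_nonempty_iff_eq_empty] at hemp
    rw [hemp, Nat.sInf_empty] at hν'
    exact one_ne_zero hν'.symm
  have := Nat.sInf_mem hne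
  rw [hν'] at this
  obtain ⟨c, hc, hd⟩ := this
  exact ⟨c, hc, hd.symm⟩

lemma nbrs_preserved (g : Perm V6)
    (hd : ∀ u v : V6, hammingDist (g u) (g v) = hammingDist u v)
    (hC : ∀ c ∈ twistedCodeS6 φ, g c ∈ twistedCodeS6 φ)
    (hC' : ∀ c ∈ twistedCodeS6 φ, g⁻¹ c ∈ twistedCodeS6 φ)
    {ν : V6} (hν : ν ∈ twistedCodeS6Nbrs φ) : g ν ∈ twistedCodeS6Nbrs φ := by
  have hsets : {d : ℕ | ∃ c ∈ twistedCodeS6 φ, d = hammingDist (g ν) c}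
      = {d : ℕ | ∃ c ∈ twistedCodeS6 φ, d = hammingDist ν c} := by
    ext d
    constructor
    · rintro ⟨c, hc, rfl⟩
      refine ⟨g⁻¹ c, hC' c hc, ?_⟩
      conv_lhs => rw [← Equiv.Perm.apply_inv_self g c]
      rw [hd]
    · rintro ⟨c, hc, rfl⟩
      exact ⟨g c, hC c hc, (hd ν c).symm⟩
  show sInf _ = 1
  rw [hsets]
  exact hν

lemma Sg_nbr (s : Perm (Fin 6)) (x a : Fin 6) (hs0 : s 0 = x) (hs1 : s 1 = a) :
    Sg φ s (nbr 0 0 1) = nbr 0 x a := by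
  funext p
  rcases p with ⟨i, y⟩
  by_cases hi : i = 0
  · subst hi
    rw [Sg_apply]
    simp only [if_pos rfl]
    by_cases hy : y = x
    · subst hy
      have : s.symm (s 0) = 0 := s.symm_apply_apply 0
      rw [hs0] at this
      simp [nbr, this, hs1]
    · have hsy : s.symm y ≠ 0 := by
        intro hz
        apply hy
        rw [← hs0, ← hz, s.apply_symm_apply]
      simp [nbr, Prod.ext_iff, hsy, hy]
  · have hi1 : i = 1 := Fin.eq_one_of_ne_zero i hi
    subst hi1
    rw [Sg_apply]
    simp [nbr, Prod.ext_iff]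

lemma Tg_nbr (x a : Fin 6) : Tg (nbr 0 x a) = nbr 1 x a := by
  funext p
  rcases p with ⟨i, y⟩
  rw [Tg_apply]
  by_cases hi : i = 0
  · subst hi
    simp [nbr, Equiv.swap_apply_left, Prod.ext_iff]
  · have hi1 : i = 1 := Fin.eq_one_of_ne_zero i hi
    subst hi1
    simp [nbr, Equiv.swap_apply_right, Prod.ext_iff]

lemma exists_s (x a : Fin 6) (h : a ≠ x) :
    ∃ s : Perm (Fin 6), s 0 = x ∧ s 1 = a := by
  refine ⟨Equiv.swap 0 x * Equiv.swap 1 (Equiv.swap 0 x a), ?_, ?_⟩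
  · have hc : Equiv.swap 0 x a ≠ 0 := by
      intro hz
      apply h
      have := congrArg (Equiv.swap 0 x) hz
      rwa [Equiv.swap_apply_self, Equiv.swap_apply_left] at this
    rw [Equiv.Perm.mul_apply, Equiv.swap_apply_of_ne_of_ne (by norm_num) (Ne.symm hc),
      Equiv.swap_apply_left]
  · rw [Equiv.Perm.mul_apply, Equiv.swap_apply_left, Equiv.swap_apply_self]

lemma dist_one_eq_nbr (μ : V6) (h : hammingDist μ (fT φ 1) = 1) :
    ∃ i x a, a ≠ x ∧ μ = nbr i x a := by
  rw [fT_one] at h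
  have h' : #{p : Fin 2 × Fin 6 | μ p ≠ p.2} = 1 := h
  obtain ⟨p₀, hp₀⟩ := Finset.card_eq_one.mp h'
  have hmem : ∀ p : Fin 2 × Fin 6, μ p ≠ p.2 ↔ p = p₀ := by
    intro p
    constructor
    · intro hp
      have : p ∈ ({p : Fin 2 × Fin 6 | μ p ≠ p.2} : Finset _) := by simpa using hp
      rw [hp₀] at this
      simpa using this
    · rintro rfl
      have : p ∈ ({p : Fin 2 × Fin 6 | μ p ≠ p.2} : Finset _) := by
        rw [hp₀]; simp
      simpa using this
  refine ⟨p₀.1, p₀.2, μ p₀, (hmem p₀).mpr rfl, ?_⟩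
  funext p
  by_cases hp : p = p₀
  · subst hp
    simp [nbr]
  · have : μ p = p.2 := by
      by_contra hne
      exact hp ((hmem p).mp hne)
    simp [nbr, hp, this]

lemma Lg_dist (t : Perm (Fin 6)) (u v : V6) :
    hammingDist (Lg φ t u) (Lg φ t v) = hammingDist u v := wreath_dist _ _ u v

/-- For a non-inner involutory automorphism `φ` of `S₆`, the twisted
permutation code `C(S₆,(id,φ))` is neighbour transitive: some group `G` of
Hamming-distance-preserving permutations of the vertex set of `H(12,6)` has both the code
and its set of neighbours as single orbits. -/
theorem twisted_stmt8 (φ : Equiv.Perm (Fin 6) ≃* Equiv.Perm (Fin 6))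
    (hφ2 : ∀ t : Equiv.Perm (Fin 6), φ (φ t) = t)
    (hφ : ¬ ∃ g : Equiv.Perm (Fin 6), ∀ t : Equiv.Perm (Fin 6), φ t = g⁻¹ * t * g) :
    ∃ G : Subgroup (Equiv.Perm (Fin 2 × Fin 6 → Fin 6)),
      (∀ g ∈ G, ∀ u v : Fin 2 × Fin 6 → Fin 6,
        hammingDist (g u) (g v) = hammingDist u v) ∧
      (∃ c : Fin 2 × Fin 6 → Fin 6, twistedCodeS6 φ = MulAction.orbit G c) ∧
      (∃ ν : Fin 2 × Fin 6 → Fin 6, twistedCodeS6Nbrs φ = MulAction.orbit G ν) := by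
  refine ⟨Subgroup.closure (gens φ), ?_, ⟨fT φ 1, ?_⟩, ⟨nbr 0 0 1, ?_⟩⟩
  · intro g hg u v
    exact (closure_prop φ hφ2 g hg).1 u v
  · apply Set.eq_of_subset_of_subset
    · rintro c ⟨t, rfl⟩
      refine ⟨⟨Lg φ t, Subgroup.subset_closure (Or.inl ⟨t, rfl⟩)⟩, ?_⟩
      show Lg φ t (fT φ 1) = _
      rw [Lg_code, mul_one]
      rfl
    · rintro c ⟨⟨g, hg⟩, rfl⟩
      exact (closure_prop φ hφ2 g hg).2.1 _ ⟨1, rfl⟩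
  · apply Set.eq_of_subset_of_subset
    · intro ν hν
      obtain ⟨c, ⟨t, rfl⟩, hd⟩ := nbrs_dist_one φ hν
      have hd' : hammingDist ((Lg φ t)⁻¹ ν) (fT φ 1) = 1 := by
        have h1 := Lg_dist φ t ((Lg φ t)⁻¹ ν) (fT φ 1)
        rw [Equiv.Perm.apply_inv_self, Lg_code, mul_one] at h1
        rw [← h1]
        exact hd
      obtain ⟨i, x, a, hax, hμ⟩ := dist_one_eq_nbr φ _ hd'
      obtain ⟨s, hs0, hs1⟩ := exists_s x a hax
      by_cases hi : i = 0
      · subst hi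
        refine ⟨⟨Lg φ t * Sg φ s,
          mul_mem (Subgroup.subset_closure (Or.inl ⟨t, rfl⟩))
            (Subgroup.subset_closure (Or.inr (Or.inl ⟨s, rfl⟩)))⟩, ?_⟩
        show (Lg φ t * Sg φ s) (nbr 0 0 1) = ν
        rw [Equiv.Perm.mul_apply, Sg_nbr φ s x a hs0 hs1, ← hμ,
          Equiv.Perm.apply_inv_self]
      · have hi1 : i = 1 := Fin.eq_one_of_ne_zero i hi
        subst hi1
        refine ⟨⟨Lg φ t * Tg * Sg φ s,
          mul_mem (mul_mem (Subgroup.subset_closure (Or.inl ⟨t, rfl⟩))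
            (Subgroup.subset_closure (Or.inr (Or.inr rfl))))
            (Subgroup.subset_closure (Or.inr (Or.inl ⟨s, rfl⟩)))⟩, ?_⟩
        show (Lg φ t * Tg * Sg φ s) (nbr 0 0 1) = ν
        rw [Equiv.Perm.mul_apply, Equiv.Perm.mul_apply, Sg_nbr φ s x a hs0 hs1,
          Tg_nbr, ← hμ, Equiv.Perm.apply_inv_self]
    · rintro ν ⟨⟨g, hg⟩, rfl⟩
      have hp := closure_prop φ hφ2 g hg
      exact nbrs_preserved φ g hp.1 hp.2.1 hp.2.2 (nbr_mem_nbrs φ 0 0 1 (by decide))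
end

section
/- Let f ≥ 2, F the finite field of order 2^f, a a generator of the multiplicative group F*, and b = (1+a²)⁻¹. Define the 2×2 matrices over F: x = [[a,0],[0,a⁻¹]], y = [[1,1],[0,1]], z = [[b, b²+b+1],[1, b+1]], each of determinant 1. Then the special linear group SL(2,F) is generated by x, y and z; that is, the subgroup of SL(2,F) generated by {x, y, z} is all of SL(2,F). -/
private def TT {F : Type*} [Field F] (t : F) : Matrix.SpecialLinearGroup (Fin 2) F :=
  ⟨!![1, t; 0, 1], by simp [Matrix.det_fin_two_of]⟩

private def LL {F : Type*} [Field F] (t : F) : Matrix.SpecialLinearGroup (Fin 2) F :=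
  ⟨!![1, 0; t, 1], by simp [Matrix.det_fin_two_of]⟩

/-- Let `F` be the field of order `2^f` with `f ≥ 2`, `a` a generator of
`F*`, and `b = (1+a²)⁻¹`. Then `SL(2,F)` is generated by the matrices
`x = [[a,0],[0,a⁻¹]]`, `y = [[1,1],[0,1]]` and `z = [[b,b²+b+1],[1,b+1]]`. -/
theorem twisted_stmt9 {F : Type*} [Field F] [Fintype F] {f : ℕ} (hf : 2 ≤ f)
    (hF : Fintype.card F = 2 ^ f) (a : F) (ha : a ≠ 0)
    (hgen : orderOf a = 2 ^ f - 1) (b : F) (hb : b = (1 + a ^ 2)⁻¹)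
    (x y z : Matrix.SpecialLinearGroup (Fin 2) F)
    (hx : (x : Matrix (Fin 2) (Fin 2) F) = !![a, 0; 0, a⁻¹])
    (hy : (y : Matrix (Fin 2) (Fin 2) F) = !![1, 1; 0, 1])
    (hz : (z : Matrix (Fin 2) (Fin 2) F) = !![b, b ^ 2 + b + 1; 1, b + 1]) :
    Subgroup.closure {x, y, z} = ⊤ := by
  -- characteristic 2
  have h2 : (2 : F) = 0 := by
    obtain ⟨n, hp, hcard⟩ := FiniteField.card F (ringChar F)
    have hdvd : ringChar F ∣ 2 ^ f := by
      rw [← hF, hcard]; exact dvd_pow_self _ n.2.ne'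
    have hr2 : ringChar F = 2 :=
      (Nat.prime_dvd_prime_iff_eq hp Nat.prime_two).mp (hp.dvd_of_dvd_pow hdvd)
    haveI : CharP F 2 := hr2 ▸ ringChar.charP F
    exact_mod_cast CharP.cast_eq_zero F 2
  have h11 : (1 : F) + 1 = 0 := by linear_combination h2
  haveI : DecidableEq F := Classical.decEq F
  set H := Subgroup.closure ({x, y, z} : Set (Matrix.SpecialLinearGroup (Fin 2) F)) with hH
  have hxH : x ∈ H := Subgroup.subset_closure (by simp)
  have hyH : y ∈ H := Subgroup.subset_closure (by simp)
  have hzH : z ∈ H := Subgroup.subset_closure (by simp)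
  have hT1 : TT (1 : F) = y := Subtype.ext (by rw [hy]; rfl)
  have hconj : ∀ t : F, TT (a ^ 2 * t) = x * TT t * x⁻¹ := by
    intro t
    rw [eq_mul_inv_iff_mul_eq]
    apply Subtype.ext
    simp only [Matrix.SpecialLinearGroup.coe_mul]
    simp only [Matrix.SpecialLinearGroup.coe_mul, TT, hx]
    ext i j
    fin_cases i <;> fin_cases j <;>
      simp [Matrix.mul_apply, Fin.sum_univ_two] <;> field_simp <;> ring
  have hTpow : ∀ m : ℕ, TT ((a ^ 2) ^ m) ∈ H := by
    intro m
    induction m with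
    | zero => rw [pow_zero, hT1]; exact hyH
    | succ m ih =>
        have he : TT ((a ^ 2) ^ (m + 1)) = x * TT ((a ^ 2) ^ m) * x⁻¹ := by
          rw [pow_succ']; exact hconj _
        rw [he]
        exact H.mul_mem (H.mul_mem hxH ih) (H.inv_mem hxH)
  have hTall : ∀ t : F, TT t ∈ H := by
    intro t
    rcases eq_or_ne t 0 with rfl | ht
    · have h1 : TT (0 : F) = 1 := Subtype.ext (by simp [TT, Matrix.one_fin_two])
      rw [h1]; exact H.one_mem
    · set ua : Fˣ := Units.mk0 a ha with hua
      have horder : orderOf ua = Fintype.card Fˣ := by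
        have h1 : orderOf ua = orderOf a := by
          rw [← orderOf_units]; rfl
        rw [Fintype.card_units, hF, ← hgen, h1]
      have htop : Subgroup.zpowers ua = ⊤ := by
        apply Subgroup.eq_top_of_card_eq
        rw [Nat.card_zpowers, horder, Nat.card_eq_fintype_card]
      obtain ⟨k, hk⟩ : ∃ k : ℕ, ua ^ k = Units.mk0 t ht := by
        have := htop ▸ Subgroup.mem_top (Units.mk0 t ht)
        exact mem_powers_iff_mem_zpowers.mpr this
      have hak : a ^ k = t := by
        have := congrArg Units.val hk
        simpa [hua] using this
      have haf : a ^ (2 ^ f) = a := by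
        have hof : 2 ^ f = (2 ^ f - 1) + 1 := by
          have := Nat.one_le_two_pow (n := f); omega
        rw [hof, pow_succ, ← hgen, pow_orderOf_eq_one, one_mul]
      have hk2 : (a ^ 2) ^ (k * 2 ^ (f - 1)) = t := by
        have hff : 2 ^ f = 2 ^ (f - 1) * 2 := by
          rw [← pow_succ]; congr 1; omega
        calc (a ^ 2) ^ (k * 2 ^ (f - 1)) = (a ^ (2 ^ f)) ^ k := by
              rw [← pow_mul, ← pow_mul]; congr 1; rw [hff]; ring
          _ = a ^ k := by rw [haf]
          _ = t := hak
      exact hk2 ▸ hTpow _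
  -- the Weyl element
  have hwmat : ((TT b * z * TT (b + 1) : Matrix.SpecialLinearGroup (Fin 2) F) :
      Matrix (Fin 2) (Fin 2) F) = !![0, 1; 1, 0] := by
    simp only [Matrix.SpecialLinearGroup.coe_mul]
    simp only [Matrix.SpecialLinearGroup.coe_mul, TT, hz]
    ext i j
    fin_cases i <;> fin_cases j <;>
      simp [Matrix.mul_apply, Fin.sum_univ_two] <;>
      first
        | ring1
        | linear_combination b * h2
        | linear_combination (b ^ 2 + b) * h2
        | linear_combination (2 * b ^ 2 + 2 * b) * h2
        | linear_combination (b + 1) * h2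
        | linear_combination h2
  set w : Matrix.SpecialLinearGroup (Fin 2) F := TT b * z * TT (b + 1) with hw
  have hwH : w ∈ H := H.mul_mem (H.mul_mem (hTall b) hzH) (hTall (b + 1))
  have hLw : ∀ t : F, LL t = w * TT t * w := by
    intro t
    apply Subtype.ext
    simp only [Matrix.SpecialLinearGroup.coe_mul]
    simp only [Matrix.SpecialLinearGroup.coe_mul, hwmat, TT, LL]
    ext i j
    fin_cases i <;> fin_cases j <;>
      simp [Matrix.mul_apply, Fin.sum_univ_two]
  have hLall : ∀ t : F, LL t ∈ H := fun t =>
    (hLw t) ▸ H.mul_mem (H.mul_mem hwH (hTall t)) hwH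
  -- generation
  have key : ∀ g : Matrix.SpecialLinearGroup (Fin 2) F,
      (g : Matrix (Fin 2) (Fin 2) F) 1 0 ≠ 0 → g ∈ H := by
    intro g hr
    have hdet : (g : Matrix (Fin 2) (Fin 2) F) 0 0 * (g : Matrix (Fin 2) (Fin 2) F) 1 1 -
        (g : Matrix (Fin 2) (Fin 2) F) 0 1 * (g : Matrix (Fin 2) (Fin 2) F) 1 0 = 1 := by
      have := g.2; rwa [Matrix.det_fin_two] at this
    have hg : g = TT (((g : Matrix (Fin 2) (Fin 2) F) 0 0 - 1) / (g : Matrix (Fin 2) (Fin 2) F) 1 0)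
        * LL ((g : Matrix (Fin 2) (Fin 2) F) 1 0)
        * TT (((g : Matrix (Fin 2) (Fin 2) F) 1 1 - 1) / (g : Matrix (Fin 2) (Fin 2) F) 1 0) := by
      apply Subtype.ext
      simp only [Matrix.SpecialLinearGroup.coe_mul]
      simp only [Matrix.SpecialLinearGroup.coe_mul, TT, LL]
      conv_lhs => rw [Matrix.eta_fin_two (g : Matrix (Fin 2) (Fin 2) F)]
      ext i j
      fin_cases i <;> fin_cases j <;>
        simp [Matrix.mul_apply, Fin.sum_univ_two] <;> field_simp <;>
        first
          | ring1
          | linear_combination hdet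
          | linear_combination - hdet
          | linear_combination (g : Matrix (Fin 2) (Fin 2) F) 1 0 * hdet
          | linear_combination - (g : Matrix (Fin 2) (Fin 2) F) 1 0 * hdet
    rw [hg]
    exact H.mul_mem (H.mul_mem (hTall _) (hLall _)) (hTall _)
  rw [eq_top_iff]
  intro g _
  rcases eq_or_ne ((g : Matrix (Fin 2) (Fin 2) F) 1 0) 0 with hr | hr
  · have hs : (g : Matrix (Fin 2) (Fin 2) F) 1 1 ≠ 0 := by
      intro hs0
      have hd := g.2
      rw [Matrix.det_fin_two, hr, hs0] at hd
      simp at hd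
    have h1 : ((g * LL 1 : Matrix.SpecialLinearGroup (Fin 2) F) :
        Matrix (Fin 2) (Fin 2) F) 1 0 ≠ 0 := by
      simp only [Matrix.SpecialLinearGroup.coe_mul]
      simp only [Matrix.SpecialLinearGroup.coe_mul, LL, Matrix.mul_apply, Fin.sum_univ_two]
      simpa [hr] using hs
    have hLL1 : LL (1 : F) * LL (1 : F) = 1 := by
      apply Subtype.ext
      simp only [Matrix.SpecialLinearGroup.coe_mul]
      simp only [Matrix.SpecialLinearGroup.coe_mul, LL]
      ext i j
      fin_cases i <;> fin_cases j <;>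
        simp [Matrix.mul_apply, Fin.sum_univ_two] <;>
        first
          | ring1
          | linear_combination h2
          | linear_combination h11
    have hgg : g = (g * LL 1) * LL 1 := by rw [mul_assoc, hLL1, mul_one]
    rw [hgg]
    exact H.mul_mem (key _ h1) (hLall 1)
  · exact key g hr
end

section
/- Let f ≥ 2, F the finite field of order 2^f, a a generator of F*, and b = (1+a²)⁻¹. For w ∈ F set u = wa + wb + w and v = w + wa, and define the 3×3 matrices over F: X = [[1,0,0],[0,a,0],[0,0,a⁻¹]], Y_w = [[1,0,v],[0,1,1],[0,0,1]], Z_w = [[1,w,u],[0,b,b²+b+1],[0,1,b+1]], each of determinant 1. Let S_w be the subgroup of SL(3,F) generated by X, Y_w and Z_w. Then S_w is isomorphic to SL(2,F). -/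
open Matrix

namespace Twisted10

variable {F : Type*} [Field F]

/-- upper transvection -/
def um (t : F) : SpecialLinearGroup (Fin 2) F :=
  ⟨!![1, t; 0, 1], by simp [Matrix.det_fin_two_of]⟩

/-- diagonal element -/
def dm (x : Fˣ) : SpecialLinearGroup (Fin 2) F :=
  ⟨!![(x : F), 0; 0, ((x⁻¹ : Fˣ) : F)], by simp [Matrix.det_fin_two_of]⟩

@[simp] lemma um_coe (t : F) : (um t : Matrix (Fin 2) (Fin 2) F) = !![1, t; 0, 1] := rfl
@[simp] lemma dm_coe (x : Fˣ) :
    (dm x : Matrix (Fin 2) (Fin 2) F) = !![(x : F), 0; 0, ((x⁻¹ : Fˣ) : F)] := rfl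

lemma um_zero : (um (0 : F)) = 1 := by
  apply Subtype.ext
  simp [um, Matrix.one_fin_two]

/-- diagonal hom -/
def dmHom : Fˣ →* SpecialLinearGroup (Fin 2) F where
  toFun := dm
  map_one' := by
    apply Subtype.ext
    simp [dm, Matrix.one_fin_two]
  map_mul' x y := by
    apply Subtype.ext
    show (!![((x*y : Fˣ) : F), 0; 0, (((x*y)⁻¹ : Fˣ) : F)] : Matrix (Fin 2) (Fin 2) F) = _
    rw [Matrix.SpecialLinearGroup.coe_mul, dm_coe, dm_coe, Matrix.mul_fin_two]
    push_cast
    ring_nf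


section Rho

variable (h2 : (2 : F) = 0) (s : F ≃+* F) (hs : ∀ x : F, s x ^ 2 = x)

/-- the twisted embedding on matrices -/
def cmat (v : F) (s : F ≃+* F) (A : Matrix (Fin 2) (Fin 2) F) : Matrix (Fin 3) (Fin 3) F :=
  !![1, v * s (A 0 0 * A 1 0), v * s (A 0 1 * A 1 1);
     0, A 0 0, A 0 1;
     0, A 1 0, A 1 1]

lemma det_cmat (v : F) (A : Matrix (Fin 2) (Fin 2) F) :
    (cmat v s A).det = A.det := by
  simp [cmat, Matrix.det_fin_three, Matrix.det_fin_two, Matrix.vecHead, Matrix.vecTail]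

include h2 in
lemma sq_eq_sq {x y : F} (h : x ^ 2 = y ^ 2) : x = y := by
  have h0 : (x - y) ^ 2 = 0 := by linear_combination h + (y ^ 2 - x * y) * h2
  have := pow_eq_zero_iff (n := 2) (by norm_num) |>.mp h0
  exact sub_eq_zero.mp this

include h2 hs in
lemma cmat_mul (v : F) (A B : Matrix (Fin 2) (Fin 2) F) (hA : A.det = 1) :
    cmat v s (A * B) = cmat v s A * cmat v s B := by
  have hA' : A 0 0 * A 1 1 - A 0 1 * A 1 0 = 1 := by
    rw [Matrix.det_fin_two] at hA; exact hA
  have dets : s (A 0 0) * s (A 1 1) - s (A 0 1) * s (A 1 0) = 1 := by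
    have := congrArg s hA'
    simp only [_root_.map_sub, _root_.map_mul, _root_.map_one] at this
    exact this
  have hm : ∀ i j, (A * B) i j = A i 0 * B 0 j + A i 1 * B 1 j := fun i j => by
    rw [Matrix.mul_apply, Fin.sum_univ_two]
  ext i j
  fin_cases i <;> fin_cases j <;>
    simp [cmat, Matrix.mul_apply, Fin.sum_univ_three, hm, Matrix.vecHead, Matrix.vecTail]
  · linear_combination v * s (A 0 0) * s (A 1 0) * hs (B 0 0)
      + v * s (A 0 1) * s (A 1 1) * hs (B 1 0)
      + v * s (B 0 0) * s (B 1 0) * dets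
      + v * s (B 0 0) * s (B 1 0) * s (A 0 1) * s (A 1 0) * h2
  · linear_combination v * s (A 0 0) * s (A 1 0) * hs (B 0 1)
      + v * s (A 0 1) * s (A 1 1) * hs (B 1 1)
      + v * s (B 0 1) * s (B 1 1) * dets
      + v * s (B 0 1) * s (B 1 1) * s (A 0 1) * s (A 1 0) * h2

lemma cmat_one (v : F) : cmat v s (1 : Matrix (Fin 2) (Fin 2) F) = 1 := by
  ext i j
  fin_cases i <;> fin_cases j <;>
    simp [cmat, Matrix.one_apply, Matrix.vecHead, Matrix.vecTail]

/-- the twisted embedding as a monoid hom on SL2 -/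
def rho (h2 : (2 : F) = 0) (s : F ≃+* F) (hs : ∀ x : F, s x ^ 2 = x) (v : F) :
    SpecialLinearGroup (Fin 2) F →* SpecialLinearGroup (Fin 3) F where
  toFun A := ⟨cmat v s (A : Matrix (Fin 2) (Fin 2) F), by rw [det_cmat]; exact A.2⟩
  map_one' := Subtype.ext (by simp [Matrix.SpecialLinearGroup.coe_one, cmat_one])
  map_mul' A B := Subtype.ext (by
    show cmat v s ((A * B : SpecialLinearGroup (Fin 2) F) : Matrix (Fin 2) (Fin 2) F)
      = cmat v s (A : Matrix (Fin 2) (Fin 2) F) * cmat v s (B : Matrix (Fin 2) (Fin 2) F)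
    rw [Matrix.SpecialLinearGroup.coe_mul, cmat_mul h2 s hs v _ _ A.2])

lemma rho_coe (h2 : (2 : F) = 0) (s : F ≃+* F) (hs : ∀ x : F, s x ^ 2 = x) (v : F)
    (A : SpecialLinearGroup (Fin 2) F) :
    (rho h2 s hs v A : Matrix (Fin 3) (Fin 3) F)
      = cmat v s (A : Matrix (Fin 2) (Fin 2) F) := rfl

lemma rho_injective (h2 : (2 : F) = 0) (s : F ≃+* F) (hs : ∀ x : F, s x ^ 2 = x) (v : F) :
    Function.Injective (rho h2 s hs v) := by
  intro A B hAB
  have h : cmat v s (A : Matrix (Fin 2) (Fin 2) F)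
      = cmat v s (B : Matrix (Fin 2) (Fin 2) F) := congrArg Subtype.val hAB
  have e00 : (A : Matrix (Fin 2) (Fin 2) F) 0 0 = (B : Matrix (Fin 2) (Fin 2) F) 0 0 := by
    simpa [cmat, Matrix.vecHead, Matrix.vecTail] using congrFun (congrFun h 1) 1
  have e01 : (A : Matrix (Fin 2) (Fin 2) F) 0 1 = (B : Matrix (Fin 2) (Fin 2) F) 0 1 := by
    simpa [cmat, Matrix.vecHead, Matrix.vecTail] using congrFun (congrFun h 1) 2
  have e10 : (A : Matrix (Fin 2) (Fin 2) F) 1 0 = (B : Matrix (Fin 2) (Fin 2) F) 1 0 := by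
    simpa [cmat, Matrix.vecHead, Matrix.vecTail] using congrFun (congrFun h 2) 1
  have e11 : (A : Matrix (Fin 2) (Fin 2) F) 1 1 = (B : Matrix (Fin 2) (Fin 2) F) 1 1 := by
    simpa [cmat, Matrix.vecHead, Matrix.vecTail] using congrFun (congrFun h 2) 2
  apply Subtype.ext
  rw [Matrix.eta_fin_two (A : Matrix (Fin 2) (Fin 2) F), e00, e01, e10, e11,
    ← Matrix.eta_fin_two]

end Rho

/-- lower transvection -/
def lm (t : F) : SpecialLinearGroup (Fin 2) F :=
  ⟨!![1, 0; t, 1], by simp [Matrix.det_fin_two_of]⟩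

@[simp] lemma lm_coe (t : F) : (lm t : Matrix (Fin 2) (Fin 2) F) = !![1, 0; t, 1] := rfl

section Gen

theorem closure_eq_top (h2 : (2 : F) = 0) (α : Fˣ) (b : F)
    (hpow : ∀ t : F, t ≠ 0 → ∃ k : ℤ, (((α ^ k : Fˣ) : F)) ^ 2 = t)
    (Zb : SpecialLinearGroup (Fin 2) F)
    (hZb : (Zb : Matrix (Fin 2) (Fin 2) F) = !![b, b ^ 2 + b + 1; 1, b + 1]) :
    Subgroup.closure {dm α, um (1 : F), Zb} = ⊤ := by
  set H := Subgroup.closure {dm α, um (1 : F), Zb} with hH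
  have hXH : dm α ∈ H := Subgroup.subset_closure (by simp)
  have hYH : um (1 : F) ∈ H := Subgroup.subset_closure (by simp)
  have hZH : Zb ∈ H := Subgroup.subset_closure (by simp)
  have hdmz : ∀ k : ℤ, dm (α ^ k) ∈ H := fun k => by
    have hzz : dm (α ^ k) = (dmHom α) ^ k := by rw [← map_zpow]; rfl
    rw [hzz]
    exact zpow_mem hXH k
  have hconj : ∀ (g : Fˣ) (t : F), dm g * um t * dm g⁻¹ = um ((g : F) ^ 2 * t) := by
    intro g t
    apply Subtype.ext
    rw [Matrix.SpecialLinearGroup.coe_mul, Matrix.SpecialLinearGroup.coe_mul,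
      dm_coe, dm_coe, um_coe, um_coe, Matrix.mul_fin_two, Matrix.mul_fin_two]
    ext i j
    fin_cases i <;> fin_cases j <;>
      (try simp [Matrix.vecHead, Matrix.vecTail]) <;>
      (try field_simp) <;>
      (try ring)
  have humH : ∀ t : F, um t ∈ H := by
    intro t
    rcases eq_or_ne t 0 with rfl | ht
    · rw [um_zero]; exact one_mem H
    · obtain ⟨k, hk⟩ := hpow t ht
      have hc := hconj (α ^ k) 1
      rw [mul_one, hk] at hc
      rw [← hc]
      have hinvH : dm ((α ^ k)⁻¹) ∈ H := by rw [← _root_.zpow_neg]; exact hdmz (-k)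
      exact mul_mem (mul_mem (hdmz k) hYH) hinvH
  obtain ⟨J, hJ⟩ : ∃ J : SpecialLinearGroup (Fin 2) F,
      (J : Matrix (Fin 2) (Fin 2) F) = !![0, 1; 1, 0] :=
    ⟨⟨!![0, 1; 1, 0], by rw [Matrix.det_fin_two_of]; linear_combination -h2⟩, rfl⟩
  have hJH : J ∈ H := by
    have hJe : J = um b * Zb * um (b + 1) := by
      apply Subtype.ext
      rw [hJ, Matrix.SpecialLinearGroup.coe_mul, Matrix.SpecialLinearGroup.coe_mul,
        um_coe, um_coe, hZb]
      ext i j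
      fin_cases i <;> fin_cases j <;>
        simp [Matrix.mul_apply, Fin.sum_univ_two, Matrix.vecHead, Matrix.vecTail]
      · linear_combination (-b) * h2
      · linear_combination (-2 * b - 2 * b ^ 2) * h2
      · linear_combination (-1 - b) * h2
    rw [hJe]
    exact mul_mem (mul_mem (humH b) hZH) (humH (b + 1))
  have hlmH : ∀ t : F, lm t ∈ H := by
    intro t
    have hlme : lm t = J * um t * J := by
      apply Subtype.ext
      rw [Matrix.SpecialLinearGroup.coe_mul, Matrix.SpecialLinearGroup.coe_mul,
        um_coe, hJ, lm_coe]
      ext i j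
      fin_cases i <;> fin_cases j <;>
        simp [Matrix.mul_apply, Fin.sum_univ_two, Matrix.vecHead, Matrix.vecTail]
    rw [hlme]
    exact mul_mem (mul_mem hJH (humH t)) hJH
  have main : ∀ A : SpecialLinearGroup (Fin 2) F,
      (A : Matrix (Fin 2) (Fin 2) F) 1 0 ≠ 0 → A ∈ H := by
    intro A hr
    have hd : (A : Matrix (Fin 2) (Fin 2) F) 0 0 * (A : Matrix (Fin 2) (Fin 2) F) 1 1
        - (A : Matrix (Fin 2) (Fin 2) F) 0 1 * (A : Matrix (Fin 2) (Fin 2) F) 1 0 = 1 := by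
      have := A.2
      rwa [Matrix.det_fin_two] at this
    have hAe : A = um (((A : Matrix (Fin 2) (Fin 2) F) 0 0 + 1)
          / (A : Matrix (Fin 2) (Fin 2) F) 1 0)
        * lm ((A : Matrix (Fin 2) (Fin 2) F) 1 0)
        * um (((A : Matrix (Fin 2) (Fin 2) F) 1 1 + 1)
          / (A : Matrix (Fin 2) (Fin 2) F) 1 0) := by
      apply Subtype.ext
      rw [Matrix.SpecialLinearGroup.coe_mul, Matrix.SpecialLinearGroup.coe_mul,
        um_coe, um_coe, lm_coe]
      nth_rewrite 1 [Matrix.eta_fin_two (A : Matrix (Fin 2) (Fin 2) F)]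
      ext i j
      fin_cases i <;> fin_cases j <;>
        simp [Matrix.mul_apply, Fin.sum_univ_two, Matrix.vecHead, Matrix.vecTail] <;>
        field_simp
      · linear_combination -h2
      · linear_combination (-2 - (A : Matrix (Fin 2) (Fin 2) F) 0 0
          - (A : Matrix (Fin 2) (Fin 2) F) 1 1) * h2 - hd
      · linear_combination -h2
    rw [hAe]
    exact mul_mem (mul_mem (humH _) (hlmH _)) (humH _)
  rw [Subgroup.eq_top_iff']
  intro A
  by_cases h10 : (A : Matrix (Fin 2) (Fin 2) F) 1 0 = 0
  · have h00 : (A : Matrix (Fin 2) (Fin 2) F) 0 0 ≠ 0 := by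
      have := A.2
      rw [Matrix.det_fin_two, h10] at this
      intro h0
      rw [h0] at this
      simp at this
    have hBmem : lm 1 * A ∈ H := by
      apply main
      have : ((lm 1 * A : SpecialLinearGroup (Fin 2) F) : Matrix (Fin 2) (Fin 2) F) 1 0
          = (A : Matrix (Fin 2) (Fin 2) F) 0 0 + (A : Matrix (Fin 2) (Fin 2) F) 1 0 := by
        rw [Matrix.SpecialLinearGroup.coe_mul, lm_coe]
        simp [Matrix.mul_apply, Fin.sum_univ_two, Matrix.vecHead, Matrix.vecTail]
      rw [this, h10, add_zero]
      exact h00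
    have hsq : lm (1 : F) * lm 1 = 1 := by
      apply Subtype.ext
      rw [Matrix.SpecialLinearGroup.coe_mul, lm_coe, Matrix.SpecialLinearGroup.coe_one,
        Matrix.one_fin_two]
      ext i j
      fin_cases i <;> fin_cases j <;>
        simp [Matrix.mul_apply, Fin.sum_univ_two, Matrix.vecHead, Matrix.vecTail] <;>
        linear_combination h2
    have : A = lm 1 * (lm 1 * A) := by rw [← mul_assoc, hsq, one_mul]
    rw [this]
    exact mul_mem (hlmH 1) hBmem
  · exact main A h10

end Gen

end Twisted10

open Twisted10

/-- Let `F` be the field of order `2^f` with `f ≥ 2`, `a` a generator of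
`F*`, `b = (1+a²)⁻¹`, and for `w ∈ F` set `u = wa+wb+w`, `v = w+wa`. Then the subgroup
`S_w` of `SL(3,F)` generated by `X = [[1,0,0],[0,a,0],[0,0,a⁻¹]]`,
`Y_w = [[1,0,v],[0,1,1],[0,0,1]]` and `Z_w = [[1,w,u],[0,b,b²+b+1],[0,1,b+1]]` is
isomorphic to `SL(2,F)`. -/
theorem twisted_stmt10 {F : Type*} [Field F] [Fintype F] {f : ℕ} (hf : 2 ≤ f)
    (hF : Fintype.card F = 2 ^ f) (a : F) (ha : a ≠ 0)
    (hgen : orderOf a = 2 ^ f - 1) (b : F) (hb : b = (1 + a ^ 2)⁻¹) (w : F)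
    (X Y Z : Matrix.SpecialLinearGroup (Fin 3) F)
    (hX : (X : Matrix (Fin 3) (Fin 3) F) = !![1, 0, 0; 0, a, 0; 0, 0, a⁻¹])
    (hY : (Y : Matrix (Fin 3) (Fin 3) F) = !![1, 0, w + w * a; 0, 1, 1; 0, 0, 1])
    (hZ : (Z : Matrix (Fin 3) (Fin 3) F)
        = !![1, w, w * a + w * b + w; 0, b, b ^ 2 + b + 1; 0, 1, b + 1]) :
    Nonempty (↥(Subgroup.closure {X, Y, Z}) ≃* Matrix.SpecialLinearGroup (Fin 2) F) := by
  classical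
  have hf0 : f ≠ 0 := by omega
  have hchar : ringChar F = 2 := by
    rw [FiniteField.even_card_iff_char_two, hF, Nat.pow_mod]
    simp [hf0]
  haveI : CharP F 2 := ringChar.of_eq hchar
  haveI : Fact (Nat.Prime 2) := ⟨Nat.prime_two⟩
  have h2 : (2 : F) = 0 := by exact_mod_cast CharP.cast_eq_zero F 2
  set s : F ≃+* F := (frobeniusEquiv F 2).symm with hsdef
  have hs : ∀ x : F, s x ^ 2 = x := fun x => frobeniusEquiv_symm_pow_p F 2 x
  have hs2 : ∀ x : F, s (x ^ 2) = x := fun x => by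
    have hfr : frobenius F 2 x = x ^ 2 := rfl
    rw [← hfr]
    exact frobeniusEquiv_symm_apply_frobenius F 2 x
  set v : F := w + w * a with hv
  have hcard4 : 4 ≤ 2 ^ f := by
    calc (4 : ℕ) = 2 ^ 2 := by norm_num
    _ ≤ 2 ^ f := Nat.pow_le_pow_right (by norm_num) hf
  have ha1 : a ≠ 1 := by
    intro h
    rw [h, orderOf_one] at hgen
    omega
  have hA1 : (1 : F) + a ≠ 0 := by
    intro h
    exact ha1 (by linear_combination -h + a * h2)
  have hsq1a : ((1 : F) + a) ^ 2 = 1 + a ^ 2 := by linear_combination a * h2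
  have h1a2 : (1 : F) + a ^ 2 ≠ 0 := by rw [← hsq1a]; exact pow_ne_zero 2 hA1
  have hb0 : b ≠ 0 := by rw [hb]; exact inv_ne_zero h1a2
  have hbrel : b * ((1 : F) + a) ^ 2 = 1 := by
    rw [hsq1a, hb]
    exact inv_mul_cancel₀ h1a2
  set α : Fˣ := Units.mk0 a ha with hα
  -- the SL2 preimages
  have hZbdet : (!![b, b ^ 2 + b + 1; 1, b + 1] : Matrix (Fin 2) (Fin 2) F).det = 1 := by
    rw [Matrix.det_fin_two_of]
    linear_combination -h2
  set Zb : SpecialLinearGroup (Fin 2) F := ⟨!![b, b ^ 2 + b + 1; 1, b + 1], hZbdet⟩ with hZbd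
  have hZbcoe : (Zb : Matrix (Fin 2) (Fin 2) F) = !![b, b ^ 2 + b + 1; 1, b + 1] := rfl
  -- rho images
  have hXr : rho h2 s hs v (dm α) = X := by
    apply Subtype.ext
    rw [rho_coe, hX]
    ext i j
    fin_cases i <;> fin_cases j <;>
      simp [cmat, dm, α, Matrix.vecHead, Matrix.vecTail, Units.val_inv_eq_inv_val]
  have hYr : rho h2 s hs v (um 1) = Y := by
    apply Subtype.ext
    rw [rho_coe, hY]
    ext i j
    fin_cases i <;> fin_cases j <;>
      simp [cmat, um, Matrix.vecHead, Matrix.vecTail]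
  have hsb : s b = ((1 : F) + a)⁻¹ := by
    have hbeq : b = (((1 : F) + a)⁻¹) ^ 2 := by
      rw [inv_pow]
      exact eq_inv_of_mul_eq_one_left hbrel
    rw [hbeq, hs2]
  have key2 : (b ^ 2 + b + 1) * (b + 1) = ((a + b + 1) * ((1 : F) + a)⁻¹) ^ 2 := by
    have e1 : (a + b + 1) ^ 2 = (b ^ 2 + b + 1) * (b + 1) * ((1 : F) + a) ^ 2 := by
      linear_combination (-(b ^ 2)) * hbrel + (a * b + b - (b ^ 2 + b) * (1 + a) ^ 2) * h2
    rw [mul_pow, e1]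
    field_simp
  have hsq2 : s ((b ^ 2 + b + 1) * (b + 1)) = (a + b + 1) * ((1 : F) + a)⁻¹ := by
    rw [key2, hs2]
  have hZr : rho h2 s hs v Zb = Z := by
    apply Subtype.ext
    rw [rho_coe, hZ]
    ext i j
    fin_cases i <;> fin_cases j <;>
      simp [cmat, hZbcoe, hsb, hsq2, Matrix.vecHead, Matrix.vecTail,
        -_root_.map_mul, -_root_.map_add, -_root_.map_pow]
    · -- v * (1+a)⁻¹ = w
      rw [hv]
      field_simp
    · -- v * ((a+b+1) * (1+a)⁻¹) = w*a + w*b + w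
      rw [hv]
      field_simp
  -- generation hypothesis
  have hpow : ∀ t : F, t ≠ 0 → ∃ k : ℤ, (((α ^ k : Fˣ) : F)) ^ 2 = t := by
    have hαord : orderOf α = 2 ^ f - 1 := by
      rw [← orderOf_units]
      exact hgen
    have hodd : Nat.Coprime (orderOf α) 2 := by
      rw [hαord, Nat.coprime_comm]
      refine (Nat.prime_two.coprime_iff_not_dvd).mpr ?_
      intro hdvd
      have h0 : 2 ^ f % 2 = 0 := by rw [Nat.pow_mod]; simp [hf0]
      omega
    have hord2 : orderOf (α ^ 2) = 2 ^ f - 1 := by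
      rw [hodd.orderOf_pow, hαord]
    have hcardu : Nat.card Fˣ = 2 ^ f - 1 := by
      rw [Nat.card_eq_fintype_card, Fintype.card_units, hF]
    have htopu : Subgroup.zpowers (α ^ 2) = ⊤ := by
      apply Subgroup.eq_top_of_card_eq
      rw [Nat.card_zpowers, hord2, hcardu]
    intro t ht
    have : Units.mk0 t ht ∈ Subgroup.zpowers (α ^ 2) := htopu ▸ Subgroup.mem_top _
    obtain ⟨k, hk⟩ := this
    refine ⟨k, ?_⟩
    have hcomm : (α ^ k) ^ (2 : ℕ) = (α ^ (2 : ℕ)) ^ k := by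
      rw [← zpow_natCast (α ^ k) 2, ← zpow_natCast α 2, ← _root_.zpow_mul, ← _root_.zpow_mul,
        mul_comm]
    have : ((α ^ k) ^ (2 : ℕ) : Fˣ) = Units.mk0 t ht := by rw [hcomm]; exact_mod_cast hk
    calc (((α ^ k : Fˣ) : F)) ^ 2 = (((α ^ k) ^ (2 : ℕ) : Fˣ) : F) := by push_cast; ring
    _ = t := by rw [this]; rfl
  have htop := closure_eq_top h2 α b hpow Zb hZbcoe
  have himg : Subgroup.closure {X, Y, Z} = (rho h2 s hs v).range := by
    rw [← hXr, ← hYr, ← hZr]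
    have himage : ({rho h2 s hs v (dm α), rho h2 s hs v (um 1), rho h2 s hs v Zb} :
        Set (SpecialLinearGroup (Fin 3) F)) = (rho h2 s hs v) '' {dm α, um (1 : F), Zb} := by
      simp [Set.image_insert_eq]
    rw [himage, ← MonoidHom.map_closure, htop, ← MonoidHom.range_eq_map]
  exact ⟨(MulEquiv.subgroupCongr himg).trans
    (MonoidHom.ofInjective (rho_injective h2 s hs v)).symm⟩
end

section
/- With F, a, b, S_w as in the standing setup, for n = (v₁,v₂) ∈ F² let e(n) = [[1,v₁,v₂],[0,1,0],[0,0,1]] ∈ SL(3,F), let E = {e(n) : n ∈ F²}, and let G be the subgroup of SL(3,F) generated by E together with X, Y₀ and Z₀. Then for every w ∈ F: E is a subgroup of G normalized by S_w, E ∩ S_w = {1}, and G = E·S_w; that is, S_w is a complement of the normal subgroup E in G. -/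
/-- The matrix `X = [[1,0,0],[0,a,0],[0,0,a⁻¹]]`. -/
def Xmat (F : Type*) [Field F] (a : F) : Matrix (Fin 3) (Fin 3) F :=
  !![1, 0, 0; 0, a, 0; 0, 0, a⁻¹]

/-- The matrix `Y_w = [[1,0,v],[0,1,1],[0,0,1]]` with `v = w + wa`. -/
def Ymat (F : Type*) [Field F] (a w : F) : Matrix (Fin 3) (Fin 3) F :=
  !![1, 0, w + w * a; 0, 1, 1; 0, 0, 1]

/-- The matrix `Z_w = [[1,w,u],[0,b,b²+b+1],[0,1,b+1]]` with `u = wa + wb + w`. -/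
def Zmat (F : Type*) [Field F] (a b w : F) : Matrix (Fin 3) (Fin 3) F :=
  !![1, w, w * a + w * b + w; 0, b, b ^ 2 + b + 1; 0, 1, b + 1]

/-- The matrix `e(n) = [[1,v₁,v₂],[0,1,0],[0,0,1]]` for `n = (v₁,v₂) ∈ F²`. -/
def eMat (F : Type*) [Field F] (v₁ v₂ : F) : Matrix (Fin 3) (Fin 3) F :=
  !![1, v₁, v₂; 0, 1, 0; 0, 0, 1]

/-- The subgroup `S_w` of `SL(3,F)` generated by `X`, `Y_w` and `Z_w`. -/
def Ssub (F : Type*) [Field F] (a b w : F) :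
    Subgroup (Matrix.SpecialLinearGroup (Fin 3) F) :=
  Subgroup.closure {g | (g : Matrix (Fin 3) (Fin 3) F) = Xmat F a ∨
    (g : Matrix (Fin 3) (Fin 3) F) = Ymat F a w ∨
    (g : Matrix (Fin 3) (Fin 3) F) = Zmat F a b w}

/-- The set `E = {e(n) : n ∈ F²}` inside `SL(3,F)`. -/
def ESet (F : Type*) [Field F] : Set (Matrix.SpecialLinearGroup (Fin 3) F) :=
  {g | ∃ v₁ v₂ : F, (g : Matrix (Fin 3) (Fin 3) F) = eMat F v₁ v₂}

/-- The subgroup `G` of `SL(3,F)` generated by `E` together with `X`, `Y₀` and `Z₀`. -/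
def Gsub (F : Type*) [Field F] (a b : F) :
    Subgroup (Matrix.SpecialLinearGroup (Fin 3) F) :=
  Subgroup.closure (ESet F ∪ {g | (g : Matrix (Fin 3) (Fin 3) F) = Xmat F a ∨
    (g : Matrix (Fin 3) (Fin 3) F) = Ymat F a 0 ∨
    (g : Matrix (Fin 3) (Fin 3) F) = Zmat F a b 0})

open Matrix

namespace TwistedAux

variable {F : Type*} [Field F]

/-- `e(v₁,v₂)` as an element of `SL(3,F)`. -/
def esl (F : Type*) [Field F] (v₁ v₂ : F) : Matrix.SpecialLinearGroup (Fin 3) F :=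
  ⟨eMat F v₁ v₂, by simp [eMat, Matrix.det_fin_three, Matrix.vecHead, Matrix.vecTail]⟩

lemma esl_coe (v₁ v₂ : F) : (esl F v₁ v₂ : Matrix (Fin 3) (Fin 3) F) = eMat F v₁ v₂ := rfl

/-- The subgroup of `SL(3,F)` with carrier `ESet F`. -/
def Esub (F : Type*) [Field F] : Subgroup (Matrix.SpecialLinearGroup (Fin 3) F) where
  carrier := ESet F
  one_mem' := ⟨0, 0, by
    ext i j
    fin_cases i <;> fin_cases j <;>
      simp [eMat, Matrix.SpecialLinearGroup.coe_one, Matrix.one_fin_three, Matrix.vecHead, Matrix.vecTail]⟩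
  mul_mem' := by
    rintro x y ⟨v₁, v₂, hx⟩ ⟨u₁, u₂, hy⟩
    refine ⟨v₁ + u₁, v₂ + u₂, ?_⟩
    rw [Matrix.SpecialLinearGroup.coe_mul, hx, hy]
    ext i j
    fin_cases i <;> fin_cases j <;>
      simp [eMat, Matrix.mul_apply, Fin.sum_univ_three, Matrix.vecHead, Matrix.vecTail] <;> ring
  inv_mem' := by
    rintro x ⟨v₁, v₂, hx⟩
    refine ⟨-v₁, -v₂, ?_⟩
    rw [Matrix.SpecialLinearGroup.coe_inv, hx]
    ext i j
    fin_cases i <;> fin_cases j <;>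
      simp [eMat, Matrix.adjugate_fin_three, Matrix.vecHead, Matrix.vecTail] <;> ring

lemma mem_Esub {x : Matrix.SpecialLinearGroup (Fin 3) F} :
    x ∈ Esub F ↔ ∃ v₁ v₂ : F, (x : Matrix (Fin 3) (Fin 3) F) = eMat F v₁ v₂ := Iff.rfl

/-- determinant of a block matrix in our parabolic. -/
lemma block_det (g : Matrix.SpecialLinearGroup (Fin 3) F) (m₁ m₂ A B C D : F)
    (hg : (g : Matrix (Fin 3) (Fin 3) F) = !![1, m₁, m₂; 0, A, B; 0, C, D]) :
    A * D - B * C = 1 := by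
  have h := g.2
  rw [hg, Matrix.det_fin_three] at h
  simp [Matrix.vecHead, Matrix.vecTail] at h
  linear_combination h

/-- The inverse of a block element is a block element, explicitly. -/
lemma coe_inv_block (g : Matrix.SpecialLinearGroup (Fin 3) F) (m₁ m₂ A B C D : F)
    (hg : (g : Matrix (Fin 3) (Fin 3) F) = !![1, m₁, m₂; 0, A, B; 0, C, D]) :
    ((g⁻¹ : Matrix.SpecialLinearGroup (Fin 3) F) : Matrix (Fin 3) (Fin 3) F) =
      !![1, m₂ * C - m₁ * D, m₁ * B - m₂ * A; 0, D, -B; 0, -C, A] := by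
  have hdet := block_det g m₁ m₂ A B C D hg
  rw [Matrix.SpecialLinearGroup.coe_inv, hg]
  ext i j
  fin_cases i <;> fin_cases j <;>
    simp [Matrix.adjugate_fin_three, Matrix.vecHead, Matrix.vecTail] <;>
    first | ring1 | linear_combination hdet

/-- Conjugation of `E` by a block element stays in `E`. -/
lemma conj_mem_Esub (g x : Matrix.SpecialLinearGroup (Fin 3) F) (m₁ m₂ A B C D : F)
    (hg : (g : Matrix (Fin 3) (Fin 3) F) = !![1, m₁, m₂; 0, A, B; 0, C, D])
    (hx : x ∈ Esub F) : g * x * g⁻¹ ∈ Esub F := by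
  obtain ⟨v₁, v₂, hx⟩ := hx
  have hdet := block_det g m₁ m₂ A B C D hg
  have hinv := coe_inv_block g m₁ m₂ A B C D hg
  refine ⟨v₁ * D - v₂ * C, v₂ * A - v₁ * B, ?_⟩
  rw [Matrix.SpecialLinearGroup.coe_mul, Matrix.SpecialLinearGroup.coe_mul, hg, hx, hinv]
  ext i j
  fin_cases i <;> fin_cases j <;>
    simp [eMat, Matrix.mul_apply, Fin.sum_univ_three, Matrix.vecHead, Matrix.vecTail] <;>
    first | ring1 | linear_combination hdet | linear_combination (-1 : F) * hdet

/-- Any block element normalizes `E`. -/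
lemma block_mem_normalizer (g : Matrix.SpecialLinearGroup (Fin 3) F) (m₁ m₂ A B C D : F)
    (hg : (g : Matrix (Fin 3) (Fin 3) F) = !![1, m₁, m₂; 0, A, B; 0, C, D]) :
    g ∈ Subgroup.normalizer (Esub F : Set (Matrix.SpecialLinearGroup (Fin 3) F)) := by
  rw [Subgroup.mem_normalizer_iff]
  intro x
  constructor
  · exact fun hx => conj_mem_Esub g x m₁ m₂ A B C D hg hx
  · intro hx
    have h := conj_mem_Esub g⁻¹ (g * x * g⁻¹) _ _ _ _ _ _
      (coe_inv_block g m₁ m₂ A B C D hg) hx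
    rwa [show g⁻¹ * (g * x * g⁻¹) * g⁻¹⁻¹ = x by group] at h

end TwistedAux

namespace TwistedAux

variable {F : Type*} [Field F]

/-- Membership predicate for the twisted complement: block-upper-triangular matrices
whose lower block is an entrywise square with square-root matrix of determinant one,
and whose translation part is given by the twisted cocycle. -/
def Cpred (k : F) (g : Matrix.SpecialLinearGroup (Fin 3) F) : Prop :=
  ∃ α β γ δ : F, α * δ + β * γ = 1 ∧
    (g : Matrix (Fin 3) (Fin 3) F) =
      !![1, k * (α * γ), k * (β * δ); 0, α ^ 2, β ^ 2; 0, γ ^ 2, δ ^ 2]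

lemma Cpred_mul (h2 : (2 : F) = 0) {k : F} {x y : Matrix.SpecialLinearGroup (Fin 3) F}
    (hx : Cpred k x) (hy : Cpred k y) : Cpred k (x * y) := by
  obtain ⟨α, β, γ, δ, hA, hxm⟩ := hx
  obtain ⟨p, q, r, s, hB, hym⟩ := hy
  refine ⟨α * p + β * r, α * q + β * s, γ * p + δ * r, γ * q + δ * s, ?_, ?_⟩
  · linear_combination (p * s + q * r) * hA + hB + (α * γ * p * q + β * δ * r * s) * h2
  · rw [Matrix.SpecialLinearGroup.coe_mul, hxm, hym]
    ext i j
    fin_cases i <;> fin_cases j <;>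
      simp [Matrix.mul_apply, Fin.sum_univ_three, Matrix.vecHead, Matrix.vecTail] <;>
      first
        | ring1
        | linear_combination (-(k * p * r)) * hA
        | linear_combination (-(k * q * s)) * hA
        | linear_combination (-(α * β * p * r)) * h2
        | linear_combination (-(α * β * q * s)) * h2
        | linear_combination (-(γ * δ * p * r)) * h2
        | linear_combination (-(γ * δ * q * s)) * h2

lemma Cpred_inv (h2 : (2 : F) = 0) {k : F} {x : Matrix.SpecialLinearGroup (Fin 3) F}
    (hx : Cpred k x) : Cpred k x⁻¹ := by
  obtain ⟨α, β, γ, δ, hA, hxm⟩ := hx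
  have hinv := coe_inv_block x (k * (α * γ)) (k * (β * δ)) (α ^ 2) (β ^ 2) (γ ^ 2) (δ ^ 2) hxm
  refine ⟨δ, β, γ, α, by linear_combination hA, ?_⟩
  rw [hinv]
  ext i j
  fin_cases i <;> fin_cases j <;>
    simp [Matrix.vecHead, Matrix.vecTail] <;>
    first
      | ring1
      | linear_combination (k * γ * δ) * hA - (k * α * γ * δ * δ) * h2
      | linear_combination (k * α * β) * hA - (k * α * β * α * δ) * h2
      | linear_combination (-(β ^ 2)) * h2
      | linear_combination (-(γ ^ 2)) * h2

end TwistedAux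

/-- For every `w ∈ F`, the set `E` is (the carrier of) a subgroup of `G`
normalized by `S_w` (indeed normal in `G`), `E ∩ S_w = 1`, and `G = E·S_w`; that is, `S_w`
is a complement of the normal subgroup `E` in `G`. -/
theorem twisted_stmt11 {F : Type*} [Field F] [Fintype F] {f : ℕ} (hf : 2 ≤ f)
    (hF : Fintype.card F = 2 ^ f) (a : F) (ha : a ≠ 0)
    (hgen : orderOf a = 2 ^ f - 1) (b : F) (hb : b = (1 + a ^ 2)⁻¹) (w : F) :
    ∃ E : Subgroup (Matrix.SpecialLinearGroup (Fin 3) F),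
      (E : Set (Matrix.SpecialLinearGroup (Fin 3) F)) = ESet F ∧
      E ≤ Gsub F a b ∧
      Ssub F a b w ≤ Gsub F a b ∧
      (∀ s ∈ Ssub F a b w, ∀ x ∈ E, s * x * s⁻¹ ∈ E) ∧
      (∀ g ∈ Gsub F a b, ∀ x ∈ E, g * x * g⁻¹ ∈ E) ∧
      (E ⊓ Ssub F a b w = ⊥) ∧
      (∀ g ∈ Gsub F a b, ∃ x ∈ E, ∃ s ∈ Ssub F a b w, g = x * s) := by
  classical
  open TwistedAux in
  -- characteristic 2
  have h2 : (2 : F) = 0 := by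
    have hc : ((Fintype.card F : ℕ) : F) = 0 := FiniteField.cast_card_eq_zero F
    rw [hF] at hc
    push_cast at hc
    exact pow_eq_zero_iff (by omega) |>.mp hc
  have ha1 : a ≠ 1 := by
    intro h
    rw [h, orderOf_one] at hgen
    have h4 : (4:ℕ) ≤ 2 ^ f := by
      calc (4:ℕ) = 2 ^ 2 := rfl
        _ ≤ 2 ^ f := Nat.pow_le_pow_right (by norm_num) hf
    omega
  have ht : (1 : F) + a ≠ 0 := fun h => ha1 (by linear_combination h - h2)
  have hst : ((1 : F) + a) * (1 + a)⁻¹ = 1 := mul_inv_cancel₀ ht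
  have hbt : b = ((1 + a)⁻¹) ^ 2 := by
    rw [hb, show (1 : F) + a ^ 2 = (1 + a) ^ 2 by linear_combination (-(a)) * h2, ← inv_pow]
  -- square roots exist
  have sqsurj : ∀ z : F, ∃ r : F, r ^ 2 = z := by
    have hinj : Function.Injective (fun x : F => x ^ 2) := by
      intro x y hxy
      simp only at hxy
      have hs : (x - y) ^ 2 = 0 := by linear_combination hxy + (y ^ 2 - x * y) * h2
      have := pow_eq_zero_iff (n := 2) (by norm_num) |>.mp hs
      exact sub_eq_zero.mp this
    intro z
    exact Finite.surjective_of_injective hinj z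
  -- determinants
  have hdetY : ∀ u : F, (Ymat F a u).det = 1 := by
    intro u
    simp [Ymat, Matrix.det_fin_three, Matrix.vecHead, Matrix.vecTail]
  have hdetZ : ∀ u : F, (Zmat F a b u).det = 1 := by
    intro u
    rw [Matrix.det_fin_three]
    simp [Zmat, Matrix.vecHead, Matrix.vecTail]
    linear_combination -h2
  -- elements
  set Yel : Matrix.SpecialLinearGroup (Fin 3) F := ⟨Ymat F a w, hdetY w⟩ with hYel
  set Zel : Matrix.SpecialLinearGroup (Fin 3) F := ⟨Zmat F a b w, hdetZ w⟩ with hZel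
  set Y0el : Matrix.SpecialLinearGroup (Fin 3) F := ⟨Ymat F a 0, hdetY 0⟩ with hY0el
  set Z0el : Matrix.SpecialLinearGroup (Fin 3) F := ⟨Zmat F a b 0, hdetZ 0⟩ with hZ0el
  have hYelS : Yel ∈ Ssub F a b w := Subgroup.subset_closure (Or.inr (Or.inl rfl))
  have hZelS : Zel ∈ Ssub F a b w := Subgroup.subset_closure (Or.inr (Or.inr rfl))
  have hY0G : Y0el ∈ Gsub F a b := Subgroup.subset_closure (Or.inr (Or.inr (Or.inl rfl)))
  have hZ0G : Z0el ∈ Gsub F a b := Subgroup.subset_closure (Or.inr (Or.inr (Or.inr rfl)))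
  -- decomposition identities
  have hYdec : Ymat F a w = eMat F 0 (w + w * a) * Ymat F a 0 := by
    ext i j
    fin_cases i <;> fin_cases j <;>
      simp [eMat, Ymat, Matrix.mul_apply, Fin.sum_univ_three, Matrix.vecHead,
        Matrix.vecTail] <;> ring
  have hZdec : Zmat F a b w = eMat F (w * a) (w + w * a * b) * Zmat F a b 0 := by
    ext i j
    fin_cases i <;> fin_cases j <;>
      simp [eMat, Zmat, Matrix.mul_apply, Fin.sum_univ_three, Matrix.vecHead,
        Matrix.vecTail] <;>
      first
        | ring1
        | linear_combination (-(w * a * b)) * h2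
        | linear_combination (-(w * a * b ^ 2 + w * a * b)) * h2
  have hY0dec : Ymat F a 0 = eMat F 0 (w + w * a) * Ymat F a w := by
    ext i j
    fin_cases i <;> fin_cases j <;>
      simp [eMat, Ymat, Matrix.mul_apply, Fin.sum_univ_three, Matrix.vecHead,
        Matrix.vecTail] <;>
      first
        | ring1
        | linear_combination (-(w + w * a)) * h2
  have hZ0dec : Zmat F a b 0 = eMat F (w * a) (w + w * a * b) * Zmat F a b w := by
    ext i j
    fin_cases i <;> fin_cases j <;>
      simp [eMat, Zmat, Matrix.mul_apply, Fin.sum_univ_three, Matrix.vecHead,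
        Matrix.vecTail] <;>
      first
        | ring1
        | linear_combination (-(w + w * a * b)) * h2
        | linear_combination (-(w * a + w * b + w + w * a * b ^ 2 + w * a * b)) * h2
  -- S_w ≤ G
  have hSG : Ssub F a b w ≤ Gsub F a b := by
    apply (Subgroup.closure_le _).mpr
    rintro g (hg | hg | hg)
    · exact Subgroup.subset_closure (Or.inr (Or.inl hg))
    · have hdec : g = esl F 0 (w + w * a) * Y0el := by
        apply Subtype.ext
        rw [Matrix.SpecialLinearGroup.coe_mul, hg, esl_coe]
        exact hYdec
      rw [hdec]
      exact mul_mem (Subgroup.subset_closure (Or.inl ⟨0, w + w * a, rfl⟩)) hY0G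
    · have hdec : g = esl F (w * a) (w + w * a * b) * Z0el := by
        apply Subtype.ext
        rw [Matrix.SpecialLinearGroup.coe_mul, hg, esl_coe]
        exact hZdec
      rw [hdec]
      exact mul_mem (Subgroup.subset_closure (Or.inl ⟨w * a, w + w * a * b, rfl⟩)) hZ0G
  -- G normalizes E
  have hGnorm : Gsub F a b ≤ Subgroup.normalizer (Esub F : Set (Matrix.SpecialLinearGroup (Fin 3) F)) := by
    apply (Subgroup.closure_le _).mpr
    rintro g (hg | hg | hg | hg)
    · exact Subgroup.le_normalizer (H := Esub F) hg
    · exact block_mem_normalizer g 0 0 a 0 0 a⁻¹ hg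
    · exact block_mem_normalizer g 0 (0 + 0 * a) 1 1 0 1 hg
    · exact block_mem_normalizer g 0 (0 * a + 0 * b + 0) b (b ^ 2 + b + 1) 1 (b + 1) hg
  -- S_w lies in the cocycle set
  have hSC : ∀ g ∈ Ssub F a b w, Cpred (w * (1 + a)) g := by
    intro g hg
    refine Subgroup.closure_induction (p := fun g _ => Cpred (w * (1 + a)) g)
      ?_ ?_ ?_ ?_ hg
    · rintro x (hx | hx | hx)
      · obtain ⟨r, hr⟩ := sqsurj a
        have hr0 : r ≠ 0 := fun h => ha (by rw [← hr, h]; ring)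
        refine ⟨r, 0, 0, r⁻¹, by field_simp; ring, ?_⟩
        rw [hx]
        ext i j
        fin_cases i <;> fin_cases j <;>
          simp [Xmat, Matrix.vecHead, Matrix.vecTail] <;>
          first
            | ring1
            | linear_combination -hr
            | rw [inv_pow, hr]
      · refine ⟨1, 1, 0, 1, by ring, ?_⟩
        rw [hx]
        ext i j
        fin_cases i <;> fin_cases j <;>
          simp [Ymat, Matrix.vecHead, Matrix.vecTail] <;> ring
      · obtain ⟨s, hs, hbs⟩ : ∃ s : F, (1 + a) * s = 1 ∧ b = s ^ 2 := ⟨(1 + a)⁻¹, hst, hbt⟩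
        refine ⟨s, b + s + 1, 1, s + 1, ?_, ?_⟩
        · rw [hbs]; linear_combination (s ^ 2 + s) * h2
        · rw [hx, hbs]
          ext i j
          fin_cases i <;> fin_cases j <;>
            simp [Zmat, Matrix.vecHead, Matrix.vecTail] <;>
            first
              | ring1
              | linear_combination (-(w)) * hs
              | linear_combination (-(w * s ^ 2)) * hs + (-(w * (1 + a) * (s ^ 2 + s))) * h2
              | linear_combination (-(s ^ 3 + s ^ 2 + s)) * h2
              | linear_combination (-(s)) * h2
    · exact ⟨1, 0, 0, 1, by ring, by
        ext i j
        fin_cases i <;> fin_cases j <;>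
          simp [Matrix.SpecialLinearGroup.coe_one, Matrix.one_fin_three,
            Matrix.vecHead, Matrix.vecTail]⟩
    · exact fun x y _ _ hx hy => Cpred_mul h2 hx hy
    · exact fun x _ hx => Cpred_inv h2 hx
  refine ⟨Esub F, rfl, ?_, hSG, ?_, ?_, ?_, ?_⟩
  · rintro x ⟨v₁, v₂, hx⟩
    exact Subgroup.subset_closure (Or.inl ⟨v₁, v₂, hx⟩)
  · intro s hs x hx
    exact (Subgroup.mem_normalizer_iff.mp (hGnorm (hSG hs)) x).mp hx
  · intro g hg x hx
    exact (Subgroup.mem_normalizer_iff.mp (hGnorm hg) x).mp hx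
  · rw [eq_bot_iff]
    intro x hx
    rw [Subgroup.mem_inf] at hx
    obtain ⟨⟨v₁, v₂, hxe⟩, hxS⟩ := hx
    obtain ⟨α, β, γ, δ, hA, hm⟩ := hSC x hxS
    have hme := hxe.symm.trans hm
    have hβ : β = 0 := by
      have h12 : (0 : F) = β ^ 2 := by
        have := congrFun (congrFun hme 1) 2
        simpa [eMat, Matrix.vecHead, Matrix.vecTail] using this
      exact pow_eq_zero_iff (n := 2) (by norm_num) |>.mp h12.symm
    have hγ : γ = 0 := by
      have h21 : (0 : F) = γ ^ 2 := by
        have := congrFun (congrFun hme 2) 1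
        simpa [eMat, Matrix.vecHead, Matrix.vecTail] using this
      exact pow_eq_zero_iff (n := 2) (by norm_num) |>.mp h21.symm
    have hv₁ : v₁ = 0 := by
      have h01 : v₁ = w * (1 + a) * (α * γ) := by
        have := congrFun (congrFun hme 0) 1
        simpa [eMat, Matrix.vecHead, Matrix.vecTail] using this
      rw [h01, hγ]; ring
    have hv₂ : v₂ = 0 := by
      have h02 : v₂ = w * (1 + a) * (β * δ) := by
        have := congrFun (congrFun hme 0) 2
        simpa [eMat, Matrix.vecHead, Matrix.vecTail] using this
      rw [h02, hβ]; ring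
    rw [Subgroup.mem_bot]
    apply Subtype.ext
    rw [hxe, hv₁, hv₂, Matrix.SpecialLinearGroup.coe_one]
    ext i j
    fin_cases i <;> fin_cases j <;>
      simp [eMat, Matrix.one_fin_three, Matrix.vecHead, Matrix.vecTail]
  · intro g hg
    refine Subgroup.closure_induction
      (p := fun g _ => ∃ x ∈ Esub F, ∃ s ∈ Ssub F a b w, g = x * s) ?_ ?_ ?_ ?_ hg
    · rintro x (hx | hx | hx | hx)
      · exact ⟨x, hx, 1, one_mem _, (mul_one x).symm⟩
      · exact ⟨1, one_mem _, x, Subgroup.subset_closure (Or.inl hx), (one_mul x).symm⟩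
      · refine ⟨esl F 0 (w + w * a), ⟨0, w + w * a, rfl⟩, Yel, hYelS, ?_⟩
        apply Subtype.ext
        rw [Matrix.SpecialLinearGroup.coe_mul, hx, esl_coe]
        exact hY0dec
      · refine ⟨esl F (w * a) (w + w * a * b), ⟨w * a, w + w * a * b, rfl⟩, Zel, hZelS, ?_⟩
        apply Subtype.ext
        rw [Matrix.SpecialLinearGroup.coe_mul, hx, esl_coe]
        exact hZ0dec
    · exact ⟨1, one_mem _, 1, one_mem _, (one_mul 1).symm⟩
    · rintro x y _ _ ⟨x₁, hx₁, s₁, hs₁, rfl⟩ ⟨x₂, hx₂, s₂, hs₂, rfl⟩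
      refine ⟨x₁ * (s₁ * x₂ * s₁⁻¹),
        mul_mem hx₁ ((Subgroup.mem_normalizer_iff.mp (hGnorm (hSG hs₁)) x₂).mp hx₂),
        s₁ * s₂, mul_mem hs₁ hs₂, by group⟩
    · rintro x _ ⟨x₁, hx₁, s₁, hs₁, rfl⟩
      refine ⟨s₁⁻¹ * x₁⁻¹ * s₁, ?_, s₁⁻¹, inv_mem hs₁, by group⟩
      have := (Subgroup.mem_normalizer_iff.mp (hGnorm (hSG (inv_mem hs₁))) x₁⁻¹).mp
        (inv_mem hx₁)
      simpa using this
end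

section
/- With F, a, b, S_w, E, G as in the standing setup, for all w, w' ∈ F with w ≠ w', the subgroups S_w and S_{w'} are not conjugate in G; that is, there is no g ∈ G with g⁻¹ S_w g = S_{w'}. -/
section TwistedAux

open Matrix

variable {F : Type*} [Field F] [Fintype F]

lemma twisted_inv_mem_aux {G : Type*} [Group G] [Finite G] {S : Set G}
    (hmul : ∀ x ∈ S, ∀ y ∈ S, x * y ∈ S) {g : G} (hg : g ∈ S) : g⁻¹ ∈ S := by
  have hpow : ∀ n, g ^ (n + 1) ∈ S := by
    intro n
    induction n with
    | zero => simpa using hg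
    | succ k ih => rw [pow_succ]; exact hmul _ ih _ hg
  have hinv : g⁻¹ = g ^ (orderOf g * 2 - 1) := by
    have hO : g ^ (orderOf g * 2) = 1 := by
      rw [pow_mul, pow_orderOf_eq_one, one_pow]
    have hpos : 0 < orderOf g := orderOf_pos g
    have hmul1 : g * g ^ (orderOf g * 2 - 1) = 1 := by
      rw [← pow_succ']
      have : orderOf g * 2 - 1 + 1 = orderOf g * 2 := by omega
      rw [this, hO]
    exact inv_eq_of_mul_eq_one_right hmul1
  have hpos : 0 < orderOf g := orderOf_pos g
  have h1 : orderOf g * 2 - 1 = (orderOf g * 2 - 2) + 1 := by omega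
  rw [hinv, h1]
  exact hpow _

/-- carrier of the parabolic -/
def Pcar (F : Type*) [Field F] : Set (Matrix.SpecialLinearGroup (Fin 3) F) :=
  {g | (g : Matrix (Fin 3) (Fin 3) F) 1 0 = 0 ∧
    (g : Matrix (Fin 3) (Fin 3) F) 2 0 = 0 ∧ (g : Matrix (Fin 3) (Fin 3) F) 0 0 = 1}

lemma Pcar_mul : ∀ x ∈ Pcar F, ∀ y ∈ Pcar F, x * y ∈ Pcar F := by
  rintro x ⟨hx10, hx20, hx00⟩ y ⟨hy10, hy20, hy00⟩
  refine ⟨?_, ?_, ?_⟩ <;>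
    simp only [Pcar, Set.mem_setOf_eq, Matrix.SpecialLinearGroup.coe_mul, Matrix.mul_apply,
      Fin.sum_univ_three, hx10, hx20, hx00, hy10, hy20, hy00] <;> ring

/-- The "parabolic" subgroup of SL(3,F). -/
def Psub (F : Type*) [Field F] [Fintype F] : Subgroup (Matrix.SpecialLinearGroup (Fin 3) F) where
  carrier := Pcar F
  one_mem' := by refine ⟨?_, ?_, ?_⟩ <;> simp
  mul_mem' := fun hx hy => Pcar_mul _ hx _ hy
  inv_mem' := fun hg => twisted_inv_mem_aux Pcar_mul hg

lemma twisted_det2 {x : Matrix.SpecialLinearGroup (Fin 3) F}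
    (hx10 : (x : Matrix (Fin 3) (Fin 3) F) 1 0 = 0)
    (hx20 : (x : Matrix (Fin 3) (Fin 3) F) 2 0 = 0)
    (hx00 : (x : Matrix (Fin 3) (Fin 3) F) 0 0 = 1) :
    (x : Matrix (Fin 3) (Fin 3) F) 1 1 * (x : Matrix (Fin 3) (Fin 3) F) 2 2 -
      (x : Matrix (Fin 3) (Fin 3) F) 1 2 * (x : Matrix (Fin 3) (Fin 3) F) 2 1 = 1 := by
  have hd := x.2
  rw [Matrix.det_fin_three] at hd
  rw [hx10, hx20, hx00] at hd
  linear_combination hd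

/-- carrier of the twisted-cocycle subgroup (squared form) -/
def Kcar (F : Type*) [Field F] (a w : F) : Set (Matrix.SpecialLinearGroup (Fin 3) F) :=
  {g | (g : Matrix (Fin 3) (Fin 3) F) 1 0 = 0 ∧
    (g : Matrix (Fin 3) (Fin 3) F) 2 0 = 0 ∧ (g : Matrix (Fin 3) (Fin 3) F) 0 0 = 1 ∧
    ((g : Matrix (Fin 3) (Fin 3) F) 0 1) ^ 2 =
      w ^ 2 * (1 + a) ^ 2 * ((g : Matrix (Fin 3) (Fin 3) F) 1 1 *
        (g : Matrix (Fin 3) (Fin 3) F) 2 1) ∧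
    ((g : Matrix (Fin 3) (Fin 3) F) 0 2) ^ 2 =
      w ^ 2 * (1 + a) ^ 2 * ((g : Matrix (Fin 3) (Fin 3) F) 1 2 *
        (g : Matrix (Fin 3) (Fin 3) F) 2 2)}

lemma Kcar_mul (a w : F) (h2 : (2 : F) = 0) :
    ∀ x ∈ Kcar F a w, ∀ y ∈ Kcar F a w, x * y ∈ Kcar F a w := by
  rintro x ⟨hx10, hx20, hx00, hx1, hx2⟩ y ⟨hy10, hy20, hy00, hy1, hy2⟩
  have detx := twisted_det2 hx10 hx20 hx00
  refine ⟨?_, ?_, ?_, ?_, ?_⟩ <;>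
    simp only [Kcar, Set.mem_setOf_eq, Matrix.SpecialLinearGroup.coe_mul, Matrix.mul_apply,
      Fin.sum_univ_three, hx10, hx20, hx00, hy10, hy20, hy00]
  · ring
  · ring
  · ring
  · set x01 := (x : Matrix (Fin 3) (Fin 3) F) 0 1
    set x02 := (x : Matrix (Fin 3) (Fin 3) F) 0 2
    set x11 := (x : Matrix (Fin 3) (Fin 3) F) 1 1
    set x12 := (x : Matrix (Fin 3) (Fin 3) F) 1 2
    set x21 := (x : Matrix (Fin 3) (Fin 3) F) 2 1
    set x22 := (x : Matrix (Fin 3) (Fin 3) F) 2 2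
    set y01 := (y : Matrix (Fin 3) (Fin 3) F) 0 1
    set y11 := (y : Matrix (Fin 3) (Fin 3) F) 1 1
    set y21 := (y : Matrix (Fin 3) (Fin 3) F) 2 1
    linear_combination hy1 + y11 ^ 2 * hx1 + y21 ^ 2 * hx2
      - (w ^ 2 * (1 + a) ^ 2 * y11 * y21) * detx
      + ((-2) * a * w ^ 2 * x12 * x21 * y11 * y21 + (-1) * a ^ 2 * w ^ 2 * x12 * x21 * y11 * y21
        + (-1) * w ^ 2 * x12 * x21 * y11 * y21 + x01 * x02 * y11 * y21
        + x01 * y01 * y11 + x02 * y01 * y21) * h2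
  · set x01 := (x : Matrix (Fin 3) (Fin 3) F) 0 1
    set x02 := (x : Matrix (Fin 3) (Fin 3) F) 0 2
    set x11 := (x : Matrix (Fin 3) (Fin 3) F) 1 1
    set x12 := (x : Matrix (Fin 3) (Fin 3) F) 1 2
    set x21 := (x : Matrix (Fin 3) (Fin 3) F) 2 1
    set x22 := (x : Matrix (Fin 3) (Fin 3) F) 2 2
    set y02 := (y : Matrix (Fin 3) (Fin 3) F) 0 2
    set y12 := (y : Matrix (Fin 3) (Fin 3) F) 1 2
    set y22 := (y : Matrix (Fin 3) (Fin 3) F) 2 2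
    linear_combination hy2 + y12 ^ 2 * hx1 + y22 ^ 2 * hx2
      - (w ^ 2 * (1 + a) ^ 2 * y12 * y22) * detx
      + ((-2) * a * w ^ 2 * x12 * x21 * y12 * y22 + (-1) * a ^ 2 * w ^ 2 * x12 * x21 * y12 * y22
        + (-1) * w ^ 2 * x12 * x21 * y12 * y22 + x01 * x02 * y12 * y22
        + x01 * y02 * y12 + x02 * y02 * y22) * h2

/-- The twisted-cocycle subgroup. -/
def Ksub (F : Type*) [Field F] [Fintype F] (a w : F) (h2 : (2 : F) = 0) :
    Subgroup (Matrix.SpecialLinearGroup (Fin 3) F) where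
  carrier := Kcar F a w
  one_mem' := by refine ⟨?_, ?_, ?_, ?_, ?_⟩ <;> simp
  mul_mem' := fun hx hy => Kcar_mul _ _ h2 _ hx _ hy
  inv_mem' := fun hg => twisted_inv_mem_aux (Kcar_mul _ _ h2) hg

end TwistedAux

/-- For `w ≠ w'` in `F`, the subgroups `S_w` and `S_{w'}` are not conjugate
in `G`: there is no `g ∈ G` with `g⁻¹ S_w g = S_{w'}`. -/
theorem twisted_stmt12 {F : Type*} [Field F] [Fintype F] {f : ℕ} (hf : 2 ≤ f)
    (hF : Fintype.card F = 2 ^ f) (a : F) (ha : a ≠ 0)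
    (hgen : orderOf a = 2 ^ f - 1) (b : F) (hb : b = (1 + a ^ 2)⁻¹)
    (w w' : F) (hw : w ≠ w') :
    ¬ ∃ g ∈ Gsub F a b,
      (fun x : Matrix.SpecialLinearGroup (Fin 3) F => g⁻¹ * x * g) ''
          (Ssub F a b w : Set (Matrix.SpecialLinearGroup (Fin 3) F))
        = (Ssub F a b w' : Set (Matrix.SpecialLinearGroup (Fin 3) F)) := by
  have h2 : (2 : F) = 0 := by
    have hc : ((Fintype.card F : ℕ) : F) = 0 := Nat.cast_card_eq_zero F
    rw [hF] at hc
    push_cast at hc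
    exact pow_eq_zero_iff (by omega : f ≠ 0) |>.mp hc
  have ha1 : a ≠ 1 := by
    intro h
    rw [h, orderOf_one] at hgen
    have h4 : 4 ≤ 2 ^ f := by
      calc (4 : ℕ) = 2 ^ 2 := by norm_num
      _ ≤ 2 ^ f := Nat.pow_le_pow_right (by norm_num) hf
    omega
  have hL : (1 : F) + a ≠ 0 := by
    intro h
    exact ha1 (by linear_combination h - h2)
  have h1a2 : (1 : F) + a ^ 2 ≠ 0 := by
    intro h
    apply hL
    have hsq : ((1 : F) + a) ^ 2 = 0 := by linear_combination h + a * h2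
    exact pow_eq_zero_iff (by norm_num : (2 : ℕ) ≠ 0) |>.mp hsq
  have hbrel : b * (1 + a ^ 2) = 1 := by rw [hb]; exact inv_mul_cancel₀ h1a2
  have sqinj : ∀ u v : F, u ^ 2 = v ^ 2 → u = v := by
    intro u v h
    have hsq : (u - v) ^ 2 = 0 := by linear_combination h + (v ^ 2 - u * v) * h2
    have h0 := pow_eq_zero_iff (by norm_num : (2 : ℕ) ≠ 0) |>.mp hsq
    exact sub_eq_zero.mp h0
  have hA2 : a ^ 2 - 1 ≠ 0 := by
    intro h
    apply ha1
    have hsq : (a - 1 : F) ^ 2 = 0 := by linear_combination h + (1 - a) * h2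
    exact sub_eq_zero.mp (pow_eq_zero_iff (by norm_num : (2 : ℕ) ≠ 0) |>.mp hsq)
  have hai1 : a⁻¹ ≠ 1 := fun h => ha1 (inv_eq_one.mp h)
  have hA2' : (a⁻¹) ^ 2 - 1 ≠ 0 := by
    intro h
    apply hai1
    have hsq : (a⁻¹ - 1 : F) ^ 2 = 0 := by linear_combination h + (1 - a⁻¹) * h2
    exact sub_eq_zero.mp (pow_eq_zero_iff (by norm_num : (2 : ℕ) ≠ 0) |>.mp hsq)
  rintro ⟨g, hgG, hset⟩
  -- `g` lies in the parabolic
  have hgP : g ∈ Psub F := by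
    have hle : Gsub F a b ≤ Psub F := by
      rw [Gsub]
      apply (Subgroup.closure_le _).mpr
      rintro s (⟨v1, v2, hs⟩ | hs | hs | hs) <;>
        exact ⟨by rw [hs]; simp [eMat, Xmat, Ymat, Zmat, Matrix.vecHead, Matrix.vecTail],
               by rw [hs]; simp [eMat, Xmat, Ymat, Zmat, Matrix.vecHead, Matrix.vecTail],
               by rw [hs]; simp [eMat, Xmat, Ymat, Zmat, Matrix.vecHead, Matrix.vecTail]⟩
    exact hle hgG
  obtain ⟨hg10, hg20, hg00⟩ := hgP
  have detB := twisted_det2 hg10 hg20 hg00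
  -- S_u is contained in K_u
  have hSK : ∀ u : F, Ssub F a b u ≤ Ksub F a u h2 := by
    intro u
    rw [Ssub]
    apply (Subgroup.closure_le _).mpr
    rintro s (hs | hs | hs)
    · exact ⟨by rw [hs]; simp [Xmat, Matrix.vecHead, Matrix.vecTail], by rw [hs]; simp [Xmat, Matrix.vecHead, Matrix.vecTail], by rw [hs]; simp [Xmat, Matrix.vecHead, Matrix.vecTail],
        by rw [hs]; simp [Xmat, Matrix.vecHead, Matrix.vecTail], by rw [hs]; simp [Xmat]⟩
    · refine ⟨by rw [hs]; simp [Ymat, Matrix.vecHead, Matrix.vecTail], by rw [hs]; simp [Ymat, Matrix.vecHead, Matrix.vecTail], by rw [hs]; simp [Ymat, Matrix.vecHead, Matrix.vecTail],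
        ?_, ?_⟩
      · rw [hs]; simp [Ymat, Matrix.vecHead, Matrix.vecTail]
      · rw [hs]
        simp [Ymat, Matrix.vecHead, Matrix.vecTail]
        ring
    · refine ⟨by rw [hs]; simp [Zmat, Matrix.vecHead, Matrix.vecTail], by rw [hs]; simp [Zmat, Matrix.vecHead, Matrix.vecTail], by rw [hs]; simp [Zmat, Matrix.vecHead, Matrix.vecTail],
        ?_, ?_⟩
      · rw [hs]
        simp [Zmat, Matrix.vecHead, Matrix.vecTail]
        linear_combination (-(u ^ 2)) * hbrel + (-(a * b * u ^ 2)) * h2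
      · rw [hs]
        simp [Zmat, Matrix.vecHead, Matrix.vecTail]
        linear_combination (b ^ 2 * u ^ 2) * hbrel +
          ((-1) * a * b * u ^ 2 + (-2) * a * b ^ 2 * u ^ 2 + (-1) * a * b ^ 3 * u ^ 2
            + (-1) * a ^ 2 * b * u ^ 2 + (-1) * a ^ 2 * b ^ 2 * u ^ 2
            + (-1) * a ^ 2 * b ^ 3 * u ^ 2 + (-1) * b ^ 3 * u ^ 2) * h2
  -- ===== X step =====
  have detXm : (Xmat F a).det = 1 := by
    rw [Xmat, Matrix.det_fin_three]
    simp
    exact mul_inv_cancel₀ ha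
  have hXmem : (⟨Xmat F a, detXm⟩ : Matrix.SpecialLinearGroup (Fin 3) F) ∈
      (Ssub F a b w' : Set (Matrix.SpecialLinearGroup (Fin 3) F)) := by
    have hmm : (⟨Xmat F a, detXm⟩ : Matrix.SpecialLinearGroup (Fin 3) F) ∈ Ssub F a b w' := by
      rw [Ssub]
      exact Subgroup.subset_closure (Or.inl rfl)
    exact hmm
  rw [← hset] at hXmem
  obtain ⟨x, hxS, hxe0⟩ := hXmem
  have hxe : g⁻¹ * x * g = ⟨Xmat F a, detXm⟩ := hxe0
  obtain ⟨hx10, hx20, hx00, hx1, hx2⟩ := hSK w hxS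
  have detx := twisted_det2 hx10 hx20 hx00
  have h' : x * g = g * ⟨Xmat F a, detXm⟩ := by rw [← hxe, mul_assoc, mul_inv_cancel_left]
  have hm : (x : Matrix (Fin 3) (Fin 3) F) * (g : Matrix (Fin 3) (Fin 3) F) = (g : Matrix (Fin 3) (Fin 3) F) * Xmat F a := by
    have hmm := congrArg (fun z : Matrix.SpecialLinearGroup (Fin 3) F => (z : Matrix (Fin 3) (Fin 3) F)) h'
    simp only [Matrix.SpecialLinearGroup.coe_mul] at hmm
    exact hmm
  have e11 : ((x : Matrix (Fin 3) (Fin 3) F) 1 1)*((g : Matrix (Fin 3) (Fin 3) F) 1 1) + ((x : Matrix (Fin 3) (Fin 3) F) 1 2)*((g : Matrix (Fin 3) (Fin 3) F) 2 1) = ((g : Matrix (Fin 3) (Fin 3) F) 1 1)*a := by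
    have h := congrFun (congrFun hm 1) 1
    simp [Matrix.mul_apply, Fin.sum_univ_three, Xmat, Matrix.vecHead, Matrix.vecTail,
      hx10, hx20, hx00, hg10, hg20, hg00] at h
    linear_combination h
  have e21 : ((x : Matrix (Fin 3) (Fin 3) F) 2 1)*((g : Matrix (Fin 3) (Fin 3) F) 1 1) + ((x : Matrix (Fin 3) (Fin 3) F) 2 2)*((g : Matrix (Fin 3) (Fin 3) F) 2 1) = ((g : Matrix (Fin 3) (Fin 3) F) 2 1)*a := by
    have h := congrFun (congrFun hm 2) 1
    simp [Matrix.mul_apply, Fin.sum_univ_three, Xmat, Matrix.vecHead, Matrix.vecTail,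
      hx10, hx20, hx00, hg10, hg20, hg00] at h
    linear_combination h
  have e01 : ((g : Matrix (Fin 3) (Fin 3) F) 0 1) + ((x : Matrix (Fin 3) (Fin 3) F) 0 1)*((g : Matrix (Fin 3) (Fin 3) F) 1 1) + ((x : Matrix (Fin 3) (Fin 3) F) 0 2)*((g : Matrix (Fin 3) (Fin 3) F) 2 1) = ((g : Matrix (Fin 3) (Fin 3) F) 0 1)*a := by
    have h := congrFun (congrFun hm 0) 1
    simp [Matrix.mul_apply, Fin.sum_univ_three, Xmat, Matrix.vecHead, Matrix.vecTail,
      hx10, hx20, hx00, hg10, hg20, hg00] at h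
    linear_combination h
  have e12 : ((x : Matrix (Fin 3) (Fin 3) F) 1 1)*((g : Matrix (Fin 3) (Fin 3) F) 1 2) + ((x : Matrix (Fin 3) (Fin 3) F) 1 2)*((g : Matrix (Fin 3) (Fin 3) F) 2 2) = ((g : Matrix (Fin 3) (Fin 3) F) 1 2)*a⁻¹ := by
    have h := congrFun (congrFun hm 1) 2
    simp [Matrix.mul_apply, Fin.sum_univ_three, Xmat, Matrix.vecHead, Matrix.vecTail,
      hx10, hx20, hx00, hg10, hg20, hg00] at h
    linear_combination h
  have e22 : ((x : Matrix (Fin 3) (Fin 3) F) 2 1)*((g : Matrix (Fin 3) (Fin 3) F) 1 2) + ((x : Matrix (Fin 3) (Fin 3) F) 2 2)*((g : Matrix (Fin 3) (Fin 3) F) 2 2) = ((g : Matrix (Fin 3) (Fin 3) F) 2 2)*a⁻¹ := by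
    have h := congrFun (congrFun hm 2) 2
    simp [Matrix.mul_apply, Fin.sum_univ_three, Xmat, Matrix.vecHead, Matrix.vecTail,
      hx10, hx20, hx00, hg10, hg20, hg00] at h
    linear_combination h
  have e02 : ((g : Matrix (Fin 3) (Fin 3) F) 0 2) + ((x : Matrix (Fin 3) (Fin 3) F) 0 1)*((g : Matrix (Fin 3) (Fin 3) F) 1 2) + ((x : Matrix (Fin 3) (Fin 3) F) 0 2)*((g : Matrix (Fin 3) (Fin 3) F) 2 2) = ((g : Matrix (Fin 3) (Fin 3) F) 0 2)*a⁻¹ := by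
    have h := congrFun (congrFun hm 0) 2
    simp [Matrix.mul_apply, Fin.sum_univ_three, Xmat, Matrix.vecHead, Matrix.vecTail,
      hx10, hx20, hx00, hg10, hg20, hg00] at h
    linear_combination h

  have key1 : (a ^ 2 - 1) * ((g : Matrix (Fin 3) (Fin 3) F) 0 1) ^ 2
      = (a ^ 2 - 1) * (w ^ 2 * (1 + a) ^ 2 * (((g : Matrix (Fin 3) (Fin 3) F) 1 1) * ((g : Matrix (Fin 3) (Fin 3) F) 2 1))) := by
    linear_combination -(((x : Matrix (Fin 3) (Fin 3) F) 0 1)*((g : Matrix (Fin 3) (Fin 3) F) 1 1) + ((x : Matrix (Fin 3) (Fin 3) F) 0 2)*((g : Matrix (Fin 3) (Fin 3) F) 2 1) + ((g : Matrix (Fin 3) (Fin 3) F) 0 1)*(a-1))*e01 + ((g : Matrix (Fin 3) (Fin 3) F) 1 1)^2*hx1 + ((g : Matrix (Fin 3) (Fin 3) F) 2 1)^2*hx2 + (w^2*(1+a)^2*(((x : Matrix (Fin 3) (Fin 3) F) 2 1)*((g : Matrix (Fin 3) (Fin 3) F) 1 1) + ((x : Matrix (Fin 3) (Fin 3) F)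 2 2)*((g : Matrix (Fin 3) (Fin 3) F) 2 1)))*e11 + (w^2*(1+a)^2*a*((g : Matrix (Fin 3) (Fin 3) F) 1 1))*e21 - (w^2*(1+a)^2*((g : Matrix (Fin 3) (Fin 3) F) 1 1)*((g : Matrix (Fin 3) (Fin 3) F) 2 1))*detx + (a*((g : Matrix (Fin 3) (Fin 3) F) 0 1)^2 + (-2)*a*((g : Matrix (Fin 3) (Fin 3) F) 1 1)*((g : Matrix (Fin 3) (Fin 3) F) 2 1)*w^2*((x : Matrix (Fin 3) (Fin 3) F) 1 2)*((x : Matrix (Fin 3) (Fin 3) F) 2 1) + (-1)*a^2*((g : Matrix (Fin 3) (Fin 3) F) 1 1)*((g : Matrix (Fin 3) (Fin 3) F) 2 1)*w^2*((x : Matrix (Fin 3) (Fin 3) F) 1 2)*((x : Matrix (Fin 3) (Fin 3) F) 2 1) + (-1)*((g : Matrix (Fin 3) (Fin 3) F) 0 1)^2 + (-1)*((g : Matrix (Fin 3) (Fin 3) F) 1 1)*((g : Matrix (Fin 3) (Fin 3) F) 2 1)*w^2*((x : Matrix (Fin 3) (Fin 3) F) 1 2)*((x : Matrix (Fin 3)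 (Fin 3) F) 2 1) + ((g : Matrix (Fin 3) (Fin 3) F) 1 1)*((g : Matrix (Fin 3) (Fin 3) F) 2 1)*((x : Matrix (Fin 3) (Fin 3) F) 0 1)*((x : Matrix (Fin 3) (Fin 3) F) 0 2))*h2
  have s1sq : ((g : Matrix (Fin 3) (Fin 3) F) 0 1) ^ 2 = w ^ 2 * (1 + a) ^ 2 * (((g : Matrix (Fin 3) (Fin 3) F) 1 1) * ((g : Matrix (Fin 3) (Fin 3) F) 2 1)) :=
    mul_left_cancel₀ hA2 key1
  have key2 : ((a⁻¹) ^ 2 - 1) * ((g : Matrix (Fin 3) (Fin 3) F) 0 2) ^ 2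
      = ((a⁻¹) ^ 2 - 1) * (w ^ 2 * (1 + a) ^ 2 * (((g : Matrix (Fin 3) (Fin 3) F) 1 2) * ((g : Matrix (Fin 3) (Fin 3) F) 2 2))) := by
    linear_combination -(((x : Matrix (Fin 3) (Fin 3) F) 0 1)*((g : Matrix (Fin 3) (Fin 3) F) 1 2) + ((x : Matrix (Fin 3) (Fin 3) F) 0 2)*((g : Matrix (Fin 3) (Fin 3) F) 2 2) + ((g : Matrix (Fin 3) (Fin 3) F) 0 2)*(a⁻¹-1))*e02 + ((g : Matrix (Fin 3) (Fin 3) F) 1 2)^2*hx1 + ((g : Matrix (Fin 3) (Fin 3) F) 2 2)^2*hx2 + (w^2*(1+a)^2*(((x : Matrix (Fin 3) (Fin 3) F) 2 1)*((g : Matrix (Fin 3) (Fin 3) F) 1 2) + ((x : Matrix (Fin 3) (Fin 3) F) 2 2)*((g : Matrix (Fin 3) (Fin 3) F) 2 2)))*e12 + (w^2*(1+a)^2*a⁻¹*((g : Matrix (Fin 3) (Fin 3) F) 1 2))*e22 - (w^2*(1+a)^2*((g : Matrix (Fin 3) (Fin 3) F) 1 2)*((g : Matrix (Fin 3) (Fin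 3) F) 2 2))*detx + ((-2)*a*((g : Matrix (Fin 3) (Fin 3) F) 1 2)*((g : Matrix (Fin 3) (Fin 3) F) 2 2)*w^2*((x : Matrix (Fin 3) (Fin 3) F) 1 2)*((x : Matrix (Fin 3) (Fin 3) F) 2 1) + (-1)*a^2*((g : Matrix (Fin 3) (Fin 3) F) 1 2)*((g : Matrix (Fin 3) (Fin 3) F) 2 2)*w^2*((x : Matrix (Fin 3) (Fin 3) F) 1 2)*((x : Matrix (Fin 3) (Fin 3) F) 2 1) + a⁻¹*((g : Matrix (Fin 3) (Fin 3) F) 0 2)^2 + (-1)*((g : Matrix (Fin 3) (Fin 3) F) 0 2)^2 + (-1)*((g : Matrix (Fin 3) (Fin 3) F) 1 2)*((g : Matrix (Fin 3) (Fin 3) F) 2 2)*w^2*((x : Matrix (Fin 3) (Fin 3) F) 1 2)*((x : Matrix (Fin 3) (Fin 3) F) 2 1) + ((g : Matrix (Fin 3) (Fin 3) F) 1 2)*((g : Matrix (Fin 3) (Fin 3) F) 2 2)*((x : Matrix (Fin 3) (Fin 3) F) 0 1)*((x : Matrix (Fin 3) (Fin 3) F) 0 2))*h2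
  have s2sq : ((g : Matrix (Fin 3) (Fin 3) F) 0 2) ^ 2 = w ^ 2 * (1 + a) ^ 2 * (((g : Matrix (Fin 3) (Fin 3) F) 1 2) * ((g : Matrix (Fin 3) (Fin 3) F) 2 2)) :=
    mul_left_cancel₀ hA2' key2
  -- ===== Z step =====
  have detZm : (Zmat F a b w').det = 1 := by
    rw [Zmat, Matrix.det_fin_three]
    simp [Matrix.vecHead, Matrix.vecTail]
    linear_combination (-1 : F) * h2
  have hZmem : (⟨Zmat F a b w', detZm⟩ : Matrix.SpecialLinearGroup (Fin 3) F) ∈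
      (Ssub F a b w' : Set (Matrix.SpecialLinearGroup (Fin 3) F)) := by
    have hmm : (⟨Zmat F a b w', detZm⟩ : Matrix.SpecialLinearGroup (Fin 3) F) ∈ Ssub F a b w' := by
      rw [Ssub]
      exact Subgroup.subset_closure (Or.inr (Or.inr rfl))
    exact hmm
  rw [← hset] at hZmem
  obtain ⟨y, hyS, hye0⟩ := hZmem
  have hye : g⁻¹ * y * g = ⟨Zmat F a b w', detZm⟩ := hye0
  obtain ⟨hy10, hy20, hy00, hpy, hqy⟩ := hSK w hyS
  have dety := twisted_det2 hy10 hy20 hy00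
  have h'' : y * g = g * ⟨Zmat F a b w', detZm⟩ := by rw [← hye, mul_assoc, mul_inv_cancel_left]
  have hmZ : (y : Matrix (Fin 3) (Fin 3) F) * (g : Matrix (Fin 3) (Fin 3) F) = (g : Matrix (Fin 3) (Fin 3) F) * Zmat F a b w' := by
    have hmm := congrArg (fun z : Matrix.SpecialLinearGroup (Fin 3) F => (z : Matrix (Fin 3) (Fin 3) F)) h''
    simp only [Matrix.SpecialLinearGroup.coe_mul] at hmm
    exact hmm
  have f11 : ((y : Matrix (Fin 3) (Fin 3) F) 1 1)*((g : Matrix (Fin 3) (Fin 3) F) 1 1) + ((y : Matrix (Fin 3) (Fin 3) F) 1 2)*((g : Matrix (Fin 3) (Fin 3) F) 2 1) = ((g : Matrix (Fin 3) (Fin 3) F) 1 1)*b + ((g : Matrix (Fin 3) (Fin 3) F) 1 2) := by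
    have h := congrFun (congrFun hmZ 1) 1
    simp [Matrix.mul_apply, Fin.sum_univ_three, Zmat, Matrix.vecHead, Matrix.vecTail,
      hy10, hy20, hy00, hg10, hg20, hg00] at h
    linear_combination h
  have f21 : ((y : Matrix (Fin 3) (Fin 3) F) 2 1)*((g : Matrix (Fin 3) (Fin 3) F) 1 1) + ((y : Matrix (Fin 3) (Fin 3) F) 2 2)*((g : Matrix (Fin 3) (Fin 3) F) 2 1) = ((g : Matrix (Fin 3) (Fin 3) F) 2 1)*b + ((g : Matrix (Fin 3) (Fin 3) F) 2 2) := by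
    have h := congrFun (congrFun hmZ 2) 1
    simp [Matrix.mul_apply, Fin.sum_univ_three, Zmat, Matrix.vecHead, Matrix.vecTail,
      hy10, hy20, hy00, hg10, hg20, hg00] at h
    linear_combination h
  have f01 : ((g : Matrix (Fin 3) (Fin 3) F) 0 1) + ((y : Matrix (Fin 3) (Fin 3) F) 0 1)*((g : Matrix (Fin 3) (Fin 3) F) 1 1) + ((y : Matrix (Fin 3) (Fin 3) F) 0 2)*((g : Matrix (Fin 3) (Fin 3) F) 2 1) = w' + ((g : Matrix (Fin 3) (Fin 3) F) 0 1)*b + ((g : Matrix (Fin 3) (Fin 3) F) 0 2) := by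
    have h := congrFun (congrFun hmZ 0) 1
    simp [Matrix.mul_apply, Fin.sum_univ_three, Zmat, Matrix.vecHead, Matrix.vecTail,
      hy10, hy20, hy00, hg10, hg20, hg00] at h
    linear_combination h

  have keyZ : w' ^ 2 = w ^ 2 := by
    linear_combination -(((y : Matrix (Fin 3) (Fin 3) F) 0 1)*((g : Matrix (Fin 3) (Fin 3) F) 1 1) + ((y : Matrix (Fin 3) (Fin 3) F) 0 2)*((g : Matrix (Fin 3) (Fin 3) F) 2 1) + (w' + ((g : Matrix (Fin 3) (Fin 3) F) 0 1)*(b-1) + ((g : Matrix (Fin 3) (Fin 3) F) 0 2)))*f01 + ((g : Matrix (Fin 3) (Fin 3) F) 1 1)^2*hpy + ((g : Matrix (Fin 3) (Fin 3) F) 2 1)^2*hqy + (w^2*(1+a)^2*(((y : Matrix (Fin 3) (Fin 3) F) 2 1)*((g : Matrix (Fin 3) (Fin 3) F) 1 1) + ((y : Matrix (Fin 3) (Fin 3) F) 2 2)*((g : Matrix (Fin 3) (Fin 3) F) 2 1)))*f11 + (w^2*(1+a)^2*(b*((g : Matrix (Fin 3) (Fin 3) F) 1 1) + ((g : Matrix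 (Fin 3) (Fin 3) F) 1 2)))*f21 - (w^2*(1+a)^2*((g : Matrix (Fin 3) (Fin 3) F) 1 1)*((g : Matrix (Fin 3) (Fin 3) F) 2 1))*dety - ((b-1)^2)*s1sq - s2sq + (a^2*b*w^2 + b*w^2)*detB + (w^2)*hbrel + ((2)*a*b*((g : Matrix (Fin 3) (Fin 3) F) 1 1)*((g : Matrix (Fin 3) (Fin 3) F) 2 1)*w^2 + a*b*((g : Matrix (Fin 3) (Fin 3) F) 1 1)*((g : Matrix (Fin 3) (Fin 3) F) 2 2)*w^2 + a*b*((g : Matrix (Fin 3) (Fin 3) F) 1 2)*((g : Matrix (Fin 3) (Fin 3) F) 2 1)*w^2 + (-2)*a*((g : Matrix (Fin 3) (Fin 3) F) 1 1)*((g : Matrix (Fin 3) (Fin 3) F) 2 1)*w^2 + (-2)*a*((g : Matrix (Fin 3) (Fin 3) F) 1 1)*((g : Matrix (Fin 3) (Fin 3) F) 2 1)*w^2*((y : Matrix (Fin 3) (Fin 3) F) 1 2)*((y : Matrix (Fin 3) (Fin 3) F) 2 1) + a^2*b*((g : Matrix (Fin 3) (Fin 3) F) 1 1)*((g : Matrix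 (Fin 3) (Fin 3) F) 2 1)*w^2 + a^2*b*((g : Matrix (Fin 3) (Fin 3) F) 1 2)*((g : Matrix (Fin 3) (Fin 3) F) 2 1)*w^2 + (-1)*a^2*((g : Matrix (Fin 3) (Fin 3) F) 1 1)*((g : Matrix (Fin 3) (Fin 3) F) 2 1)*w^2 + (-1)*a^2*((g : Matrix (Fin 3) (Fin 3) F) 1 1)*((g : Matrix (Fin 3) (Fin 3) F) 2 1)*w^2*((y : Matrix (Fin 3) (Fin 3) F) 1 2)*((y : Matrix (Fin 3) (Fin 3) F) 2 1) + (-1)*b*((g : Matrix (Fin 3) (Fin 3) F) 0 1)*((g : Matrix (Fin 3) (Fin 3) F) 0 2) + (-1)*b*((g : Matrix (Fin 3) (Fin 3) F) 0 1)*w' + b*((g : Matrix (Fin 3) (Fin 3) F) 1 1)*((g : Matrix (Fin 3) (Fin 3) F) 2 1)*w^2 + b*((g : Matrix (Fin 3) (Fin 3) F) 1 2)*((g : Matrix (Fin 3) (Fin 3) F) 2 1)*w^2 + ((g : Matrix (Fin 3) (Fin 3) F) 0 1)*((g : Matrix (Fin 3) (Fin 3) F) 0 2) + ((g : Matrix (Fin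 3) (Fin 3) F) 0 1)*w' + (-1)*((g : Matrix (Fin 3) (Fin 3) F) 0 2)*w' + (-1)*((g : Matrix (Fin 3) (Fin 3) F) 1 1)*((g : Matrix (Fin 3) (Fin 3) F) 2 1)*w^2 + (-1)*((g : Matrix (Fin 3) (Fin 3) F) 1 1)*((g : Matrix (Fin 3) (Fin 3) F) 2 1)*w^2*((y : Matrix (Fin 3) (Fin 3) F) 1 2)*((y : Matrix (Fin 3) (Fin 3) F) 2 1) + ((g : Matrix (Fin 3) (Fin 3) F) 1 1)*((g : Matrix (Fin 3) (Fin 3) F) 2 1)*((y : Matrix (Fin 3) (Fin 3) F) 0 1)*((y : Matrix (Fin 3) (Fin 3) F) 0 2))*h2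
  exact hw (sqinj w w' keyZ.symm)
end

section
/- With F, a, b, S_w, E, G as in the standing setup, for every g ∈ G and all w, w' ∈ F, the number of elements x ∈ G with x g x⁻¹ ∈ S_w equals the number of elements x ∈ G with x g x⁻¹ ∈ S_{w'}. Equivalently, g fixes the same number of cosets in the coset action of G on the cosets of S_w as in the coset action on the cosets of S_{w'}; hence every element of G has the same number of fixed points in each of the |F| pairwise inequivalent 2-transitive actions of degree |F|². -/
namespace T14

variable {F : Type*} [Field F]

abbrev SL3 (F : Type*) [Field F] := Matrix.SpecialLinearGroup (Fin 3) F

def eSL (v₁ v₂ : F) : SL3 F :=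
  ⟨eMat F v₁ v₂, by simp [eMat, Matrix.det_fin_three, Matrix.vecHead, Matrix.vecTail, Matrix.cons_val_two]⟩

@[simp] lemma eSL_coe (v₁ v₂ : F) :
    ((eSL v₁ v₂ : SL3 F) : Matrix (Fin 3) (Fin 3) F) = eMat F v₁ v₂ := rfl

lemma eSL_mul (v₁ v₂ u₁ u₂ : F) :
    (eSL v₁ v₂ : SL3 F) * eSL u₁ u₂ = eSL (v₁ + u₁) (v₂ + u₂) := by
  apply Subtype.ext
  show eMat F v₁ v₂ * eMat F u₁ u₂ = _
  simp only [eMat, Matrix.mul_fin_three]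
  ext i j
  fin_cases i <;> fin_cases j <;>
    simp [eMat, Matrix.vecHead, Matrix.vecTail, Matrix.cons_val_two] <;> ring

lemma eSL_zero : (eSL 0 0 : SL3 F) = 1 := by
  apply Subtype.ext
  show eMat F 0 0 = 1
  ext i j
  fin_cases i <;> fin_cases j <;>
    simp [eMat, Matrix.one_apply, Matrix.vecHead, Matrix.vecTail, Matrix.cons_val_two]

def Pcol (M : SL3 F) : Prop :=
  (M : Matrix (Fin 3) (Fin 3) F) 0 0 = 1 ∧ (M : Matrix (Fin 3) (Fin 3) F) 1 0 = 0 ∧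
    (M : Matrix (Fin 3) (Fin 3) F) 2 0 = 0

lemma Pcol_struct (M : SL3 F) (hM : Pcol M) :
    ∃ p q r s x₁ x₂ : F,
      (M : Matrix (Fin 3) (Fin 3) F) = !![1, x₁, x₂; 0, p, q; 0, r, s] ∧ p * s - q * r = 1 := by
  obtain ⟨h0, h1, h2⟩ := hM
  refine ⟨M.1 1 1, M.1 1 2, M.1 2 1, M.1 2 2, M.1 0 1, M.1 0 2, ?_, ?_⟩
  · have h := Matrix.eta_fin_three (M : Matrix (Fin 3) (Fin 3) F)
    rw [h0, h1, h2] at h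
    exact h
  · have hd := M.2
    rw [Matrix.det_fin_three, h0, h1, h2] at hd
    linear_combination hd

lemma Pcol_one : Pcol (1 : SL3 F) := by
  refine ⟨?_, ?_, ?_⟩ <;> simp

lemma Pcol_mul (M N : SL3 F) (hM : Pcol M) (hN : Pcol N) : Pcol (M * N) := by
  obtain ⟨p, q, r, s, x₁, x₂, hMe, _⟩ := Pcol_struct M hM
  obtain ⟨p', q', r', s', y₁, y₂, hNe, _⟩ := Pcol_struct N hN
  have : ((M * N : SL3 F) : Matrix (Fin 3) (Fin 3) F) = M.1 * N.1 := rfl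
  refine ⟨?_, ?_, ?_⟩ <;>
    rw [this, hMe, hNe, Matrix.mul_fin_three] <;>
    simp [Matrix.vecHead, Matrix.vecTail, Matrix.cons_val_two]

lemma Pcol_inv (M : SL3 F) (hM : Pcol M) : Pcol M⁻¹ := by
  obtain ⟨p, q, r, s, x₁, x₂, hMe, hd⟩ := Pcol_struct M hM
  have hcoe : ((M⁻¹ : SL3 F) : Matrix (Fin 3) (Fin 3) F) = (M.1).adjugate :=
    Matrix.SpecialLinearGroup.coe_inv M
  refine ⟨?_, ?_, ?_⟩ <;>
    rw [hcoe, hMe, Matrix.adjugate_fin_three] <;>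
    simp [Matrix.vecHead, Matrix.vecTail, Matrix.cons_val_two] <;> linear_combination hd

lemma Pcol_closure (T : Set (SL3 F)) (hT : ∀ x ∈ T, Pcol x) :
    ∀ x ∈ Subgroup.closure T, Pcol x := by
  intro x hx
  induction hx using Subgroup.closure_induction with
  | mem x hx => exact hT x hx
  | one => exact Pcol_one
  | mul x y hx hy ihx ihy => exact Pcol_mul x y ihx ihy
  | inv x hx ihx => exact Pcol_inv x ihx


def phi (w l : F) (ρ : F → F) (M : SL3 F) : SL3 F :=
  M * eSL (w * l * ρ ((M : Matrix (Fin 3) (Fin 3) F) 1 1 * (M : Matrix (Fin 3) (Fin 3) F) 2 1))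
    (w * l * ρ ((M : Matrix (Fin 3) (Fin 3) F) 1 2 * (M : Matrix (Fin 3) (Fin 3) F) 2 2))

lemma rho_key (h2 : (2:F) = 0) (ρ : F → F) (hρ : ∀ x, ρ x ^ 2 = x)
    (hinj : ∀ x y : F, x ^ 2 = y ^ 2 → x = y) (p q r s n1 n2 : F)
    (hdet : p * s - q * r = 1) :
    ρ ((p * n1 + q * n2) * (r * n1 + s * n2)) = ρ (p * r) * n1 + ρ (q * s) * n2 + ρ (n1 * n2) := by
  apply hinj
  linear_combination (hρ ((p * n1 + q * n2) * (r * n1 + s * n2))) - n1 ^ 2 * (hρ (p * r))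
    - n2 ^ 2 * (hρ (q * s)) - hρ (n1 * n2) + n1 * n2 * hdet
    + (q * r * n1 * n2 - ρ (p * r) * ρ (q * s) * n1 * n2 - ρ (p * r) * ρ (n1 * n2) * n1
      - ρ (q * s) * ρ (n1 * n2) * n2) * h2

lemma phi_mul (h2 : (2:F) = 0) (ρ : F → F) (hρ : ∀ x, ρ x ^ 2 = x)
    (hinj : ∀ x y : F, x ^ 2 = y ^ 2 → x = y) (w l : F) (M N : SL3 F)
    (hM : Pcol M) (hN : Pcol N) :
    phi w l ρ (M * N) = phi w l ρ M * phi w l ρ N := by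
  obtain ⟨p, q, r, s, x₁, x₂, hMe, hdM⟩ := Pcol_struct M hM
  obtain ⟨p', q', r', s', y₁, y₂, hNe, hdN⟩ := Pcol_struct N hN
  apply Subtype.ext
  simp only [phi, Matrix.SpecialLinearGroup.coe_mul, eSL_coe, hMe, hNe, eMat,
    Matrix.mul_fin_three]
  norm_num [Matrix.vecHead, Matrix.vecTail, Matrix.cons_val_two]
  refine ⟨?_, ?_⟩
  · linear_combination (w * l) * rho_key h2 ρ hρ hinj p q r s p' r' hdM
  · linear_combination (w * l) * rho_key h2 ρ hρ hinj p q r s q' s' hdM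


lemma rho_zero (ρ : F → F) (hρ : ∀ x, ρ x ^ 2 = x)
    (hinj : ∀ x y : F, x ^ 2 = y ^ 2 → x = y) : ρ 0 = 0 := by
  apply hinj
  rw [hρ]; ring

lemma rho_one (ρ : F → F) (hρ : ∀ x, ρ x ^ 2 = x)
    (hinj : ∀ x y : F, x ^ 2 = y ^ 2 → x = y) : ρ 1 = 1 := by
  apply hinj
  rw [hρ]; ring

lemma Pcol_eSL (v₁ v₂ : F) : Pcol (eSL v₁ v₂ : SL3 F) := by
  refine ⟨?_, ?_, ?_⟩ <;> simp [eMat, Matrix.vecHead, Matrix.vecTail, Matrix.cons_val_two]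

lemma Pcol_phi (w l : F) (ρ : F → F) (M : SL3 F) (hM : Pcol M) : Pcol (phi w l ρ M) :=
  Pcol_mul _ _ hM (Pcol_eSL _ _)

lemma phi_one (w l : F) (ρ : F → F) (hρ : ∀ x, ρ x ^ 2 = x)
    (hinj : ∀ x y : F, x ^ 2 = y ^ 2 → x = y) : phi w l ρ (1 : SL3 F) = 1 := by
  have h0 : ((1 : SL3 F) : Matrix (Fin 3) (Fin 3) F) = 1 := rfl
  rw [phi, h0]
  norm_num [Matrix.one_apply, Fin.ext_iff, rho_zero ρ hρ hinj, eSL_zero]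

lemma phi_inv (h2 : (2:F) = 0) (ρ : F → F) (hρ : ∀ x, ρ x ^ 2 = x)
    (hinj : ∀ x y : F, x ^ 2 = y ^ 2 → x = y) (w l : F) (M : SL3 F) (hM : Pcol M) :
    phi w l ρ M⁻¹ = (phi w l ρ M)⁻¹ := by
  have h := phi_mul h2 ρ hρ hinj w l M M⁻¹ hM (Pcol_inv M hM)
  rw [mul_inv_cancel, phi_one w l ρ hρ hinj] at h
  exact (inv_eq_of_mul_eq_one_right h.symm).symm

lemma phi_phi (h2 : (2:F) = 0) (ρ : F → F) (w l : F) (M : SL3 F) (hM : Pcol M) :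
    phi w l ρ (phi w l ρ M) = M := by
  obtain ⟨p, q, r, s, x₁, x₂, hMe, hdM⟩ := Pcol_struct M hM
  apply Subtype.ext
  simp only [phi, Matrix.SpecialLinearGroup.coe_mul, eSL_coe, hMe, eMat,
    Matrix.mul_fin_three]
  norm_num [Matrix.vecHead, Matrix.vecTail, Matrix.cons_val_two]
  refine ⟨?_, ?_⟩ <;>
    [linear_combination (w * l * ρ (p * r)) * h2;
     linear_combination (w * l * ρ (q * s)) * h2]

lemma phi_closure_map (h2 : (2:F) = 0) (ρ : F → F) (hρ : ∀ x, ρ x ^ 2 = x)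
    (hinj : ∀ x y : F, x ^ 2 = y ^ 2 → x = y) (w l : F) (T T' : Set (SL3 F))
    (hT : ∀ x ∈ T, Pcol x)
    (hmap : ∀ x ∈ T, phi w l ρ x ∈ Subgroup.closure T') :
    ∀ x ∈ Subgroup.closure T, phi w l ρ x ∈ Subgroup.closure T' := by
  intro x hx
  induction hx using Subgroup.closure_induction with
  | mem x hx => exact hmap x hx
  | one => rw [phi_one w l ρ hρ hinj]; exact one_mem _
  | mul x y hx hy ihx ihy =>
      rw [phi_mul h2 ρ hρ hinj w l x y (Pcol_closure T hT x hx) (Pcol_closure T hT y hy)]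
      exact mul_mem ihx ihy
  | inv x hx ihx =>
      rw [phi_inv h2 ρ hρ hinj w l x (Pcol_closure T hT x hx)]
      exact inv_mem ihx

lemma phi_X (w l : F) (ρ : F → F) (hρ : ∀ x, ρ x ^ 2 = x)
    (hinj : ∀ x y : F, x ^ 2 = y ^ 2 → x = y) (a : F) (x : SL3 F)
    (hx : (x : Matrix (Fin 3) (Fin 3) F) = Xmat F a) : phi w l ρ x = x := by
  apply Subtype.ext
  show (x : Matrix (Fin 3) (Fin 3) F) * _ = _
  rw [hx]
  norm_num [Xmat, eMat, Matrix.mul_fin_three, rho_zero ρ hρ hinj,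
    Matrix.vecHead, Matrix.vecTail, Matrix.cons_val_two]

lemma phi_e (w l : F) (ρ : F → F) (hρ : ∀ x, ρ x ^ 2 = x)
    (hinj : ∀ x y : F, x ^ 2 = y ^ 2 → x = y) (v₁ v₂ : F) (x : SL3 F)
    (hx : (x : Matrix (Fin 3) (Fin 3) F) = eMat F v₁ v₂) : phi w l ρ x = x := by
  apply Subtype.ext
  show (x : Matrix (Fin 3) (Fin 3) F) * _ = _
  rw [hx]
  norm_num [eMat, Matrix.mul_fin_three, rho_zero ρ hρ hinj,
    Matrix.vecHead, Matrix.vecTail, Matrix.cons_val_two]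

lemma phi_Y (w : F) (ρ : F → F) (hρ : ∀ x, ρ x ^ 2 = x)
    (hinj : ∀ x y : F, x ^ 2 = y ^ 2 → x = y) (a u : F) (x : SL3 F)
    (hx : (x : Matrix (Fin 3) (Fin 3) F) = Ymat F a u) :
    ((phi w (1 + a) ρ x : SL3 F) : Matrix (Fin 3) (Fin 3) F) = Ymat F a (u + w) := by
  show (x : Matrix (Fin 3) (Fin 3) F) * _ = _
  rw [hx]
  norm_num [Ymat, eMat, Matrix.mul_fin_three, rho_zero ρ hρ hinj, rho_one ρ hρ hinj,
    Matrix.vecHead, Matrix.vecTail, Matrix.cons_val_two]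
  ring

lemma phi_Z (w : F) (ρ : F → F) (hρ : ∀ x, ρ x ^ 2 = x)
    (hinj : ∀ x y : F, x ^ 2 = y ^ 2 → x = y) (a b u : F)
    (hb1 : (1 + a) * ρ b = 1) (hb2 : (1 + a) * ρ ((b ^ 2 + b + 1) * (b + 1)) = a + b + 1)
    (x : SL3 F) (hx : (x : Matrix (Fin 3) (Fin 3) F) = Zmat F a b u) :
    ((phi w (1 + a) ρ x : SL3 F) : Matrix (Fin 3) (Fin 3) F) = Zmat F a b (u + w) := by
  show (x : Matrix (Fin 3) (Fin 3) F) * _ = _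
  rw [hx]
  norm_num [Zmat, eMat, Matrix.mul_fin_three, Matrix.vecHead, Matrix.vecTail, Matrix.cons_val_two]
  refine ⟨?_, ?_⟩
  · linear_combination w * hb1
  · linear_combination w * hb2


lemma eSL_inv (h2 : (2:F) = 0) (n₁ n₂ : F) : (eSL n₁ n₂ : SL3 F)⁻¹ = eSL n₁ n₂ := by
  refine inv_eq_of_mul_eq_one_right ?_
  rw [eSL_mul]
  have e1 : n₁ + n₁ = 0 := by linear_combination n₁ * h2
  have e2 : n₂ + n₂ = 0 := by linear_combination n₂ * h2
  rw [e1, e2, eSL_zero]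

lemma conj_eSL (h2 : (2:F) = 0) (ρ : F → F) (w l n₁ n₂ : F) (g : SL3 F)
    (p q r s x₁ x₂ : F)
    (hge : (g : Matrix (Fin 3) (Fin 3) F) = !![1, x₁, x₂; 0, p, q; 0, r, s])
    (hc1 : n₁ * (p + 1) + n₂ * r = w * l * ρ (p * r))
    (hc2 : n₁ * q + n₂ * (s + 1) = w * l * ρ (q * s)) :
    eSL n₁ n₂ * g * (eSL n₁ n₂)⁻¹ = phi w l ρ g := by
  rw [eSL_inv h2]
  apply Subtype.ext
  show eMat F n₁ n₂ * (g : Matrix (Fin 3) (Fin 3) F) * eMat F n₁ n₂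
    = (g : Matrix (Fin 3) (Fin 3) F) * _
  rw [hge]
  norm_num [eMat, Matrix.mul_fin_three, Matrix.vecHead, Matrix.vecTail, Matrix.cons_val_two]
  refine ⟨?_, ?_⟩
  · linear_combination hc1
  · linear_combination hc2

lemma exists_n (h2 : (2:F) = 0) (ρ : F → F) (hρ : ∀ x, ρ x ^ 2 = x)
    (hinj : ∀ x y : F, x ^ 2 = y ^ 2 → x = y) (w l p q r s : F)
    (hdet : p * s - q * r = 1) :
    ∃ n₁ n₂ : F, n₁ * (p + 1) + n₂ * r = w * l * ρ (p * r) ∧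
      n₁ * q + n₂ * (s + 1) = w * l * ρ (q * s) := by
  by_cases htr : p + s = 0
  · by_cases hq : q = 0
    · by_cases hr : r = 0
      · refine ⟨0, 0, ?_, ?_⟩ <;>
          simp [hq, hr, rho_zero ρ hρ hinj]
      · have hp : p = 1 := by
          apply hinj
          linear_combination p * htr - hdet - r * hq - h2
        have hs1 : s + 1 = 0 := by linear_combination htr - hp
        refine ⟨0, w * l * ρ (p * r) / r, ?_, ?_⟩
        · field_simp; ring
        · rw [hq, hs1]
          simp [rho_zero ρ hρ hinj]
      -- q ≠ 0 case below
    · have hker : w * l * ρ (q * s) * (p + 1) = w * l * ρ (p * r) * q := by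
        apply hinj
        linear_combination (w * l * (p + 1)) ^ 2 * hρ (q * s) - (w * l * q) ^ 2 * hρ (p * r)
          + (w * l) ^ 2 * (q * (2 * p + 1)) * htr + (w * l) ^ 2 * (p * q) * hdet
          - (w * l) ^ 2 * (q * p ^ 2) * h2
      refine ⟨w * l * ρ (q * s) / q, 0, ?_, ?_⟩
      · field_simp
        linear_combination hker
      · field_simp; ring
  · refine ⟨(w * l * ρ (p * r) * (s + 1) - w * l * ρ (q * s) * r) / (p + s),
      (w * l * ρ (q * s) * (p + 1) - w * l * ρ (p * r) * q) / (p + s), ?_, ?_⟩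
    · field_simp
      linear_combination (w * l * ρ (p * r)) * hdet + (w * l * ρ (p * r)) * h2
    · field_simp; rw [mul_comm s q]
      linear_combination (w * l * ρ (q * s)) * hdet + (w * l * ρ (q * s)) * h2

end T14

/-- For every `g ∈ G` and all `w, w' ∈ F`, the number of `x ∈ G` with
`x g x⁻¹ ∈ S_w` equals the number of `x ∈ G` with `x g x⁻¹ ∈ S_{w'}`; equivalently, `g`
fixes the same number of cosets in the coset action of `G` on the cosets of `S_w` as in
the coset action on the cosets of `S_{w'}`. -/
theorem twisted_stmt14 {F : Type*} [Field F] [Fintype F] {f : ℕ} (hf : 2 ≤ f)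
    (hF : Fintype.card F = 2 ^ f) (a : F) (ha : a ≠ 0)
    (hgen : orderOf a = 2 ^ f - 1) (b : F) (hb : b = (1 + a ^ 2)⁻¹)
    (w w' : F) (g : Matrix.SpecialLinearGroup (Fin 3) F) (hg : g ∈ Gsub F a b) :
    Nat.card {x : Matrix.SpecialLinearGroup (Fin 3) F |
        x ∈ Gsub F a b ∧ x * g * x⁻¹ ∈ Ssub F a b w}
      = Nat.card {x : Matrix.SpecialLinearGroup (Fin 3) F |
          x ∈ Gsub F a b ∧ x * g * x⁻¹ ∈ Ssub F a b w'} := by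
  classical
  -- characteristic 2
  have hp2 : ringChar F = 2 := by
    obtain ⟨n, hp, hcard⟩ := FiniteField.card F (ringChar F)
    rw [hF] at hcard
    have hdvd : ringChar F ∣ 2 ^ f := hcard ▸ dvd_pow_self _ n.pos.ne'
    exact (Nat.prime_dvd_prime_iff_eq hp Nat.prime_two).mp (hp.dvd_of_dvd_pow hdvd)
  have h2 : (2 : F) = 0 := by
    haveI : CharP F 2 := hp2 ▸ ringChar.charP F
    exact_mod_cast CharP.cast_eq_zero F 2
  -- square roots
  have hinj : ∀ x y : F, x ^ 2 = y ^ 2 → x = y := by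
    intro x y h
    have h0 : (x - y) ^ 2 = 0 := by linear_combination h + (y ^ 2 - x * y) * h2
    have := pow_eq_zero_iff (two_ne_zero) |>.mp h0
    exact sub_eq_zero.mp this
  obtain ⟨ρ, hρ⟩ : ∃ ρ : F → F, ∀ x, ρ x ^ 2 = x := by
    have hsurj : Function.Surjective (fun x : F => x ^ 2) :=
      Finite.injective_iff_surjective.mp (fun x y h => hinj x y h)
    exact ⟨fun x => Function.surjInv hsurj x, fun x => Function.surjInv_eq hsurj x⟩
  -- a ≠ 1
  have ha1 : (1 : F) + a ≠ 0 := by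
    intro h
    have haa : a = 1 := by linear_combination h - h2
    rw [haa, orderOf_one] at hgen
    have h4 : (2:ℕ) ^ 2 ≤ 2 ^ f := Nat.pow_le_pow_right (by norm_num) hf
    omega
  have h1a2 : ((1:F) + a) ^ 2 = 1 + a ^ 2 := by linear_combination a * h2
  have hbe : b * (1 + a) ^ 2 = 1 := by
    rw [hb, h1a2]
    exact inv_mul_cancel₀ (h1a2 ▸ pow_ne_zero 2 ha1)
  have hb1 : (1 + a) * ρ b = 1 := by
    apply hinj
    linear_combination (1 + a) ^ 2 * hρ b + hbe
  have hb2 : (1 + a) * ρ ((b ^ 2 + b + 1) * (b + 1)) = a + b + 1 := by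
    apply hinj
    linear_combination (1 + a) ^ 2 * hρ ((b ^ 2 + b + 1) * (b + 1))
      + (b ^ 2 + 2 * b + 2) * hbe + (1 - a * b) * h2
  -- it suffices to compare with w = 0
  suffices H : ∀ v : F,
      Nat.card {x : Matrix.SpecialLinearGroup (Fin 3) F |
        x ∈ Gsub F a b ∧ x * g * x⁻¹ ∈ Ssub F a b v}
      = Nat.card {x : Matrix.SpecialLinearGroup (Fin 3) F |
        x ∈ Gsub F a b ∧ x * g * x⁻¹ ∈ Ssub F a b 0} by
    rw [H w, H w']
  intro v
  -- all elements of G have first column (1,0,0)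
  have hTG : ∀ x ∈ (ESet F ∪ {g : T14.SL3 F | (g : Matrix (Fin 3) (Fin 3) F) = Xmat F a ∨
      (g : Matrix (Fin 3) (Fin 3) F) = Ymat F a 0 ∨
      (g : Matrix (Fin 3) (Fin 3) F) = Zmat F a b 0}), T14.Pcol x := by
    rintro x (⟨v₁, v₂, hx⟩ | (hx | hx | hx)) <;>
      refine ⟨?_, ?_, ?_⟩ <;> rw [hx] <;>
      norm_num [eMat, Xmat, Ymat, Zmat, Matrix.vecHead, Matrix.vecTail, Matrix.cons_val_two]
  have hPG : ∀ x ∈ Gsub F a b, T14.Pcol x := T14.Pcol_closure _ hTG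
  have hTS : ∀ u : F, ∀ x ∈ {g : T14.SL3 F | (g : Matrix (Fin 3) (Fin 3) F) = Xmat F a ∨
      (g : Matrix (Fin 3) (Fin 3) F) = Ymat F a u ∨
      (g : Matrix (Fin 3) (Fin 3) F) = Zmat F a b u}, T14.Pcol x := by
    rintro u x (hx | hx | hx) <;>
      refine ⟨?_, ?_, ?_⟩ <;> rw [hx] <;>
      norm_num [Xmat, Ymat, Zmat, Matrix.vecHead, Matrix.vecTail, Matrix.cons_val_two]
  -- the conjugating element
  obtain ⟨p, q, r, s, x₁, x₂, hge, hdet⟩ := T14.Pcol_struct g (hPG g hg)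
  obtain ⟨n₁, n₂, hc1, hc2⟩ := T14.exists_n h2 ρ hρ hinj v (1 + a) p q r s hdet
  have hconj : T14.eSL n₁ n₂ * g * (T14.eSL n₁ n₂)⁻¹ = T14.phi v (1 + a) ρ g :=
    T14.conj_eSL h2 ρ v (1 + a) n₁ n₂ g p q r s x₁ x₂ hge hc1 hc2
  -- phi maps S_0 to S_v and S_v to S_0
  have hvv : v + v = 0 := by linear_combination v * h2
  have hSmap1 : ∀ x ∈ Ssub F a b 0, T14.phi v (1 + a) ρ x ∈ Ssub F a b v := by
    refine T14.phi_closure_map h2 ρ hρ hinj v (1 + a) _ _ (hTS 0) ?_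
    rintro x (hx | hx | hx)
    · rw [T14.phi_X v (1 + a) ρ hρ hinj a x hx]
      exact Subgroup.subset_closure (Or.inl hx)
    · have hy := T14.phi_Y v ρ hρ hinj a 0 x hx
      rw [zero_add] at hy
      exact Subgroup.subset_closure (Or.inr (Or.inl hy))
    · have hz := T14.phi_Z v ρ hρ hinj a b 0 hb1 hb2 x hx
      rw [zero_add] at hz
      exact Subgroup.subset_closure (Or.inr (Or.inr hz))
  have hSmap2 : ∀ x ∈ Ssub F a b v, T14.phi v (1 + a) ρ x ∈ Ssub F a b 0 := by
    refine T14.phi_closure_map h2 ρ hρ hinj v (1 + a) _ _ (hTS v) ?_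
    rintro x (hx | hx | hx)
    · rw [T14.phi_X v (1 + a) ρ hρ hinj a x hx]
      exact Subgroup.subset_closure (Or.inl hx)
    · have hy := T14.phi_Y v ρ hρ hinj a v x hx
      rw [hvv] at hy
      exact Subgroup.subset_closure (Or.inr (Or.inl hy))
    · have hz := T14.phi_Z v ρ hρ hinj a b v hb1 hb2 x hx
      rw [hvv] at hz
      exact Subgroup.subset_closure (Or.inr (Or.inr hz))
  -- phi and eSL stay in G
  have hEG : ∀ u₁ u₂ : F, T14.eSL u₁ u₂ ∈ Gsub F a b := fun u₁ u₂ =>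
    Subgroup.subset_closure (Or.inl ⟨u₁, u₂, rfl⟩)
  have hphiG : ∀ x, x ∈ Gsub F a b → T14.phi v (1 + a) ρ x ∈ Gsub F a b :=
    fun x hx => mul_mem hx (hEG _ _)
  -- the twisting bijection
  set t : T14.SL3 F := T14.eSL n₁ n₂ with ht
  have htt : t * t = 1 := by
    rw [ht, T14.eSL_mul]
    have e1 : n₁ + n₁ = 0 := by linear_combination n₁ * h2
    have e2 : n₂ + n₂ = 0 := by linear_combination n₂ * h2
    rw [e1, e2, T14.eSL_zero]
  set σ : T14.SL3 F → T14.SL3 F := fun x => T14.phi v (1 + a) ρ x * t with hσ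
  have hσconj : ∀ x, x ∈ Gsub F a b →
      σ x * g * (σ x)⁻¹ = T14.phi v (1 + a) ρ (x * g * x⁻¹) := by
    intro x hx
    have hPx := hPG x hx
    have hPg := hPG g hg
    have hPxi := hPG _ (inv_mem hx)
    have hxg : T14.phi v (1+a) ρ (x * g * x⁻¹)
        = T14.phi v (1+a) ρ x * T14.phi v (1+a) ρ g * (T14.phi v (1+a) ρ x)⁻¹ := by
      rw [T14.phi_mul h2 ρ hρ hinj v (1+a) (x*g) x⁻¹ (T14.Pcol_mul _ _ hPx hPg) hPxi,
        T14.phi_mul h2 ρ hρ hinj v (1+a) x g hPx hPg,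
        T14.phi_inv h2 ρ hρ hinj v (1+a) x hPx]
    rw [hxg, ← hconj, hσ]
    simp only []
    group
  have hσσ : ∀ x, x ∈ Gsub F a b → σ (σ x) = x := by
    intro x hx
    have hPx := hPG x hx
    show T14.phi v (1+a) ρ (T14.phi v (1+a) ρ x * t) * t = x
    rw [T14.phi_mul h2 ρ hρ hinj v (1+a) _ t (T14.Pcol_phi _ _ _ _ hPx) (T14.Pcol_eSL _ _),
      T14.phi_phi h2 ρ v (1+a) x hPx,
      T14.phi_e v (1+a) ρ hρ hinj n₁ n₂ t rfl, mul_assoc, htt, mul_one]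
  have hσG : ∀ x, x ∈ Gsub F a b → σ x ∈ Gsub F a b :=
    fun x hx => mul_mem (hphiG x hx) (hEG _ _)
  refine Nat.card_congr ?_
  refine
    { toFun := fun x => ⟨σ x.1, hσG x.1 x.2.1, ?_⟩
      invFun := fun y => ⟨σ y.1, hσG y.1 y.2.1, ?_⟩
      left_inv := fun x => Subtype.ext (hσσ x.1 x.2.1)
      right_inv := fun y => Subtype.ext (hσσ y.1 y.2.1) }
  · rw [hσconj x.1 x.2.1]
    exact hSmap2 _ x.2.2
  · rw [hσconj y.1 y.2.1]
    exact hSmap1 _ y.2.2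
end
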